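/- arXiv:2005.03369 — 10 statements merged into one kernel-verified Lean document; each statement's English description precedes it below -/
import Mathlib

section
/- In a q-matroid (E,r), if F₁ and F₂ are flats, then F₁ ∩ F₂ is a flat. -/
/-- In a q-matroid (E,r), the intersection of two flats is a flat. -/
theorem stmt1 {K E : Type*} [Field K] [Fintype K] [AddCommGroup E] [Module K E]
    [FiniteDimensional K E]
    (r : Submodule K E → ℤ)
    (hR1 : ∀ A : Submodule K E, 0 ≤ r A ∧ r A ≤ Module.finrank K A)
    (hR2 : ∀ A B : Submodule K E, A ≤ B → r A ≤ r B)
    (hR3 : ∀ A B : Submodule K E, r (A ⊔ B) + r (A ⊓ B) ≤ r A + r B)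
    (F₁ F₂ : Submodule K E)
    (hF₁ : ∀ x : Submodule K E, Module.finrank K x = 1 → ¬ x ≤ F₁ → r F₁ < r (F₁ ⊔ x))
    (hF₂ : ∀ x : Submodule K E, Module.finrank K x = 1 → ¬ x ≤ F₂ → r F₂ < r (F₂ ⊔ x)) :
    ∀ x : Submodule K E, Module.finrank K x = 1 → ¬ x ≤ F₁ ⊓ F₂ →
      r (F₁ ⊓ F₂) < r ((F₁ ⊓ F₂) ⊔ x) := by
  intro x hx hxA
  set A := F₁ ⊓ F₂ with hA
  by_contra h
  push_neg at h
  have heq : r (A ⊔ x) = r A :=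
    le_antisymm h (hR2 A (A ⊔ x) le_sup_left)
  -- key: for any flat F containing A, we get r (F ⊔ x) ≤ r F
  have key : ∀ F : Submodule K E, A ≤ F → r (F ⊔ x) ≤ r F := by
    intro F hAF
    have h3 := hR3 F (A ⊔ x)
    have hsup : F ⊔ (A ⊔ x) = F ⊔ x := by
      rw [← sup_assoc, sup_eq_left.mpr hAF]
    have hinf : r A ≤ r (F ⊓ (A ⊔ x)) :=
      hR2 _ _ (le_inf hAF le_sup_left)
    rw [hsup, heq] at h3
    clear hxA
    linarith
  have hor : ¬ x ≤ F₁ ∨ ¬ x ≤ F₂ := by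
    by_contra hc
    rw [not_or, not_not, not_not] at hc
    exact hxA (le_inf hc.1 hc.2)
  rcases hor with h1 | h1
  · exact absurd (key F₁ inf_le_left) (not_le.mpr (hF₁ x hx h1))
  · exact absurd (key F₂ inf_le_right) (not_le.mpr (hF₂ x hx h1))
end

section
/- The set of flats of a q-matroid (E,r) satisfies: (F1) E is a flat; (F2) the intersection of two flats is a flat; (F3) for every flat F and every one-dimensional subspace x ⊄ F, there is a unique flat F' covering F (in the poset of flats ordered by inclusion) with x ⊆ F'. -/
/-- A flat of the q-matroid (E,r). -/
def IsQMFlat {K E : Type*} [Field K] [AddCommGroup E] [Module K E]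
    (r : Submodule K E → ℤ) (F : Submodule K E) : Prop :=
  ∀ x : Submodule K E, Module.finrank K x = 1 → ¬ x ≤ F → r F < r (F ⊔ x)

/-- If adding `x` to `A` does not increase rank, the same holds for any `B ≥ A`. -/
lemma rank_sup_le_up {K E : Type*} [Field K] [AddCommGroup E] [Module K E]
    (r : Submodule K E → ℤ)
    (hR2 : ∀ A B : Submodule K E, A ≤ B → r A ≤ r B)
    (hR3 : ∀ A B : Submodule K E, r (A ⊔ B) + r (A ⊓ B) ≤ r A + r B)
    {A B x : Submodule K E} (hAB : A ≤ B) (h : r (A ⊔ x) ≤ r A) :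
    r (B ⊔ x) ≤ r B := by
  have h1 := hR3 (A ⊔ x) B
  have h2 : (A ⊔ x) ⊔ B = B ⊔ x := by
    rw [sup_comm A x, sup_assoc, sup_eq_right.mpr hAB, sup_comm]
  rw [h2] at h1
  have h3 : r A ≤ r ((A ⊔ x) ⊓ B) := hR2 _ _ (le_inf le_sup_left hAB)
  linarith

/-- The intersection of two flats is a flat. -/
lemma flat_inf {K E : Type*} [Field K] [AddCommGroup E] [Module K E]
    (r : Submodule K E → ℤ)
    (hR2 : ∀ A B : Submodule K E, A ≤ B → r A ≤ r B)
    (hR3 : ∀ A B : Submodule K E, r (A ⊔ B) + r (A ⊓ B) ≤ r A + r B)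
    (F₁ F₂ : Submodule K E) (h1 : IsQMFlat r F₁) (h2 : IsQMFlat r F₂) :
    IsQMFlat r (F₁ ⊓ F₂) := by
  intro x hx hnx
  by_contra hcon
  push_neg at hcon
  have hcase : ¬ x ≤ F₁ ∨ ¬ x ≤ F₂ := by
    by_contra h
    push_neg at h
    exact hnx (le_inf h.1 h.2)
  rcases hcase with h | h
  · exact absurd (h1 x hx h)
      (not_lt.mpr (rank_sup_le_up r hR2 hR3 inf_le_left hcon))
  · exact absurd (h2 x hx h)
      (not_lt.mpr (rank_sup_le_up r hR2 hR3 inf_le_right hcon))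

/-- The flats of a q-matroid satisfy the flat axioms (F1)-(F3):
E is a flat, the intersection of two flats is a flat, and for every flat F and
one-dimensional x ⊄ F there is a unique flat F' covering F (in the poset of
flats) with x ⊆ F'. -/
theorem stmt4 {K E : Type*} [Field K] [Fintype K] [AddCommGroup E] [Module K E]
    [FiniteDimensional K E]
    (r : Submodule K E → ℤ)
    (hR1 : ∀ A : Submodule K E, 0 ≤ r A ∧ r A ≤ Module.finrank K A)
    (hR2 : ∀ A B : Submodule K E, A ≤ B → r A ≤ r B)
    (hR3 : ∀ A B : Submodule K E, r (A ⊔ B) + r (A ⊓ B) ≤ r A + r B) :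
    IsQMFlat r (⊤ : Submodule K E) ∧
    (∀ F₁ F₂ : Submodule K E, IsQMFlat r F₁ → IsQMFlat r F₂ → IsQMFlat r (F₁ ⊓ F₂)) ∧
    (∀ F x : Submodule K E, IsQMFlat r F → Module.finrank K x = 1 → ¬ x ≤ F →
      ∃! F' : Submodule K E, IsQMFlat r F' ∧ x ≤ F' ∧ F < F' ∧
        ∀ H : Submodule K E, IsQMFlat r H → F < H → ¬ H < F') := by
  have hdim_le : ∀ A y : Submodule K E, Module.finrank K y = 1 → r (A ⊔ y) ≤ r A + 1 := by
    intro A y hy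
    have h1 := hR3 A y
    have h2 := (hR1 y).2
    have h3 := (hR1 (A ⊓ y)).1
    rw [hy] at h2
    push_cast at h2
    linarith
  refine ⟨?_, flat_inf r hR2 hR3, ?_⟩
  · intro x hx hnx
    exact absurd le_top hnx
  · intro F x hF hx hnx
    have hFx : r (F ⊔ x) = r F + 1 := by
      have ha := hF x hx hnx
      have hb := hdim_le F x hx
      linarith only [ha, hb]
    -- take a maximal subspace containing F ⊔ x with the same rank
    have hWF : WellFoundedGT (Submodule K E) := inferInstance
    obtain ⟨F', hF'S, hmax⟩ := hWF.wf.has_min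
      {B : Submodule K E | F ⊔ x ≤ B ∧ r B = r (F ⊔ x)} ⟨F ⊔ x, le_refl _, rfl⟩
    obtain ⟨hle, hr⟩ := hF'S
    have hxF' : x ≤ F' := le_trans le_sup_right hle
    have hFF' : F < F' := lt_of_lt_of_le (left_lt_sup.mpr hnx) hle
    have hflat : IsQMFlat r F' := by
      intro y hy hny
      by_contra h
      push_neg at h
      have hmem : F ⊔ x ≤ F' ⊔ y ∧ r (F' ⊔ y) = r (F ⊔ x) := by
        refine ⟨le_trans hle le_sup_left, ?_⟩
        rw [le_antisymm h (hR2 _ _ le_sup_left), hr]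
      exact hmax (F' ⊔ y) hmem (left_lt_sup.mpr hny)
    -- no flat lies strictly between F and F'
    have key : ∀ H : Submodule K E, IsQMFlat r H → F < H → H ≤ F' → H = F' := by
      intro H hH hFH hHF'
      obtain ⟨v, hvH, hvF⟩ := SetLike.exists_of_lt hFH
      have hv0 : v ≠ 0 := fun h => hvF (h ▸ F.zero_mem)
      have hy1 : Module.finrank K (K ∙ v) = 1 := finrank_span_singleton hv0
      have hyH : (K ∙ v) ≤ H := (Submodule.span_singleton_le_iff_mem v H).mpr hvH
      have hyF : ¬ (K ∙ v) ≤ F := fun h => hvF (h (Submodule.mem_span_singleton_self v))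
      have h1 : r F < r (F ⊔ (K ∙ v)) := hF _ hy1 hyF
      have h2 : r (F ⊔ (K ∙ v)) ≤ r H := hR2 _ _ (sup_le hFH.le hyH)
      have h3 : r H ≤ r F' := hR2 _ _ hHF'
      have hrH : r H = r F' := by rw [hr, hFx]; omega
      by_contra hne
      obtain ⟨w, hwF', hwH⟩ := SetLike.exists_of_lt (lt_of_le_of_ne hHF' hne)
      have hw0 : w ≠ 0 := fun h => hwH (h ▸ H.zero_mem)
      have hz1 : Module.finrank K (K ∙ w) = 1 := finrank_span_singleton hw0
      have hzH : ¬ (K ∙ w) ≤ H := fun h => hwH (h (Submodule.mem_span_singleton_self w))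
      have h4 : r H < r (H ⊔ (K ∙ w)) := hH _ hz1 hzH
      have h5 : r (H ⊔ (K ∙ w)) ≤ r F' :=
        hR2 _ _ (sup_le hHF' ((Submodule.span_singleton_le_iff_mem w F').mpr hwF'))
      omega
    refine ⟨F', ⟨hflat, hxF', hFF', ?_⟩, ?_⟩
    · intro H hH hFH hlt
      exact absurd (key H hH hFH hlt.le) (ne_of_lt hlt)
    · rintro F'' ⟨hF''flat, hxF'', hFF'', hcov''⟩
      have hHflat : IsQMFlat r (F'' ⊓ F') := flat_inf r hR2 hR3 _ _ hF''flat hflat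
      have hFxH : F ⊔ x ≤ F'' ⊓ F' := le_inf (sup_le hFF''.le hxF'') hle
      have hFltH : F < F'' ⊓ F' := lt_of_lt_of_le (left_lt_sup.mpr hnx) hFxH
      have hHeq : F'' ⊓ F' = F'' := by
        by_contra hne
        exact hcov'' (F'' ⊓ F') hHflat hFltH (lt_of_le_of_ne inf_le_left hne)
      have hF''le : F'' ≤ F' := hHeq ▸ inf_le_right
      exact key F'' hF''flat hFF'' hF''le
end

section
/- Let 𝓕 be a collection of subspaces of E satisfying (F1)-(F3), and for a subspace A let r_𝓕(A) denote the length of a maximal chain in (𝓕,⊆) from C_𝓕({0}) to C_𝓕(A). Then (E, r_𝓕) is a q-matroid, i.e. r_𝓕 satisfies (R1) 0 ≤ r_𝓕(A) ≤ dim A, (R2) monotonicity, and (R3) submodularity. -/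
/-- F' covers F in the poset (𝓕, ⊆). -/
def FlatCovers {K E : Type*} [Field K] [AddCommGroup E] [Module K E]
    (𝓕 : Set (Submodule K E)) (F F' : Submodule K E) : Prop :=
  F < F' ∧ ∀ H ∈ 𝓕, F < H → ¬ H < F'

/-- The flat axioms (F1)-(F3) for a family 𝓕 of subspaces of E. -/
def FlatAxioms {K E : Type*} [Field K] [AddCommGroup E] [Module K E]
    (𝓕 : Set (Submodule K E)) : Prop :=
  (⊤ : Submodule K E) ∈ 𝓕 ∧
  (∀ F₁ ∈ 𝓕, ∀ F₂ ∈ 𝓕, F₁ ⊓ F₂ ∈ 𝓕) ∧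
  (∀ F ∈ 𝓕, ∀ x : Submodule K E, Module.finrank K x = 1 → ¬ x ≤ F →
    ∃! F' : Submodule K E, F' ∈ 𝓕 ∧ x ≤ F' ∧ FlatCovers 𝓕 F F')

/-- `c` is a maximal chain of length `m` in (𝓕,⊆) from `a` to `b`:
its members lie in 𝓕, it is strictly increasing, starts at `a`, ends at `b`,
and each element covers the previous one in (𝓕,⊆). -/
def IsMaxChainTo {K E : Type*} [Field K] [AddCommGroup E] [Module K E]
    (𝓕 : Set (Submodule K E)) (a b : Submodule K E) (m : ℕ)
    (c : Fin (m + 1) → Submodule K E) : Prop :=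
  (∀ i, c i ∈ 𝓕) ∧ StrictMono c ∧ c 0 = a ∧ c (Fin.last m) = b ∧
  ∀ i : Fin m, FlatCovers 𝓕 (c i.castSucc) (c i.succ)

namespace Stmt7Aux

variable {K E : Type*} [Field K] [AddCommGroup E] [Module K E]

/-- Chains of covers in 𝓕. -/
inductive FChain (𝓕 : Set (Submodule K E)) : Submodule K E → Submodule K E → ℕ → Prop
  | refl (X : Submodule K E) (hX : X ∈ 𝓕) : FChain 𝓕 X X 0
  | step {X Y Z : Submodule K E} {m : ℕ} (hX : X ∈ 𝓕) (hc : FlatCovers 𝓕 X Y)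
      (hY : Y ∈ 𝓕) (t : FChain 𝓕 Y Z m) : FChain 𝓕 X Z (m + 1)

variable {𝓕 : Set (Submodule K E)} {C : Submodule K E → Submodule K E}

lemma FChain.mem_left {a b : Submodule K E} {m : ℕ} (h : FChain 𝓕 a b m) : a ∈ 𝓕 := by
  cases h with
  | refl X hX => exact hX
  | step hX hc hY t => exact hX

lemma FChain.mem_right {a b : Submodule K E} {m : ℕ} (h : FChain 𝓕 a b m) : b ∈ 𝓕 := by
  induction h with
  | refl X hX => exact hX
  | step hX hc hY t ih => exact ih

lemma FChain.le {a b : Submodule K E} {m : ℕ} (h : FChain 𝓕 a b m) : a ≤ b := by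
  induction h with
  | refl X hX => exact le_rfl
  | step hX hc hY t ih => exact hc.1.le.trans ih

lemma FChain.concat {a b c : Submodule K E} {m n : ℕ}
    (h1 : FChain 𝓕 a b m) (h2 : FChain 𝓕 b c n) : FChain 𝓕 a c (m + n) := by
  induction h1 with
  | refl X hX => simpa using h2
  | step hX hc hY t ih =>
      have h := FChain.step hX hc hY (ih h2)
      rwa [show ∀ p : ℕ, p + n + 1 = p + 1 + n from fun p => by omega] at h

lemma FChain.snoc {a b b' : Submodule K E} {m : ℕ}
    (h1 : FChain 𝓕 a b m) (hc : FlatCovers 𝓕 b b') (hb' : b' ∈ 𝓕) :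
    FChain 𝓕 a b' (m + 1) :=
  h1.concat (FChain.step h1.mem_right hc hb' (FChain.refl b' hb'))

/-- Convert the `Fin`-indexed maximal chain to an `FChain`. -/
lemma toFChain : ∀ {m : ℕ} {a b : Submodule K E} {c : Fin (m + 1) → Submodule K E},
    IsMaxChainTo 𝓕 a b m c → FChain 𝓕 a b m := by
  intro m
  induction m with
  | zero =>
      intro a b c ⟨hmem, _, h0, hl, _⟩
      have hab : a = b := by rw [← h0, ← hl]; rfl
      exact hab ▸ (h0 ▸ FChain.refl (c 0) (hmem 0))
  | succ m ih =>
      intro a b c ⟨hmem, hsm, h0, hl, hcov⟩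
      have tail : IsMaxChainTo 𝓕 (c 1) b m (c ∘ Fin.succ) := by
        refine ⟨fun i => hmem _, hsm.comp Fin.strictMono_succ, rfl, ?_, fun i => ?_⟩
        · show c (Fin.last m).succ = b
          rw [Fin.succ_last]; exact hl
        · show FlatCovers 𝓕 (c i.castSucc.succ) (c i.succ.succ)
          rw [Fin.succ_castSucc]
          exact hcov i.succ
      have hcov0 : FlatCovers 𝓕 (c 0) (c 1) := hcov 0
      exact h0 ▸ FChain.step (h0 ▸ hmem 0 : c 0 ∈ 𝓕) hcov0 (hmem 1) (ih tail)

section withC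

variable (hC : ∀ A : Submodule K E, C A ∈ 𝓕 ∧ A ≤ C A ∧ ∀ G ∈ 𝓕, A ≤ G → C A ≤ G)

include hC

lemma C_le_of_le {A G : Submodule K E} (hG : G ∈ 𝓕) (h : A ≤ G) : C A ≤ G :=
  (hC A).2.2 G hG h

lemma C_flat {F : Submodule K E} (hF : F ∈ 𝓕) : C F = F :=
  le_antisymm (C_le_of_le hC hF le_rfl) (hC F).2.1

lemma C_mono {A B : Submodule K E} (h : A ≤ B) : C A ≤ C B :=
  C_le_of_le hC (hC B).1 (h.trans (hC B).2.1)

variable (h𝓕 : FlatAxioms 𝓕)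
include h𝓕

/-- Key cover lemma: for a flat `F` and `v ∉ F`, `C (F ⊔ K∙v)` covers `F`. -/
lemma cover_span {F : Submodule K E} (hF : F ∈ 𝓕) {v : E} (hv : v ∉ F) :
    FlatCovers 𝓕 F (C (F ⊔ K ∙ v)) := by
  have hv0 : v ≠ 0 := fun h => hv (h ▸ F.zero_mem)
  obtain ⟨F', ⟨hF'𝓕, hxF', hcov⟩, -⟩ :=
    h𝓕.2.2 F hF (K ∙ v) (finrank_span_singleton hv0)
      (fun h => hv ((Submodule.span_singleton_le_iff_mem v F).mp h))
  have hJle : C (F ⊔ K ∙ v) ≤ F' :=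
    C_le_of_le hC hF'𝓕 (sup_le hcov.1.le hxF')
  have hFJ : F < C (F ⊔ K ∙ v) := by
    refine lt_of_le_of_ne (le_sup_left.trans (hC _).2.1) (fun h => hv ?_)
    have hvmem : v ∈ C (F ⊔ K ∙ v) :=
      (le_sup_right.trans (hC _).2.1) (Submodule.mem_span_singleton_self v)
    exact h ▸ hvmem
  have hJF' : C (F ⊔ K ∙ v) = F' := by
    rcases lt_or_eq_of_le hJle with h | h
    · exact absurd h (hcov.2 _ (hC _).1 hFJ)
    · exact h
  rw [hJF']; exact hcov

/-- A cover containing `v ∉ F` equals `C (F ⊔ K∙v)`. -/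
lemma cover_eq {F G : Submodule K E} (hF : F ∈ 𝓕) (hG : G ∈ 𝓕)
    (hcov : FlatCovers 𝓕 F G) {v : E} (hvG : v ∈ G) (hvF : v ∉ F) :
    G = C (F ⊔ K ∙ v) := by
  have h1 : C (F ⊔ K ∙ v) ≤ G :=
    C_le_of_le hC hG (sup_le hcov.1.le ((Submodule.span_singleton_le_iff_mem v G).mpr hvG))
  have h2 : F < C (F ⊔ K ∙ v) := (cover_span hC h𝓕 hF hvF).1
  rcases lt_or_eq_of_le h1 with h | h
  · exact absurd h (hcov.2 _ (hC _).1 h2)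
  · exact h.symm

/-- Diamond / semimodularity: `C (F₁ ⊔ G₁)` covers `F₁` when `F₁ ≠ G₁` both cover `a`. -/
lemma diamond {a F₁ G₁ : Submodule K E} (ha : a ∈ 𝓕) (hF₁ : F₁ ∈ 𝓕) (hG₁ : G₁ ∈ 𝓕)
    (h1 : FlatCovers 𝓕 a F₁) (h2 : FlatCovers 𝓕 a G₁) (hne : F₁ ≠ G₁) :
    FlatCovers 𝓕 F₁ (C (F₁ ⊔ G₁)) := by
  have hnle : ¬ G₁ ≤ F₁ := by
    intro hle
    rcases lt_or_eq_of_le hle with h | h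
    · exact h1.2 G₁ hG₁ h2.1 h
    · exact hne h.symm
  obtain ⟨v, hvG, hvF⟩ := SetLike.not_le_iff_exists.mp hnle
  have hva : v ∉ a := fun h => hvF (h1.1.le h)
  have hGeq : G₁ = C (a ⊔ K ∙ v) := cover_eq hC h𝓕 ha hG₁ h2 hvG hva
  have key : C (F₁ ⊔ G₁) = C (F₁ ⊔ K ∙ v) := by
    apply le_antisymm
    · apply C_le_of_le hC (hC _).1
      apply sup_le (le_sup_left.trans (hC _).2.1)
      rw [hGeq]
      exact C_le_of_le hC (hC _).1
        (sup_le (h1.1.le.trans (le_sup_left.trans (hC _).2.1))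
          (le_sup_right.trans (hC _).2.1))
    · exact C_mono hC (sup_le_sup_left ((Submodule.span_singleton_le_iff_mem v G₁).mpr hvG) _)
  rw [key]
  exact cover_span hC h𝓕 hF₁ hvF

/-- Existence of maximal chains between nested flats. -/
lemma exists_chain [FiniteDimensional K E] {F G : Submodule K E}
    (hF : F ∈ 𝓕) (hG : G ∈ 𝓕) (hle : F ≤ G) : ∃ k, FChain 𝓕 F G k := by
  suffices h : ∀ d : ℕ, ∀ F : Submodule K E, F ∈ 𝓕 → F ≤ G →
      Module.finrank K G - Module.finrank K F ≤ d → ∃ k, FChain 𝓕 F G k from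
    h _ F hF hle le_rfl
  intro d
  induction d with
  | zero =>
      intro F hF hle hd
      have : F = G := Submodule.eq_of_le_of_finrank_le hle (by omega)
      exact ⟨0, this ▸ FChain.refl F hF⟩
  | succ d ih =>
      intro F hF hle hd
      rcases eq_or_lt_of_le hle with h | h
      · exact ⟨0, h ▸ FChain.refl F hF⟩
      · obtain ⟨v, hvG, hvF⟩ := SetLike.not_le_iff_exists.mp (not_le_of_gt h)
        have hcov := cover_span hC h𝓕 hF hvF
        set F' := C (F ⊔ K ∙ v) with hF'def
        have hF'𝓕 : F' ∈ 𝓕 := (hC _).1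
        have hF'G : F' ≤ G :=
          C_le_of_le hC hG (sup_le hle ((Submodule.span_singleton_le_iff_mem v G).mpr hvG))
        have hrk : Module.finrank K F < Module.finrank K F' :=
          Submodule.finrank_lt_finrank_of_lt hcov.1
        have hrk2 : Module.finrank K F' ≤ Module.finrank K G := Submodule.finrank_mono hF'G
        obtain ⟨k, hk⟩ := ih F' hF'𝓕 hF'G (by omega)
        exact ⟨k + 1, FChain.step hF hcov hF'𝓕 hk⟩


/-- Jordan–Dedekind: any two maximal chains between the same flats have equal length. -/
lemma jd [FiniteDimensional K E] :
    ∀ m : ℕ, ∀ {n : ℕ} {a b : Submodule K E},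
      FChain 𝓕 a b m → FChain 𝓕 a b n → m = n := by
  intro m
  induction m using Nat.strong_induction_on with
  | _ m ihm =>
    intro n a b h1 h2
    cases h1 with
    | refl X hX =>
        cases h2 with
        | refl Y hY => rfl
        | step hX' hc hY t =>
            exact absurd (lt_of_lt_of_le hc.1 t.le) (lt_irrefl _)
    | step hX hc1 hF₁ t1 =>
        rename_i F₁ m₁
        cases h2 with
        | refl Y hY => exact absurd (lt_of_lt_of_le hc1.1 t1.le) (lt_irrefl _)
        | step hX' hc2 hG₁ t2 =>
            rename_i G₁ n₁
            by_cases hne : F₁ = G₁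
            · subst hne
              rw [ihm m₁ (by omega) t1 t2]
            · have hd1 := diamond hC h𝓕 hX hF₁ hG₁ hc1 hc2 hne
              have hd2 : FlatCovers 𝓕 G₁ (C (F₁ ⊔ G₁)) := by
                rw [sup_comm]
                exact diamond hC h𝓕 hX hG₁ hF₁ hc2 hc1 (Ne.symm hne)
              have hJ𝓕 : C (F₁ ⊔ G₁) ∈ 𝓕 := (hC _).1
              have hJb : C (F₁ ⊔ G₁) ≤ b :=
                C_le_of_le hC t1.mem_right (sup_le t1.le t2.le)
              obtain ⟨k, hk⟩ := exists_chain hC h𝓕 hJ𝓕 t1.mem_right hJb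
              have c1 : FChain 𝓕 F₁ b (k + 1) := by
                have := FChain.step hF₁ hd1 hJ𝓕 hk
                rwa [show k + 1 = 1 + k by omega] at this ⊢
              have c2 : FChain 𝓕 G₁ b (k + 1) := FChain.step hG₁ hd2 hJ𝓕 hk
              have e1 : m₁ = k + 1 := ihm m₁ (by omega) t1 c1
              have e2 : k + 1 = n₁ := ihm (k + 1) (by omega) c2 t2
              omega

/-- Submodularity workhorse. -/
lemma submod_aux [FiniteDimensional K E] :
    ∀ {k : ℕ} {D D' : Submodule K E}, FChain 𝓕 D D' k →
      ∀ {F : Submodule K E} {n : ℕ}, F ∈ 𝓕 → D ≤ F → FChain 𝓕 (C ⊥) F n →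
        ∃ m ≤ n + k, FChain 𝓕 (C ⊥) (C (F ⊔ D')) m := by
  intro k D D' hch
  induction hch with
  | refl X hX =>
      intro F n hF hDF hn
      have heq : C (F ⊔ X) = F := by rw [sup_of_le_left hDF]; exact C_flat hC hF
      exact ⟨n, by omega, by rw [heq]; exact hn⟩
  | step hX hc hY t ih =>
      rename_i X Y Z k'
      intro F n hF hDF hn
      by_cases hYF : Y ≤ F
      · obtain ⟨m, hm, hchain⟩ := ih hF hYF hn
        exact ⟨m, by omega, hchain⟩
      · obtain ⟨v, hvY, hvF⟩ := SetLike.not_le_iff_exists.mp hYF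
        have hvX : v ∉ X := fun h => hvF (hDF h)
        have hYeq : Y = C (X ⊔ K ∙ v) := cover_eq hC h𝓕 hX (FChain.mem_left t) hc hvY hvX
        have hcovF : FlatCovers 𝓕 F (C (F ⊔ K ∙ v)) := cover_span hC h𝓕 hF hvF
        set F' := C (F ⊔ K ∙ v) with hF'def
        have hF'𝓕 : F' ∈ 𝓕 := (hC _).1
        have hYF' : Y ≤ F' := by
          rw [hYeq]
          exact C_le_of_le hC hF'𝓕
            (sup_le (hDF.trans (le_sup_left.trans (hC _).2.1)) (le_sup_right.trans (hC _).2.1))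
        have hn' : FChain 𝓕 (C ⊥) F' (n + 1) := hn.snoc hcovF hF'𝓕
        obtain ⟨m, hm, hchain⟩ := ih hF'𝓕 hYF' hn'
        have hvZ : v ∈ Z := t.le hvY
        have heq : C (F' ⊔ Z) = C (F ⊔ Z) := by
          apply le_antisymm
          · apply C_le_of_le hC (hC _).1
            refine sup_le ?_ (le_sup_right.trans (hC _).2.1)
            exact C_le_of_le hC (hC _).1
              (sup_le (le_sup_left.trans (hC _).2.1)
                (((Submodule.span_singleton_le_iff_mem v Z).mpr hvZ).trans
                  (le_sup_right.trans (hC _).2.1)))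
          · exact C_mono hC (sup_le_sup_right (le_sup_left.trans (hC _).2.1) Z)
        exact ⟨m, by omega, heq ▸ hchain⟩

/-- Build a chain from `F` to `C (F ⊔ span s)` of length at most `s.card`. -/
lemma chain_span [DecidableEq E] (s : Finset E) :
    ∀ F : Submodule K E, F ∈ 𝓕 →
      ∃ m ≤ s.card, FChain 𝓕 F (C (F ⊔ Submodule.span K (s : Set E))) m := by
  induction s using Finset.induction_on with
  | empty =>
      intro F hF
      refine ⟨0, le_rfl, ?_⟩
      have heq : C (F ⊔ Submodule.span K (∅ : Set E)) = F := by
        rw [Submodule.span_empty, sup_bot_eq]; exact C_flat hC hF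
      rw [Finset.coe_empty, heq]
      exact FChain.refl F hF
  | @insert a s ha ih =>
      intro F hF
      rw [Finset.coe_insert, Submodule.span_insert]
      by_cases haF : a ∈ F
      · obtain ⟨m, hm, hchain⟩ := ih F hF
        have heq : F ⊔ ((K ∙ a) ⊔ Submodule.span K (s : Set E)) =
            F ⊔ Submodule.span K (s : Set E) := by
          rw [← sup_assoc, sup_of_le_left ((Submodule.span_singleton_le_iff_mem a F).mpr haF)]
        refine ⟨m, le_trans hm (by simp [Finset.card_insert_of_notMem ha]), ?_⟩
        rw [heq]; exact hchain
      · have hcov : FlatCovers 𝓕 F (C (F ⊔ K ∙ a)) := cover_span hC h𝓕 hF haF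
        set F' := C (F ⊔ K ∙ a) with hF'def
        have hF'𝓕 : F' ∈ 𝓕 := (hC _).1
        obtain ⟨m, hm, hchain⟩ := ih F' hF'𝓕
        have heq : C (F' ⊔ Submodule.span K (s : Set E)) =
            C (F ⊔ ((K ∙ a) ⊔ Submodule.span K (s : Set E))) := by
          apply le_antisymm
          · apply C_le_of_le hC (hC _).1
            refine sup_le ?_ ((le_sup_right.trans le_sup_right).trans (hC _).2.1)
            exact C_le_of_le hC (hC _).1
              (sup_le (le_sup_left.trans (hC _).2.1)
                ((le_sup_left.trans le_sup_right).trans (hC _).2.1))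
          · apply C_mono hC
            refine sup_le (le_sup_left.trans ((hC _).2.1.trans le_sup_left)) (sup_le ?_ le_sup_right)
            exact (le_sup_right.trans (hC _).2.1 : (K ∙ a) ≤ F').trans le_sup_left
        refine ⟨m + 1, ?_, ?_⟩
        · rw [Finset.card_insert_of_notMem ha]; omega
        · rw [← heq]
          exact FChain.step hF hcov hF'𝓕 hchain

end withC

end Stmt7Aux

open Stmt7Aux in
/-- If 𝓕 satisfies (F1)-(F3), C is the minimal-flat operator and
r_𝓕(A) is the length of a maximal chain in (𝓕,⊆) from C({0}) to C(A), then
(E, r_𝓕) is a q-matroid, i.e. r_𝓕 satisfies (R1)-(R3). -/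
theorem stmt7 {K E : Type*} [Field K] [Fintype K] [AddCommGroup E] [Module K E]
    [FiniteDimensional K E]
    (𝓕 : Set (Submodule K E)) (h𝓕 : FlatAxioms 𝓕)
    (C : Submodule K E → Submodule K E)
    (hC : ∀ A : Submodule K E, C A ∈ 𝓕 ∧ A ≤ C A ∧ ∀ G ∈ 𝓕, A ≤ G → C A ≤ G)
    (r : Submodule K E → ℕ)
    (hr : ∀ A : Submodule K E,
      ∃ c : Fin (r A + 1) → Submodule K E, IsMaxChainTo 𝓕 (C ⊥) (C A) (r A) c) :
    (∀ A : Submodule K E, r A ≤ Module.finrank K A) ∧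
    (∀ A B : Submodule K E, A ≤ B → r A ≤ r B) ∧
    (∀ A B : Submodule K E, r (A ⊔ B) + r (A ⊓ B) ≤ r A + r B) := by
  classical
  have hrchain : ∀ A : Submodule K E, FChain 𝓕 (C ⊥) (C A) (r A) := fun A =>
    toFChain (Exists.choose_spec (hr A))
  have hbot : C ⊥ ∈ 𝓕 := (hC ⊥).1
  refine ⟨?_, ?_, ?_⟩
  · -- (R1)
    intro A
    set b := Module.finBasis K A with hb
    set s : Finset E := Finset.image (fun i => ((b i : A) : E)) Finset.univ with hsdef
    have hs : Submodule.span K (s : Set E) = A := by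
      have h1 : (s : Set E) = A.subtype '' Set.range b := by
        rw [hsdef, Finset.coe_image, Finset.coe_univ, Set.image_univ, ← Set.range_comp]
        rfl
      rw [h1, ← Submodule.map_span, b.span_eq, Submodule.map_subtype_top]
    have hcard : s.card ≤ Module.finrank K A := by
      refine Finset.card_image_le.trans ?_
      simp
    obtain ⟨m, hm, hchain⟩ := chain_span hC h𝓕 s (C ⊥) hbot
    rw [hs] at hchain
    have heq : C (C ⊥ ⊔ A) = C A :=
      le_antisymm (C_le_of_le hC (hC A).1 (sup_le (C_le_of_le hC (hC A).1 bot_le) (hC A).2.1))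
        (C_mono hC le_sup_right)
    rw [heq] at hchain
    have := jd hC h𝓕 (r A) (hrchain A) hchain
    omega
  · -- (R2)
    intro A B hAB
    obtain ⟨k, hk⟩ := exists_chain hC h𝓕 (hC A).1 (hC B).1 (C_mono hC hAB)
    have := jd hC h𝓕 (r B) (hrchain B) ((hrchain A).concat hk)
    omega
  · -- (R3)
    intro A B
    set F := C A with hF
    set G := C B with hG
    have hD𝓕 : F ⊓ G ∈ 𝓕 := h𝓕.2.1 F (hC A).1 G (hC B).1
    obtain ⟨p, hp⟩ := exists_chain hC h𝓕 hbot hD𝓕 (C_le_of_le hC hD𝓕 bot_le)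
    obtain ⟨k, hk⟩ := exists_chain hC h𝓕 hD𝓕 (hC B).1 inf_le_right
    have hrB : r B = p + k := jd hC h𝓕 (r B) (hrchain B) (hp.concat hk)
    obtain ⟨m, hm, hchain⟩ := submod_aux hC h𝓕 hk (hC A).1 inf_le_left (hrchain A)
    have hCsup : C (F ⊔ G) = C (A ⊔ B) := by
      apply le_antisymm
      · exact C_le_of_le hC (hC (A ⊔ B)).1
          (sup_le (C_mono hC le_sup_left) (C_mono hC le_sup_right))
      · exact C_le_of_le hC (hC (F ⊔ G)).1
          (sup_le ((hC A).2.1.trans (le_sup_left.trans (hC _).2.1))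
            ((hC B).2.1.trans (le_sup_right.trans (hC _).2.1)))
    rw [hCsup] at hchain
    have h1 : r (A ⊔ B) = m := jd hC h𝓕 (r (A ⊔ B)) (hrchain (A ⊔ B)) hchain
    have hCinf : C (A ⊓ B) ≤ F ⊓ G :=
      C_le_of_le hC hD𝓕 (le_inf (inf_le_left.trans (hC A).2.1) (inf_le_right.trans (hC B).2.1))
    obtain ⟨k2, hk2⟩ := exists_chain hC h𝓕 (hC (A ⊓ B)).1 hD𝓕 hCinf
    have h2 : p = r (A ⊓ B) + k2 := jd hC h𝓕 p hp ((hrchain (A ⊓ B)).concat hk2)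
    omega
end

section
/- Let 𝓕 satisfy the flat axioms (F1)-(F3) and let r = r_𝓕 be the induced rank function. Then the set of flats of the q-matroid (E,r) (subspaces F with r(F+x) > r(F) for all one-dimensional x ⊄ F) is exactly 𝓕. Conversely, if (E,r) is a q-matroid with flats 𝓕_r, then r = r_{𝓕_r}. -/
section Aux

variable {K E : Type*} [Field K] [AddCommGroup E] [Module K E]
variable {𝓕 : Set (Submodule K E)}

/-- Pick a one-dimensional subspace inside `b` not inside `a`. -/
theorem stmt8_exists_line [FiniteDimensional K E] {a b : Submodule K E} (h : a < b) :
    ∃ x : Submodule K E, Module.finrank K x = 1 ∧ x ≤ b ∧ ¬ x ≤ a := by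
  obtain ⟨v, hvb, hva⟩ := SetLike.exists_of_lt h
  have hv0 : v ≠ 0 := fun hv => hva (hv ▸ a.zero_mem)
  exact ⟨K ∙ v, finrank_span_singleton hv0,
    (Submodule.span_singleton_le_iff_mem _ _).2 hvb,
    fun hle => hva (hle (Submodule.mem_span_singleton_self v))⟩

/-- The closure of F ⊔ x covers F, for F a flat and x a line not in F. -/
theorem stmt8_cover_closure (hF : FlatAxioms 𝓕) {Cl : Submodule K E → Submodule K E}
    (hC : ∀ A : Submodule K E, Cl A ∈ 𝓕 ∧ A ≤ Cl A ∧ ∀ G ∈ 𝓕, A ≤ G → Cl A ≤ G)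
    {F x : Submodule K E} (hFmem : F ∈ 𝓕) (hx : Module.finrank K x = 1) (hxF : ¬ x ≤ F) :
    FlatCovers 𝓕 F (Cl (F ⊔ x)) := by
  obtain ⟨F', ⟨hF'mem, hxF', hcov⟩, -⟩ := hF.2.2 F hFmem x hx hxF
  have hxC : x ≤ Cl (F ⊔ x) := le_sup_right.trans (hC _).2.1
  have h1 : Cl (F ⊔ x) ≤ F' := (hC _).2.2 F' hF'mem (sup_le hcov.1.le hxF')
  have h2 : F < Cl (F ⊔ x) :=
    lt_of_le_of_ne (le_sup_left.trans (hC _).2.1) (fun h => hxF (by rw [h]; exact hxC))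
  have heq : Cl (F ⊔ x) = F' := by
    by_contra hne
    exact hcov.2 _ (hC _).1 h2 (lt_of_le_of_ne h1 hne)
  rw [heq]; exact hcov

/-- Diamond property: distinct covers of a common flat are both covered by the
closure of their join. -/
theorem stmt8_diamond [FiniteDimensional K E] (hF : FlatAxioms 𝓕)
    {Cl : Submodule K E → Submodule K E}
    (hC : ∀ A : Submodule K E, Cl A ∈ 𝓕 ∧ A ≤ Cl A ∧ ∀ G ∈ 𝓕, A ≤ G → Cl A ≤ G)
    {a F₁ F₂ : Submodule K E} (ha : a ∈ 𝓕) (h1m : F₁ ∈ 𝓕) (h2m : F₂ ∈ 𝓕)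
    (hc1 : FlatCovers 𝓕 a F₁) (hc2 : FlatCovers 𝓕 a F₂) (hne : F₁ ≠ F₂) :
    FlatCovers 𝓕 F₁ (Cl (F₁ ⊔ F₂)) := by
  obtain ⟨x, hx1, hxF₂, hxa⟩ := stmt8_exists_line hc2.1
  have cov := stmt8_cover_closure hF hC ha hx1 hxa
  have hax : Cl (a ⊔ x) = F₂ := by
    have hle : Cl (a ⊔ x) ≤ F₂ := (hC _).2.2 _ h2m (sup_le hc2.1.le hxF₂)
    by_contra hne'
    exact hc2.2 _ (hC _).1 cov.1 (lt_of_le_of_ne hle hne')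
  have hxF₁ : ¬ x ≤ F₁ := by
    intro hle
    have h21 : F₂ ≤ F₁ := by
      rw [← hax]; exact (hC _).2.2 _ h1m (sup_le hc1.1.le hle)
    rcases lt_or_eq_of_le h21 with h | h
    · exact hc1.2 _ h2m hc2.1 h
    · exact hne h.symm
  have key : Cl (F₁ ⊔ x) = Cl (F₁ ⊔ F₂) := by
    apply le_antisymm
    · exact (hC _).2.2 _ (hC _).1
        (sup_le (le_sup_left.trans (hC _).2.1) (hxF₂.trans (le_sup_right.trans (hC _).2.1)))
    · refine (hC _).2.2 _ (hC _).1 (sup_le (le_sup_left.trans (hC _).2.1) ?_)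
      rw [← hax]
      exact (hC _).2.2 _ (hC _).1 ((sup_le_sup_right hc1.1.le x).trans (hC _).2.1)
  rw [← key]
  exact stmt8_cover_closure hF hC h1m hx1 hxF₁

/-- The one-element chain. -/
theorem stmt8_chain_refl {b : Submodule K E} (hb : b ∈ 𝓕) :
    IsMaxChainTo 𝓕 b b 0 (fun _ => b) := by
  refine ⟨fun _ => hb, fun i j h => ?_, rfl, rfl, fun i => i.elim0⟩
  have hij : i = j := by omega
  rw [hij] at h
  exact absurd h (lt_irrefl _)

/-- Prepending a flat to a maximal chain. -/
theorem stmt8_chain_cons {a a' b : Submodule K E} {t : ℕ} {d : Fin (t + 1) → Submodule K E}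
    (hd : IsMaxChainTo 𝓕 a' b t d) (ha : a ∈ 𝓕) (hcov : FlatCovers 𝓕 a a') :
    IsMaxChainTo 𝓕 a b (t + 1) (Fin.cons a d) := by
  obtain ⟨hmem, hmono, h0, hl, hcovs⟩ := hd
  subst h0
  refine ⟨fun i => ?_, Fin.strictMono_iff_lt_succ.2 fun i => ?_, by simp, ?_, fun i => ?_⟩
  · induction i using Fin.cases with
    | zero => simpa using ha
    | succ j => simpa using hmem j
  · induction i using Fin.cases with
    | zero => simpa using hcov.1
    | succ j =>
      rw [← Fin.succ_castSucc, Fin.cons_succ, Fin.cons_succ]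
      exact hmono Fin.castSucc_lt_succ
  · rw [← Fin.succ_last, Fin.cons_succ]; exact hl
  · induction i using Fin.cases with
    | zero => simpa using hcov
    | succ j =>
      rw [← Fin.succ_castSucc, Fin.cons_succ, Fin.cons_succ]
      exact hcovs j

/-- Appending a flat to a maximal chain. -/
theorem stmt8_chain_snoc {a b b' : Submodule K E} {t : ℕ} {d : Fin (t + 1) → Submodule K E}
    (hd : IsMaxChainTo 𝓕 a b t d) (hb' : b' ∈ 𝓕) (hcov : FlatCovers 𝓕 b b') :
    IsMaxChainTo 𝓕 a b' (t + 1) (Fin.snoc d b') := by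
  obtain ⟨hmem, hmono, h0, hl, hcovs⟩ := hd
  subst hl
  refine ⟨fun i => ?_, Fin.strictMono_iff_lt_succ.2 fun i => ?_, ?_, by simp, fun i => ?_⟩
  · induction i using Fin.lastCases with
    | last => simpa using hb'
    | cast j => simpa using hmem j
  · rw [Fin.snoc_castSucc]
    induction i using Fin.lastCases with
    | last => rw [Fin.succ_last]; simpa using hcov.1
    | cast j =>
      rw [Fin.succ_castSucc, Fin.snoc_castSucc]
      exact hmono Fin.castSucc_lt_succ
  · rw [show (0 : Fin (t + 2)) = Fin.castSucc 0 from (Fin.castSucc_zero).symm,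
      Fin.snoc_castSucc]
    exact h0
  · rw [Fin.snoc_castSucc]
    induction i using Fin.lastCases with
    | last => rw [Fin.succ_last]; simpa using hcov
    | cast j =>
      rw [Fin.succ_castSucc, Fin.snoc_castSucc]
      exact hcovs j

/-- The tail of a maximal chain. -/
theorem stmt8_chain_tail {a b : Submodule K E} {t : ℕ} {c : Fin (t + 2) → Submodule K E}
    (hc : IsMaxChainTo 𝓕 a b (t + 1) c) :
    IsMaxChainTo 𝓕 (c (Fin.succ 0)) b t (fun i => c i.succ) := by
  obtain ⟨hmem, hmono, h0, hl, hcovs⟩ := hc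
  refine ⟨fun i => hmem _, fun i j h => hmono (Fin.succ_lt_succ_iff.2 h), rfl, ?_, fun i => ?_⟩
  · show c (Fin.last t).succ = b
    rw [Fin.succ_last]; exact hl
  · have h' := hcovs i.succ
    rw [← Fin.succ_castSucc] at h'
    exact h'

theorem stmt8_head_cover {a b : Submodule K E} {t : ℕ} {c : Fin (t + 2) → Submodule K E}
    (hc : IsMaxChainTo 𝓕 a b (t + 1) c) : FlatCovers 𝓕 a (c (Fin.succ 0)) := by
  have h := hc.2.2.2.2 0
  rw [Fin.castSucc_zero, hc.2.2.1] at h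
  exact h

/-- Existence of maximal chains between comparable flats. -/
theorem stmt8_chain_exists [FiniteDimensional K E] (hF : FlatAxioms 𝓕)
    {Cl : Submodule K E → Submodule K E}
    (hC : ∀ A : Submodule K E, Cl A ∈ 𝓕 ∧ A ≤ Cl A ∧ ∀ G ∈ 𝓕, A ≤ G → Cl A ≤ G) :
    ∀ (n : ℕ) (G b : Submodule K E),
      Module.finrank K b - Module.finrank K G ≤ n → G ∈ 𝓕 → b ∈ 𝓕 → G ≤ b →
      ∃ (t : ℕ) (d : Fin (t + 1) → Submodule K E), IsMaxChainTo 𝓕 G b t d := by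
  intro n
  induction n with
  | zero =>
    intro G b hn hG hb hGb
    rcases eq_or_lt_of_le hGb with rfl | hlt
    · exact ⟨0, fun _ => G, stmt8_chain_refl hG⟩
    · have := Submodule.finrank_lt_finrank_of_lt hlt
      omega
  | succ n IHn =>
    intro G b hn hG hb hGb
    rcases eq_or_lt_of_le hGb with rfl | hlt
    · exact ⟨0, fun _ => G, stmt8_chain_refl hG⟩
    · obtain ⟨x, hx1, hxb, hxG⟩ := stmt8_exists_line hlt
      have cov := stmt8_cover_closure hF hC hG hx1 hxG
      have hG'b : Cl (G ⊔ x) ≤ b := (hC _).2.2 _ hb (sup_le hlt.le hxb)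
      have hrk1 : Module.finrank K G < Module.finrank K (Cl (G ⊔ x)) :=
        Submodule.finrank_lt_finrank_of_lt cov.1
      have hrk2 : Module.finrank K (Cl (G ⊔ x)) ≤ Module.finrank K b :=
        Submodule.finrank_mono hG'b
      obtain ⟨t, d, hd⟩ := IHn (Cl (G ⊔ x)) b (by omega) (hC _).1 hb hG'b
      exact ⟨t + 1, Fin.cons G d, stmt8_chain_cons hd hG cov⟩

/-- Jordan–Hölder: two maximal chains between the same flats have equal length. -/
theorem stmt8_jh [FiniteDimensional K E] (hF : FlatAxioms 𝓕)
    {Cl : Submodule K E → Submodule K E}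
    (hC : ∀ A : Submodule K E, Cl A ∈ 𝓕 ∧ A ≤ Cl A ∧ ∀ G ∈ 𝓕, A ≤ G → Cl A ≤ G) :
    ∀ (m : ℕ) (a b : Submodule K E) (m' : ℕ) (c : Fin (m + 1) → Submodule K E)
      (c' : Fin (m' + 1) → Submodule K E),
      IsMaxChainTo 𝓕 a b m c → IsMaxChainTo 𝓕 a b m' c' → m = m' := by
  intro m
  induction m using Nat.strong_induction_on with
  | _ m IH =>
    intro a b m' c c' hc hc'
    rcases m with _ | k
    · -- a = b
      have hab : a = b := by
        rw [← hc.2.2.1, ← hc.2.2.2.1]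
        exact congrArg c (by omega)
      rcases m' with _ | l
      · rfl
      · exfalso
        have hlt : c' 0 < c' (Fin.last (l + 1)) :=
          hc'.2.1 (show (0 : Fin (l + 2)) < Fin.last (l + 1) by rw [Fin.lt_def]; simp)
        rw [hc'.2.2.1, hc'.2.2.2.1, ← hab] at hlt
        exact lt_irrefl a hlt
    · rcases m' with _ | l
      · exfalso
        have hab : a = b := by
          rw [← hc'.2.2.1, ← hc'.2.2.2.1]
          exact congrArg c' (by omega)
        have hlt : c 0 < c (Fin.last (k + 1)) :=
          hc.2.1 (show (0 : Fin (k + 2)) < Fin.last (k + 1) by rw [Fin.lt_def]; simp)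
        rw [hc.2.2.1, hc.2.2.2.1, ← hab] at hlt
        exact lt_irrefl a hlt
      · -- main case
        have t₁ := stmt8_chain_tail hc
        have t₂ := stmt8_chain_tail hc'
        have cov1 := stmt8_head_cover hc
        have cov2 := stmt8_head_cover hc'
        have f1mem : c (Fin.succ 0) ∈ 𝓕 := hc.1 _
        have f2mem : c' (Fin.succ 0) ∈ 𝓕 := hc'.1 _
        have amem : a ∈ 𝓕 := by rw [← hc.2.2.1]; exact hc.1 _
        have bmem : b ∈ 𝓕 := by rw [← hc.2.2.2.1]; exact hc.1 _
        by_cases h12 : c (Fin.succ 0) = c' (Fin.succ 0)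
        · rw [← h12] at t₂
          have := IH k (by omega) _ _ _ _ _ t₁ t₂
          omega
        · have covG1 := stmt8_diamond hF hC amem f1mem f2mem cov1 cov2 h12
          have covG2 : FlatCovers 𝓕 (c' (Fin.succ 0)) (Cl (c (Fin.succ 0) ⊔ c' (Fin.succ 0))) := by
            have h := stmt8_diamond hF hC amem f2mem f1mem cov2 cov1 (Ne.symm h12)
            rwa [sup_comm] at h
          have hF₁b : c (Fin.succ 0) ≤ b := by
            rw [← hc.2.2.2.1]; exact hc.2.1.monotone (Fin.le_last _)
          have hF₂b : c' (Fin.succ 0) ≤ b := by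
            rw [← hc'.2.2.2.1]; exact hc'.2.1.monotone (Fin.le_last _)
          have hGb : Cl (c (Fin.succ 0) ⊔ c' (Fin.succ 0)) ≤ b :=
            (hC _).2.2 b bmem (sup_le hF₁b hF₂b)
          obtain ⟨t, d, hd⟩ := stmt8_chain_exists hF hC
            (Module.finrank K b) _ b (Nat.sub_le _ _) (hC _).1 bmem hGb
          have e1 := stmt8_chain_cons hd f1mem covG1
          have e2 := stmt8_chain_cons hd f2mem covG2
          have hk : k = t + 1 := IH k (by omega) _ _ _ _ _ t₁ e1
          have hl : t + 1 = l := IH (t + 1) (by omega) _ _ _ _ _ e2 t₂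
          omega

/-- Chains to a strictly larger flat are strictly longer. -/
theorem stmt8_chain_mono [FiniteDimensional K E] (hF : FlatAxioms 𝓕)
    {Cl : Submodule K E → Submodule K E}
    (hC : ∀ A : Submodule K E, Cl A ∈ 𝓕 ∧ A ≤ Cl A ∧ ∀ G ∈ 𝓕, A ≤ G → Cl A ≤ G) :
    ∀ (n : ℕ) (z a b : Submodule K E) (m m' : ℕ) (c : Fin (m + 1) → Submodule K E)
      (c' : Fin (m' + 1) → Submodule K E),
      Module.finrank K b - Module.finrank K a ≤ n →
      IsMaxChainTo 𝓕 z a m c → IsMaxChainTo 𝓕 z b m' c' → a < b → m < m' := by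
  intro n
  induction n with
  | zero =>
    intro z a b m m' c c' hn hca hcb hab
    have := Submodule.finrank_lt_finrank_of_lt hab
    omega
  | succ n IHn =>
    intro z a b m m' c c' hn hca hcb hab
    obtain ⟨x, hx1, hxb, hxa⟩ := stmt8_exists_line hab
    have hamem : a ∈ 𝓕 := by rw [← hca.2.2.2.1]; exact hca.1 _
    have hbmem : b ∈ 𝓕 := by rw [← hcb.2.2.2.1]; exact hcb.1 _
    have cov := stmt8_cover_closure hF hC hamem hx1 hxa
    have snoc := stmt8_chain_snoc hca (hC _).1 cov
    have ha'b : Cl (a ⊔ x) ≤ b := (hC _).2.2 _ hbmem (sup_le hab.le hxb)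
    rcases eq_or_lt_of_le ha'b with heq | hlt
    · rw [heq] at snoc
      have := stmt8_jh hF hC (m + 1) _ b m' _ c' snoc hcb
      omega
    · have h1 : Module.finrank K a < Module.finrank K (Cl (a ⊔ x)) :=
        Submodule.finrank_lt_finrank_of_lt cov.1
      have := IHn z _ b (m + 1) m' _ c' (by omega) snoc hcb hlt
      omega

end Aux

/-- (i) If 𝓕 satisfies (F1)-(F3) and r = r_𝓕 is the induced rank
function (length of a maximal chain of flats from C({0}) to C(A)), then the set
of flats of the q-matroid (E,r) is exactly 𝓕.  (ii) Conversely, if (E,r) is a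
q-matroid, 𝓕_r its set of flats, and r' the rank function induced by 𝓕_r via
maximal chains, then r = r'. -/
theorem stmt8 {K E : Type*} [Field K] [Fintype K] [AddCommGroup E] [Module K E]
    [FiniteDimensional K E] :
    (∀ (𝓕 : Set (Submodule K E)), FlatAxioms 𝓕 →
      ∀ (C : Submodule K E → Submodule K E),
        (∀ A : Submodule K E, C A ∈ 𝓕 ∧ A ≤ C A ∧ ∀ G ∈ 𝓕, A ≤ G → C A ≤ G) →
      ∀ (r : Submodule K E → ℕ),
        (∀ A : Submodule K E,
          ∃ c : Fin (r A + 1) → Submodule K E, IsMaxChainTo 𝓕 (C ⊥) (C A) (r A) c) →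
      {F : Submodule K E |
        ∀ x : Submodule K E, Module.finrank K x = 1 → ¬ x ≤ F → r F < r (F ⊔ x)} = 𝓕) ∧
    (∀ (r : Submodule K E → ℤ),
      (∀ A : Submodule K E, 0 ≤ r A ∧ r A ≤ Module.finrank K A) →
      (∀ A B : Submodule K E, A ≤ B → r A ≤ r B) →
      (∀ A B : Submodule K E, r (A ⊔ B) + r (A ⊓ B) ≤ r A + r B) →
      ∀ (C : Submodule K E → Submodule K E),
        (∀ A : Submodule K E,
          C A ∈ {F : Submodule K E | ∀ x : Submodule K E,
                  Module.finrank K x = 1 → ¬ x ≤ F → r F < r (F ⊔ x)} ∧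
          A ≤ C A ∧
          ∀ G ∈ {F : Submodule K E | ∀ x : Submodule K E,
                  Module.finrank K x = 1 → ¬ x ≤ F → r F < r (F ⊔ x)},
            A ≤ G → C A ≤ G) →
      ∀ (r' : Submodule K E → ℕ),
        (∀ A : Submodule K E,
          ∃ c : Fin (r' A + 1) → Submodule K E,
            IsMaxChainTo
              {F : Submodule K E | ∀ x : Submodule K E,
                Module.finrank K x = 1 → ¬ x ≤ F → r F < r (F ⊔ x)}
              (C ⊥) (C A) (r' A) c) →
      ∀ A : Submodule K E, r A = r' A) := by
  constructor
  · -- Part (i)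
    intro 𝓕 hF Cl hC r hr
    ext F
    simp only [Set.mem_setOf_eq]
    constructor
    · intro hP
      by_contra hFm
      have hFC : F < Cl F :=
        lt_of_le_of_ne (hC F).2.1 (fun h => hFm (by rw [h]; exact (hC F).1))
      obtain ⟨x, hx1, hxC, hxF⟩ := stmt8_exists_line hFC
      have hCeq : Cl (F ⊔ x) = Cl F :=
        le_antisymm ((hC _).2.2 _ (hC F).1 (sup_le (hC F).2.1 hxC))
          ((hC _).2.2 _ (hC _).1 (le_sup_left.trans (hC _).2.1))
      obtain ⟨c, hc⟩ := hr F
      obtain ⟨c', hc'⟩ := hr (F ⊔ x)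
      rw [hCeq] at hc'
      have heq := stmt8_jh hF hC (r F) _ _ (r (F ⊔ x)) c c' hc hc'
      exact absurd (hP x hx1 hxF) (by omega)
    · intro hFm x hx1 hxF
      have hclF : Cl F = F := le_antisymm ((hC F).2.2 F hFm le_rfl) (hC F).2.1
      have cov := stmt8_cover_closure hF hC hFm hx1 hxF
      obtain ⟨c, hc⟩ := hr F
      obtain ⟨c', hc'⟩ := hr (F ⊔ x)
      rw [hclF] at hc
      exact stmt8_chain_mono hF hC (Module.finrank K (Cl (F ⊔ x))) _ F (Cl (F ⊔ x))
        _ _ c c' (Nat.sub_le _ _) hc hc' cov.1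
  · -- Part (ii)
    intro r hR1 hR2 hR3 Cl hC r' hr' A
    haveI : Finite E := Module.finite_of_finite K
    haveI : Finite (Submodule K E) :=
      Finite.of_injective _ (SetLike.coe_injective (A := Submodule K E))
    -- r increases when adding a line not in some flat containing B
    have flat_step : ∀ F ∈ {F : Submodule K E | ∀ x : Submodule K E,
          Module.finrank K x = 1 → ¬ x ≤ F → r F < r (F ⊔ x)},
        ∀ B x : Submodule K E, B ≤ F → Module.finrank K x = 1 → ¬ x ≤ F →
          r B < r (B ⊔ x) := by
      intro F hF B x hBF hx1 hxF
      by_contra h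
      push_neg at h
      have hsub := hR3 F (B ⊔ x)
      have h1 : F ⊔ (B ⊔ x) = F ⊔ x := by rw [← sup_assoc, sup_eq_left.2 hBF]
      have h2 : r B ≤ r (F ⊓ (B ⊔ x)) := hR2 _ _ (le_inf hBF le_sup_left)
      have h3 := hF x hx1 hxF
      rw [h1] at hsub
      linarith only [hsub, h2, h3, h]
    have inf_closed : ∀ F₁ ∈ {F : Submodule K E | ∀ x : Submodule K E,
          Module.finrank K x = 1 → ¬ x ≤ F → r F < r (F ⊔ x)},
        ∀ F₂ ∈ {F : Submodule K E | ∀ x : Submodule K E,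
          Module.finrank K x = 1 → ¬ x ≤ F → r F < r (F ⊔ x)},
        F₁ ⊓ F₂ ∈ {F : Submodule K E | ∀ x : Submodule K E,
          Module.finrank K x = 1 → ¬ x ≤ F → r F < r (F ⊔ x)} := by
      intro F₁ h1 F₂ h2
      intro x hx1 hx
      have : ¬ x ≤ F₁ ∨ ¬ x ≤ F₂ := by
        by_contra hcon
        push_neg at hcon
        exact hx (le_inf hcon.1 hcon.2)
      rcases this with h | h
      · exact flat_step F₁ h1 _ x inf_le_left hx1 h
      · exact flat_step F₂ h2 _ x inf_le_right hx1 h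
    have exists_flat : ∀ B : Submodule K E, ∃ G : Submodule K E, B ≤ G ∧
        G ∈ {F : Submodule K E | ∀ x : Submodule K E,
          Module.finrank K x = 1 → ¬ x ≤ F → r F < r (F ⊔ x)} ∧ r G = r B := by
      intro B
      obtain ⟨G, ⟨hBG, hrG⟩, hmax⟩ :=
        Set.Finite.exists_maximalFor (fun G : Submodule K E => Module.finrank K G)
          {G : Submodule K E | B ≤ G ∧ r G = r B} (Set.toFinite _) ⟨B, le_rfl, rfl⟩
      refine ⟨G, hBG, ?_, hrG⟩
      intro x hx1 hxG
      by_contra h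
      push_neg at h
      have hle : r (G ⊔ x) = r B := le_antisymm (h.trans hrG.le) (hrG ▸ hR2 _ _ le_sup_left)
      have hmem : G ⊔ x ∈ {G : Submodule K E | B ≤ G ∧ r G = r B} :=
        ⟨hBG.trans le_sup_left, hle⟩
      have hlt : G < G ⊔ x := left_lt_sup.2 hxG
      have := hmax hmem (Submodule.finrank_mono le_sup_left)
      exact absurd this (not_le_of_gt (Submodule.finrank_lt_finrank_of_lt hlt))
    have cl_rank : ∀ B : Submodule K E, r (Cl B) = r B := by
      intro B
      obtain ⟨G, hBG, hG, hrG⟩ := exists_flat B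
      have h1 : Cl B ≤ G := (hC B).2.2 G hG hBG
      have h2 := hR2 B (Cl B) (hC B).2.1
      have h3 := hR2 _ _ h1
      linarith only [h2, h3, hrG]
    have cover_one : ∀ F F' : Submodule K E,
        F ∈ {F : Submodule K E | ∀ x : Submodule K E,
          Module.finrank K x = 1 → ¬ x ≤ F → r F < r (F ⊔ x)} →
        F' ∈ {F : Submodule K E | ∀ x : Submodule K E,
          Module.finrank K x = 1 → ¬ x ≤ F → r F < r (F ⊔ x)} →
        FlatCovers {F : Submodule K E | ∀ x : Submodule K E,
          Module.finrank K x = 1 → ¬ x ≤ F → r F < r (F ⊔ x)} F F' →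
        r F' = r F + 1 := by
      intro F F' hmF hmF' hcov
      obtain ⟨x, hx1, hxF', hxF⟩ := stmt8_exists_line hcov.1
      have hlow : r F < r (F ⊔ x) := hmF x hx1 hxF
      have hup : r (F ⊔ x) ≤ r F + 1 := by
        have hsub := hR3 F x
        have h1 : (0 : ℤ) ≤ r (F ⊓ x) := (hR1 _).1
        have h2 : r x ≤ 1 := by
          have h := (hR1 x).2
          rw [hx1] at h
          exact_mod_cast h
        linarith only [hsub, h1, h2]
      obtain ⟨G, hG1, hG2, hG3⟩ := exists_flat (F ⊔ x)
      have hH := inf_closed G hG2 F' hmF'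
      have hFH : F < G ⊓ F' := by
        refine lt_of_le_of_ne (le_inf (le_sup_left.trans hG1) hcov.1.le) (fun h => hxF ?_)
        rw [h]
        exact le_inf (le_sup_right.trans hG1) hxF'
      have hHF' : G ⊓ F' = F' := by
        by_contra hne
        exact hcov.2 _ hH hFH (lt_of_le_of_ne inf_le_right hne)
      have h4 : r F' ≤ r (F ⊔ x) := by
        rw [← hHF', ← hG3]
        exact hR2 _ _ inf_le_left
      have h5 : r (F ⊔ x) ≤ r F' := hR2 _ _ (sup_le hcov.1.le hxF')
      linarith only [hlow, hup, h4, h5]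
    obtain ⟨c, hc⟩ := hr' A
    obtain ⟨hmem, hmono, h0, hl, hcovs⟩ := hc
    have hstep : ∀ i : Fin (r' A + 1), r (c i) = r (Cl ⊥) + i.val := by
      intro i
      induction i using Fin.induction with
      | zero => simp [h0]
      | succ j ih =>
        have h := cover_one _ _ (hmem j.castSucc) (hmem j.succ) (hcovs j)
        rw [h, ih]
        push_cast [Fin.val_succ, Fin.coe_castSucc]
        ring
    have hbot : r (Cl ⊥) = 0 := by
      have h1 := cl_rank ⊥
      have h2 : r ⊥ = 0 := by
        have hb := (hR1 (⊥ : Submodule K E)).2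
        rw [finrank_bot] at hb
        have := (hR1 (⊥ : Submodule K E)).1
        omega
      omega
    have hlast := hstep (Fin.last _)
    rw [hl] at hlast
    have hclA := cl_rank A
    rw [hbot, Fin.val_last] at hlast
    omega
end

section
/- Let (E,𝓑) be a q-Steiner system S(t,k,n;q) and let 𝓕 be the set of all intersections of subfamilies of 𝓑 (with the empty intersection equal to E). Then 𝓕 satisfies the flat axioms (F1)-(F3), and hence defines a q-matroid on E. -/
set_option maxHeartbeats 1000000

open Module Submodule

section Aux

variable {K V : Type*} [Field K] [AddCommGroup V] [Module K V] [FiniteDimensional K V]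

lemma aux_finrank_sup_one (F x : Submodule K V) (hx : finrank K x = 1) (hxF : ¬ x ≤ F) :
    finrank K ↥(F ⊔ x) = finrank K F + 1 := by
  have h := Submodule.finrank_sup_add_finrank_inf_eq F x
  rw [hx] at h
  have h2 : finrank K ↥(F ⊓ x) ≠ 1 := by
    intro h1
    have : F ⊓ x = x := Submodule.eq_of_le_of_finrank_le inf_le_right (by rw [h1, hx])
    exact hxF (this ▸ inf_le_left)
  have h3 : finrank K ↥(F ⊓ x) ≤ 1 := hx ▸ Submodule.finrank_mono inf_le_right
  omega

lemma aux_exists_sup (U : Submodule K V) (d : ℕ) (h1 : finrank K U ≤ d) :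
    d ≤ finrank K V → ∃ T, U ≤ T ∧ finrank K T = d := by
  induction d, h1 using Nat.le_induction with
  | base => exact fun _ => ⟨U, le_rfl, rfl⟩
  | succ d hd ih =>
    intro h2
    obtain ⟨T, hUT, hT⟩ := ih (by omega)
    have hlt : finrank K T < finrank K V := by omega
    obtain ⟨v, hv⟩ := Submodule.exists_of_finrank_lt T hlt
    have hv1 : v ∉ T := fun h => hv 1 one_ne_zero (by simpa using h)
    have hv0 : v ≠ 0 := fun h => hv1 (h ▸ T.zero_mem)
    refine ⟨T ⊔ Submodule.span K {v}, hUT.trans le_sup_left, ?_⟩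
    rw [aux_finrank_sup_one T _ (finrank_span_singleton hv0)
      (fun h => hv1 (h (Submodule.mem_span_singleton_self v))), hT]

lemma aux_exists_le (W : Submodule K V) (d : ℕ) (h : d ≤ finrank K W) :
    ∃ T, T ≤ W ∧ finrank K T = d := by
  obtain ⟨T', _, hT'⟩ := aux_exists_sup (⊥ : Submodule K ↥W) d (by simp) h
  exact ⟨T'.map W.subtype, Submodule.map_subtype_le W T', by
    rw [Submodule.finrank_map_subtype_eq]; exact hT'⟩

lemma aux_finrank_map_mkQ (U p : Submodule K V) (h : U ≤ p) :
    finrank K ↥(p.map U.mkQ) + finrank K U = finrank K p := by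
  have key := LinearMap.finrank_range_add_finrank_ker (U.mkQ.comp p.subtype)
  rw [LinearMap.range_comp, Submodule.range_subtype, LinearMap.ker_comp, Submodule.ker_mkQ] at key
  rwa [(Submodule.comapSubtypeEquivOfLe h).finrank_eq] at key

lemma card_interval (U W : Submodule K V) (hUW : U ≤ W) (d : ℕ) :
    Nat.card {p : Submodule K V // U ≤ p ∧ p ≤ W ∧ finrank K p = d} =
    Nat.card {r : Submodule K (Fin (finrank K W - finrank K U) → K) //
      finrank K r + finrank K U = d} := by
  have hU' : finrank K (U.comap W.subtype) = finrank K U :=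
    (Submodule.comapSubtypeEquivOfLe hUW).finrank_eq
  have hmapU : (U.comap W.subtype).map W.subtype = U :=
    (Submodule.map_comap_subtype _ _).trans (inf_eq_right.mpr hUW)
  have hker : ∀ r : Submodule K (↥W ⧸ U.comap W.subtype),
      U.comap W.subtype ≤ r.comap (U.comap W.subtype).mkQ := by
    intro r u hu
    show (U.comap W.subtype).mkQ u ∈ r
    have h0 : (U.comap W.subtype).mkQ u = 0 := (Submodule.Quotient.mk_eq_zero _).mpr hu
    rw [h0]; exact r.zero_mem
  have hmc : ∀ r : Submodule K (↥W ⧸ U.comap W.subtype),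
      (r.comap (U.comap W.subtype).mkQ).map (U.comap W.subtype).mkQ = r := by
    intro r
    rw [Submodule.map_comap_eq, Submodule.range_mkQ, top_inf_eq]
  have e₁ : {p : Submodule K V // U ≤ p ∧ p ≤ W ∧ finrank K p = d} ≃
      {q : Submodule K ↥W // U.comap W.subtype ≤ q ∧ finrank K q = d} :=
    { toFun := fun p => ⟨p.1.comap W.subtype, Submodule.comap_mono p.2.1, by
        rw [(Submodule.comapSubtypeEquivOfLe p.2.2.1).finrank_eq]; exact p.2.2.2⟩
      invFun := fun q => ⟨q.1.map W.subtype,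
        hmapU.symm.trans_le (Submodule.map_mono q.2.1),
        Submodule.map_subtype_le W q.1, by
          rw [Submodule.finrank_map_subtype_eq]; exact q.2.2⟩
      left_inv := fun p => Subtype.ext (show (p.1.comap W.subtype).map W.subtype = p.1 from
        (Submodule.map_comap_subtype _ _).trans (inf_eq_right.mpr p.2.2.1))
      right_inv := fun q => Subtype.ext (show (q.1.map W.subtype).comap W.subtype = q.1 from
        Submodule.comap_map_eq_of_injective W.injective_subtype q.1) }
  have e₂ : {q : Submodule K ↥W // U.comap W.subtype ≤ q ∧ finrank K q = d} ≃
      {r : Submodule K (↥W ⧸ U.comap W.subtype) // finrank K r + finrank K U = d} :=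
    { toFun := fun q => ⟨q.1.map (U.comap W.subtype).mkQ, by
        have h := aux_finrank_map_mkQ (U.comap W.subtype) q.1 q.2.1
        rw [hU'] at h
        have := q.2.2
        omega⟩
      invFun := fun r => ⟨r.1.comap (U.comap W.subtype).mkQ, hker r.1, by
        have h := aux_finrank_map_mkQ (U.comap W.subtype)
          (r.1.comap (U.comap W.subtype).mkQ) (hker r.1)
        have h2 : finrank K ↥((r.1.comap (U.comap W.subtype).mkQ).map
            (U.comap W.subtype).mkQ) = finrank K r.1 :=
          congrArg (fun s : Submodule K (↥W ⧸ U.comap W.subtype) => finrank K s) (hmc r.1)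
        have := r.2
        omega⟩
      left_inv := fun q => Subtype.ext (show ((q.1.map (U.comap W.subtype).mkQ).comap
          (U.comap W.subtype).mkQ) = q.1 by
        rw [Submodule.comap_map_mkQ, sup_eq_right.mpr q.2.1])
      right_inv := fun r => Subtype.ext (hmc r.1) }
  have hQ : finrank K (↥W ⧸ U.comap W.subtype) = finrank K W - finrank K U := by
    have h := Submodule.finrank_quotient_add_finrank (U.comap W.subtype)
    rw [hU'] at h; omega
  have hmodel : finrank K (Fin (finrank K W - finrank K U) → K) =
      finrank K W - finrank K U := Module.finrank_fin_fun K
  obtain ⟨e⟩ := FiniteDimensional.nonempty_linearEquiv_of_finrank_eq (hQ.trans hmodel.symm)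
  have e₃ : {r : Submodule K (↥W ⧸ U.comap W.subtype) // finrank K r + finrank K U = d} ≃
      {r : Submodule K (Fin (finrank K W - finrank K U) → K) //
        finrank K r + finrank K U = d} :=
    (Submodule.orderIsoMapComap e).toEquiv.subtypeEquiv (fun r => by
      rw [RelIso.coe_fn_toEquiv, Submodule.orderIsoMapComap_apply,
        LinearEquiv.finrank_map_eq e r])
  exact Nat.card_congr ((e₁.trans e₂).trans e₃)

end Aux

/-- 𝓑 is a q-Steiner system S(t,k,n;q) on E = K^n: a collection of
k-dimensional subspaces such that every t-dimensional subspace is contained in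
exactly one member of 𝓑. -/
def IsSteinerSystem {K : Type*} [Field K] [Fintype K] {n : ℕ}
    (t k : ℕ) (𝓑 : Set (Submodule K (Fin n → K))) : Prop :=
  1 ≤ t ∧ t ≤ k ∧ k ≤ n ∧
  (∀ B ∈ 𝓑, Module.finrank K B = k) ∧
  (∀ T : Submodule K (Fin n → K), Module.finrank K T = t → ∃! B, B ∈ 𝓑 ∧ T ≤ B)

section Steiner

variable {K : Type*} [Field K] [Fintype K] {n t k : ℕ}
  (𝓑 : Set (Submodule K (Fin n → K)))

lemma steiner_DC (h𝓑 : IsSteinerSystem t k 𝓑) (U : Submodule K (Fin n → K)) :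
    Nat.card {T : Submodule K (Fin n → K) // U ≤ T ∧ T ≤ ⊤ ∧ finrank K T = t} =
    Nat.card {B : Submodule K (Fin n → K) // B ∈ 𝓑 ∧ U ≤ B} *
      Nat.card {r : Submodule K (Fin (k - finrank K U) → K) //
        finrank K r + finrank K U = t} := by
  obtain ⟨-, -, -, hdim, hsteiner⟩ := h𝓑
  haveI : Finite (Submodule K (Fin n → K)) :=
    Finite.of_injective (fun p : Submodule K (Fin n → K) => (p : Set (Fin n → K)))
      SetLike.coe_injective
  haveI : Finite (Submodule K (Fin (k - finrank K U) → K)) :=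
    Finite.of_injective
      (fun p : Submodule K (Fin (k - finrank K U) → K) => (p : Set (Fin (k - finrank K U) → K)))
      SetLike.coe_injective
  set 𝒮 := {B : Submodule K (Fin n → K) // B ∈ 𝓑 ∧ U ≤ B}
  set Model := {r : Submodule K (Fin (k - finrank K U) → K) //
        finrank K r + finrank K U = t} with hModel
  let fib : 𝒮 → Type _ := fun B =>
    {T : Submodule K (Fin n → K) // U ≤ T ∧ T ≤ B.1 ∧ finrank K T = t}
  let g : (Σ B : 𝒮, fib B) → {T : Submodule K (Fin n → K) // U ≤ T ∧ T ≤ ⊤ ∧ finrank K T = t} :=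
    fun X => ⟨X.2.1, X.2.2.1, le_top, X.2.2.2.2⟩
  have hg : Function.Bijective g := by
    constructor
    · rintro ⟨⟨B, hB, hUB⟩, T, hUT, hTB, hTt⟩ ⟨⟨B', hB', hUB'⟩, T', hUT', hTB', hTt'⟩ h
      have hTT : T = T' := congrArg Subtype.val h
      subst hTT
      have hBB : B = B' := by
        have h1 := (hsteiner T hTt).unique ⟨hB, hTB⟩ ⟨hB', hTB'⟩
        exact h1
      subst hBB
      rfl
    · rintro ⟨T, hUT, -, hTt⟩
      obtain ⟨B, ⟨hB, hTB⟩, -⟩ := hsteiner T hTt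
      exact ⟨⟨⟨B, hB, hUT.trans hTB⟩, ⟨T, hUT, hTB, hTt⟩⟩, rfl⟩
  have efib : ∀ B : 𝒮, fib B ≃ Model := by
    intro B
    have hcard : Nat.card (fib B) = Nat.card Model := by
      have h := card_interval U B.1 B.2.2 t
      rwa [hdim B.1 B.2.1] at h
    haveI : Fintype (fib B) := Fintype.ofFinite _
    haveI : Fintype Model := Fintype.ofFinite _
    rw [Nat.card_eq_fintype_card, Nat.card_eq_fintype_card] at hcard
    exact Fintype.equivOfCardEq hcard
  calc Nat.card {T : Submodule K (Fin n → K) // U ≤ T ∧ T ≤ ⊤ ∧ finrank K T = t}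
      = Nat.card (Σ B : 𝒮, fib B) := (Nat.card_congr (Equiv.ofBijective g hg)).symm
    _ = Nat.card (𝒮 × Model) := Nat.card_congr
        ((Equiv.sigmaCongrRight efib).trans (Equiv.sigmaEquivProd 𝒮 Model))
    _ = _ := Nat.card_prod 𝒮 Model

lemma steiner_card_S (h𝓑 : IsSteinerSystem t k 𝓑) (U₁ U₂ : Submodule K (Fin n → K))
    (h12 : finrank K U₁ = finrank K U₂) (hUt : finrank K U₁ ≤ t) :
    Nat.card {B : Submodule K (Fin n → K) // B ∈ 𝓑 ∧ U₁ ≤ B} =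
      Nat.card {B : Submodule K (Fin n → K) // B ∈ 𝓑 ∧ U₂ ≤ B} := by
  have htk := h𝓑.2.1
  have d1 := steiner_DC 𝓑 h𝓑 U₁
  have d2 := steiner_DC 𝓑 h𝓑 U₂
  rw [h12] at d1
  have hT : Nat.card {T : Submodule K (Fin n → K) // U₁ ≤ T ∧ T ≤ ⊤ ∧ finrank K T = t} =
      Nat.card {T : Submodule K (Fin n → K) // U₂ ≤ T ∧ T ≤ ⊤ ∧ finrank K T = t} := by
    rw [card_interval U₁ ⊤ le_top t, card_interval U₂ ⊤ le_top t, h12]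
  have hc : Nat.card {r : Submodule K (Fin (k - finrank K U₂) → K) //
      finrank K r + finrank K U₂ = t} ≠ 0 := by
    haveI : Finite (Submodule K (Fin (k - finrank K U₂) → K)) :=
      Finite.of_injective
        (fun p : Submodule K (Fin (k - finrank K U₂) → K) => (p : Set (Fin (k - finrank K U₂) → K)))
        SetLike.coe_injective
    rw [Nat.card_ne_zero]
    refine ⟨?_, inferInstance⟩
    obtain ⟨T, -, hT⟩ := aux_exists_sup (⊥ : Submodule K (Fin (k - finrank K U₂) → K))
      (t - finrank K U₂) (by simp) (by rw [Module.finrank_fin_fun]; omega)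
    exact ⟨⟨T, by rw [hT]; omega⟩⟩
  rw [d1, d2] at hT
  exact Nat.eq_of_mul_eq_mul_right (Nat.pos_of_ne_zero hc) hT

end Steiner

/-- The set 𝓕 of all intersections of subfamilies of the blocks of
a q-Steiner system (with the empty intersection equal to E) satisfies the flat
axioms (F1)-(F3), hence defines a q-matroid on E. -/
theorem stmt9 {K : Type*} [Field K] [Fintype K] {n t k : ℕ}
    (𝓑 : Set (Submodule K (Fin n → K))) (h𝓑 : IsSteinerSystem t k 𝓑) :
    let 𝓕 : Set (Submodule K (Fin n → K)) := {F | ∃ S ⊆ 𝓑, F = sInf S}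
    (⊤ : Submodule K (Fin n → K)) ∈ 𝓕 ∧
    (∀ F₁ ∈ 𝓕, ∀ F₂ ∈ 𝓕, F₁ ⊓ F₂ ∈ 𝓕) ∧
    (∀ F ∈ 𝓕, ∀ x : Submodule K (Fin n → K), Module.finrank K x = 1 → ¬ x ≤ F →
      ∃! F' : Submodule K (Fin n → K), F' ∈ 𝓕 ∧ x ≤ F' ∧ FlatCovers 𝓕 F F') := by
  intro 𝓕
  obtain ⟨ht1, htk, hkn, hdim, hsteiner⟩ := h𝓑
  have h𝓑' : IsSteinerSystem t k 𝓑 := ⟨ht1, htk, hkn, hdim, hsteiner⟩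
  refine ⟨⟨∅, Set.empty_subset _, sInf_empty.symm⟩, ?_, ?_⟩
  · rintro F₁ ⟨S₁, hS₁, rfl⟩ F₂ ⟨S₂, hS₂, rfl⟩
    exact ⟨S₁ ∪ S₂, Set.union_subset hS₁ hS₂, sInf_union.symm⟩
  intro F hF x hx1 hxF
  have KF : ∀ G ∈ 𝓕, G = sInf {B | B ∈ 𝓑 ∧ G ≤ B} := by
    rintro G ⟨S, hS, rfl⟩
    exact le_antisymm (le_sInf fun B hB => hB.2)
      (sInf_le_sInf fun B hB => ⟨hS hB, sInf_le hB⟩)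
  set 𝓢 : Set (Submodule K (Fin n → K)) := {B | B ∈ 𝓑 ∧ F ⊔ x ≤ B} with h𝓢
  set F' := sInf 𝓢 with hF'def
  have hF'𝓕 : F' ∈ 𝓕 := ⟨𝓢, fun B hB => hB.1, rfl⟩
  have hxF' : x ≤ F' := le_sInf fun B hB => le_sup_right.trans hB.2
  have hFF' : F < F' := lt_of_le_of_ne (le_sInf fun B hB => le_sup_left.trans hB.2)
    (fun h => hxF (h ▸ hxF'))
  have hcov : ∀ H ∈ 𝓕, F < H → ¬ H < F' := by
    intro H hH hFH hHF'
    by_cases hut : t ≤ finrank K F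
    · -- F is a block; no flat strictly between a block and ⊤
      have hKF := KF F hF
      obtain ⟨T, hTF, hTt⟩ := aux_exists_le F t hut
      have hsub : Set.Subsingleton {B | B ∈ 𝓑 ∧ F ≤ B} := fun B₁ h₁ B₂ h₂ =>
        (hsteiner T hTt).unique ⟨h₁.1, hTF.trans h₁.2⟩ ⟨h₂.1, hTF.trans h₂.2⟩
      have hHtop : H ≠ ⊤ := ne_top_of_lt hHF'
      have hKH := KF H hH
      have hne : {B | B ∈ 𝓑 ∧ H ≤ B}.Nonempty := by
        by_contra h
        rw [Set.not_nonempty_iff_eq_empty] at h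
        rw [h, sInf_empty] at hKH
        exact hHtop hKH
      obtain ⟨B, hB, hHB⟩ := hne
      have hFB : F = B := by
        have hBSF : B ∈ {B | B ∈ 𝓑 ∧ F ≤ B} := ⟨hB, hFH.le.trans hHB⟩
        rw [hsub.eq_singleton_of_mem hBSF, sInf_singleton] at hKF
        exact hKF
      exact absurd (hHB.trans_eq hFB.symm) hFH.not_ge
    · push_neg at hut
      obtain ⟨v, hvH, hvF⟩ := SetLike.exists_of_lt hFH
      have hv0 : v ≠ 0 := fun h => hvF (h ▸ F.zero_mem)
      set y := Submodule.span K {v} with hydef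
      have hy1 : finrank K y = 1 := finrank_span_singleton hv0
      have hyH : y ≤ H := (Submodule.span_singleton_le_iff_mem v H).mpr hvH
      have hyF : ¬ y ≤ F := fun h => hvF (h (Submodule.mem_span_singleton_self v))
      set 𝓢' : Set (Submodule K (Fin n → K)) := {B | B ∈ 𝓑 ∧ F ⊔ y ≤ B} with h𝓢'
      have hss : 𝓢 ⊆ 𝓢' := fun B hB =>
        ⟨hB.1, sup_le (le_sup_left.trans hB.2) (hyH.trans (hHF'.le.trans (sInf_le hB)))⟩
      have hcard : 𝓢'.ncard ≤ 𝓢.ncard := by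
        have h1 : Nat.card {B : Submodule K (Fin n → K) // B ∈ 𝓑 ∧ F ⊔ y ≤ B} =
            Nat.card {B : Submodule K (Fin n → K) // B ∈ 𝓑 ∧ F ⊔ x ≤ B} :=
          steiner_card_S 𝓑 h𝓑' (F ⊔ y) (F ⊔ x)
            (by rw [aux_finrank_sup_one F y hy1 hyF, aux_finrank_sup_one F x hx1 hxF])
            (by rw [aux_finrank_sup_one F y hy1 hyF]; omega)
        have h2 : 𝓢'.ncard = 𝓢.ncard := by
          rw [← Nat.card_coe_set_eq, ← Nat.card_coe_set_eq]
          exact h1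
        exact h2.le
      have heq : 𝓢 = 𝓢' := Set.eq_of_subset_of_ncard_le hss hcard (Set.toFinite _)
      have hle : sInf 𝓢' ≤ H := by
        calc sInf 𝓢' ≤ sInf {B | B ∈ 𝓑 ∧ H ≤ B} :=
              sInf_le_sInf (fun B hB =>
                ⟨hB.1, sup_le (hFH.le.trans hB.2) (hyH.trans hB.2)⟩)
          _ = H := (KF H hH).symm
      rw [← heq] at hle
      exact absurd (hle.trans_lt hHF') (lt_irrefl F')
  refine ⟨F', ⟨hF'𝓕, hxF', hFF', hcov⟩, ?_⟩
  rintro F'' ⟨hF''𝓕, hxF'', hFF'', hcov''⟩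
  have hle : F' ≤ F'' := by
    calc F' = sInf 𝓢 := hF'def
      _ ≤ sInf {B | B ∈ 𝓑 ∧ F'' ≤ B} :=
          sInf_le_sInf (fun B hB => ⟨hB.1, sup_le (hFF''.le.trans hB.2) (hxF''.trans hB.2)⟩)
      _ = F'' := (KF F'' hF''𝓕).symm
  by_contra h
  exact hcov'' F' hF'𝓕 hFF' (hle.lt_of_ne (fun he => h he.symm))
end

section
/- Let M be the q-matroid whose flats are the intersections of the blocks of an S(t,k,n;q) Steiner system (E,𝓑). Then the rank function of M is: r(A) = dim A if dim A ≤ t; r(A) = t if dim A > t and A is contained in some block of 𝓑; and r(A) = t+1 if dim A > t and A is contained in no block. Consequently M is a q-PMD: any two flats of the same rank have the same dimension. -/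
open Module Submodule

set_option linter.unusedSectionVars false
set_option linter.unusedVariables false

section Helpers
variable {K : Type*} [Field K] {V : Type*} [AddCommGroup V] [Module K V] [FiniteDimensional K V]

lemma sup_span_inf_eq_bot {A : Submodule K V} {x : V} (hx : x ∉ A) :
    A ⊓ Submodule.span K {x} = ⊥ := by
  rw [eq_bot_iff]
  rintro y ⟨hyA, hyS⟩
  obtain ⟨c, rfl⟩ := Submodule.mem_span_singleton.mp hyS
  rcases eq_or_ne c 0 with rfl | hc
  · simp
  · exact absurd (by simpa [smul_smul, inv_mul_cancel₀ hc] using A.smul_mem c⁻¹ hyA) hx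

lemma finrank_sup_span_singleton {A : Submodule K V} {x : V} (hx : x ∉ A) :
    finrank K ↥(A ⊔ Submodule.span K {x}) = finrank K A + 1 := by
  have hx0 : x ≠ 0 := fun h => hx (h ▸ A.zero_mem)
  have := Submodule.finrank_sup_add_finrank_inf_eq A (Submodule.span K {x})
  rw [sup_span_inf_eq_bot hx, finrank_bot, finrank_span_singleton hx0] at this
  omega

/-- inside any submodule there is a submodule of any smaller finrank -/
lemma exists_le_finrank_eq (P : Submodule K V) :
    ∀ m, m ≤ finrank K P → ∃ T ≤ P, finrank K ↥T = m := by
  intro m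
  induction m with
  | zero => exact fun _ => ⟨⊥, bot_le, finrank_bot K V⟩
  | succ m ih =>
    intro hm
    obtain ⟨T, hTP, hT⟩ := ih (by omega)
    have hlt : T < P := by
      rcases hTP.lt_or_eq with h | rfl
      · exact h
      · omega
    obtain ⟨x, hxP, hxT⟩ := SetLike.exists_of_lt hlt
    refine ⟨T ⊔ Submodule.span K {x}, sup_le hTP (Submodule.span_le.mpr (by simpa)), ?_⟩
    rw [_root_.finrank_sup_span_singleton hxT, hT]

/-- extend `A` to finrank `m` avoiding `x` -/
lemma exists_avoid_extend {x : V} :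
    ∀ (d : ℕ) (A : Submodule K V) (m : ℕ), m < finrank K V → x ∉ A → finrank K A + d = m →
      ∃ A', A ≤ A' ∧ x ∉ A' ∧ finrank K ↥A' = m := by
  intro d
  induction d with
  | zero => exact fun A m _ hx h => ⟨A, le_rfl, hx, by omega⟩
  | succ d ih =>
    intro A m hm hx h
    have hne : A ⊔ Submodule.span K {x} ≠ ⊤ := by
      intro htop
      have h1 : finrank K ↥(A ⊔ Submodule.span K {x}) = finrank K A + 1 :=
        _root_.finrank_sup_span_singleton hx
      rw [htop, finrank_top] at h1
      omega
    have hlt : A ⊔ Submodule.span K {x} < ⊤ := lt_top_iff_ne_top.mpr hne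
    obtain ⟨y, -, hy⟩ := SetLike.exists_of_lt hlt
    have hyA : y ∉ A := fun h => hy (Submodule.mem_sup_left h)
    have hxA' : x ∉ A ⊔ Submodule.span K {y} := by
      intro hmem
      obtain ⟨a, ha, z, hz, hax⟩ := Submodule.mem_sup.mp hmem
      obtain ⟨c, rfl⟩ := Submodule.mem_span_singleton.mp hz
      rcases eq_or_ne c 0 with rfl | hc
      · exact hx (by rw [← hax]; simpa using ha)
      · apply hy
        have hxa : x - a ∈ A ⊔ Submodule.span K {x} :=
          sub_mem (Submodule.mem_sup_right (Submodule.mem_span_singleton_self x))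
            (Submodule.mem_sup_left ha)
        have : c⁻¹ • (x - a) ∈ A ⊔ Submodule.span K {x} := Submodule.smul_mem _ _ hxa
        have hyeq : c⁻¹ • (x - a) = y := by
          rw [← hax]; rw [show a + c • y - a = c • y by abel]
          rw [smul_smul, inv_mul_cancel₀ hc, one_smul]
        rwa [hyeq] at this
    have := ih (A ⊔ Submodule.span K {y}) m hm hxA'
      (by rw [_root_.finrank_sup_span_singleton hyA]; omega)
    obtain ⟨A', hAA', hxA'', hA'⟩ := this
    exact ⟨A', le_trans le_sup_left hAA', hxA'', hA'⟩

end Helpers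

open Classical in
/-- the level function: finrank for low-dim flats, t for blocks, t+1 for ⊤. -/
noncomputable def lam {K V : Type*} [Field K] [AddCommGroup V] [Module K V]
    (t : ℕ) (F : Submodule K V) : ℕ :=
  if Module.finrank K F < t then Module.finrank K F else if F = ⊤ then t + 1 else t

section Steiner

variable {K : Type*} [Field K] [Fintype K] {n t k : ℕ}
  {𝓑 : Set (Submodule K (Fin n → K))}

lemma finrank_V : finrank K (Fin n → K) = n := Module.finrank_fin_fun K

lemma block_ne_top (h𝓑 : IsSteinerSystem t k 𝓑) (hkn : k < n)
    {B : Submodule K (Fin n → K)} (hB : B ∈ 𝓑) : B ≠ ⊤ := by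
  intro h
  have := h𝓑.2.2.2.1 B hB
  rw [h, finrank_top, finrank_V] at this
  omega

lemma blocks_eq_of_le (h𝓑 : IsSteinerSystem t k 𝓑) {T B B' : Submodule K (Fin n → K)}
    (hT : finrank K T = t)
    (hB : B ∈ 𝓑) (hB' : B' ∈ 𝓑) (h1 : T ≤ B) (h2 : T ≤ B') : B = B' := by
  obtain ⟨B0, -, huniq⟩ := h𝓑.2.2.2.2 T hT
  rw [huniq B ⟨hB, h1⟩, huniq B' ⟨hB', h2⟩]

/-- key lemma: for a (t-1)-dim subspace and x outside it, some block through it avoids x -/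
lemma avoid_block_aux (h𝓑 : IsSteinerSystem t k 𝓑) (hkn : k < n)
    {A : Submodule K (Fin n → K)} {x : (Fin n → K)} (hA : finrank K A = t - 1)
    (hx : x ∉ A) : ∃ B ∈ 𝓑, A ≤ B ∧ x ∉ B := by
  obtain ⟨ht1, htk', hkn', hdim, hcov⟩ := h𝓑
  by_contra hcon
  push_neg at hcon
  have hA' : finrank K ↥(A ⊔ Submodule.span K {x}) = t := by
    rw [_root_.finrank_sup_span_singleton hx, hA]; omega
  obtain ⟨B0, ⟨hB0, hAB0⟩, huniq⟩ := hcov _ hA'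
  have htop : ∀ v : (Fin n → K), v ∈ B0 := by
    intro v
    by_cases hvA : v ∈ A
    · exact le_trans le_sup_left hAB0 hvA
    · have hT : finrank K ↥(A ⊔ Submodule.span K {v}) = t := by
        rw [_root_.finrank_sup_span_singleton hvA, hA]; omega
      obtain ⟨B, ⟨hB, hTB⟩, -⟩ := hcov _ hT
      have hAB : A ≤ B := le_trans le_sup_left hTB
      have hxB : x ∈ B := hcon B hB hAB
      have : B = B0 := huniq B ⟨hB, sup_le hAB
        (Submodule.span_le.mpr (by simpa using hxB))⟩
      exact this ▸ hTB (Submodule.mem_sup_right (Submodule.mem_span_singleton_self v))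
  exact block_ne_top ⟨ht1, htk', hkn', hdim, hcov⟩ hkn hB0 (eq_top_iff.mpr fun v _ => htop v)

/-- general avoid lemma, for any dim < t -/
lemma avoid_block (h𝓑 : IsSteinerSystem t k 𝓑) (htk : t < k) (hkn : k < n)
    {A : Submodule K (Fin n → K)} {x : (Fin n → K)} (hA : finrank K A < t)
    (hx : x ∉ A) : ∃ B ∈ 𝓑, A ≤ B ∧ x ∉ B := by
  have ht1 : t - 1 < finrank K (Fin n → K) := by rw [finrank_V]; omega
  obtain ⟨A'', hAA'', hxA'', hA''⟩ :=
    exists_avoid_extend (t - 1 - finrank K A) A (t - 1) ht1 hx (by omega)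
  obtain ⟨B, hB, hA''B, hxB⟩ := avoid_block_aux h𝓑 hkn hA'' hxA''
  exact ⟨B, hB, le_trans hAA'' hA''B, hxB⟩

/-- subspaces of dim < t are flats -/
lemma lowdim_flat (h𝓑 : IsSteinerSystem t k 𝓑) (htk : t < k) (hkn : k < n)
    {A : Submodule K (Fin n → K)} (hA : finrank K A < t) :
    A ∈ {F : Submodule K (Fin n → K) | ∃ S ⊆ 𝓑, F = sInf S} := by
  refine ⟨{B | B ∈ 𝓑 ∧ A ≤ B}, fun B hB => hB.1, le_antisymm ?_ ?_⟩
  · exact le_sInf fun B hB => hB.2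
  · intro v hv
    by_contra hvA
    obtain ⟨B, hB, hAB, hxB⟩ := avoid_block h𝓑 htk hkn hA hvA
    exact hxB (Submodule.mem_sInf.mp hv B ⟨hB, hAB⟩)

/-- classification of flats -/
lemma flat_classify (h𝓑 : IsSteinerSystem t k 𝓑) {F : Submodule K (Fin n → K)}
    (hF : F ∈ {F : Submodule K (Fin n → K) | ∃ S ⊆ 𝓑, F = sInf S}) :
    finrank K F < t ∨ F ∈ 𝓑 ∨ F = ⊤ := by
  obtain ⟨S, hS, rfl⟩ := hF
  rcases Set.eq_empty_or_nonempty S with rfl | ⟨B0, hB0⟩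
  · right; right; exact sInf_empty
  by_cases hsing : ∀ B ∈ S, B = B0
  · right; left
    have : sInf S = B0 := le_antisymm (sInf_le hB0) (le_sInf fun B hB => (hsing B hB) ▸ le_rfl)
    rw [this]; exact hS hB0
  · push_neg at hsing
    obtain ⟨B1, hB1, hne⟩ := hsing
    left
    have hle : sInf S ≤ B0 ⊓ B1 := le_inf (sInf_le hB0) (sInf_le hB1)
    have hinf : finrank K ↥(B0 ⊓ B1) < t := by
      by_contra hge
      push_neg at hge
      obtain ⟨T, hT, hTrk⟩ := exists_le_finrank_eq (B0 ⊓ B1) t hge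
      exact hne (blocks_eq_of_le h𝓑 hTrk (hS hB1) (hS hB0)
        (le_trans hT inf_le_right) (le_trans hT inf_le_left))
    exact lt_of_le_of_lt (Submodule.finrank_mono hle) hinf

lemma lam_lowdim {F : Submodule K (Fin n → K)} (hF : finrank K F < t) :
    lam t F = finrank K F := by
  rw [lam, if_pos hF]

lemma lam_block (h𝓑 : IsSteinerSystem t k 𝓑) (htk : t < k) (hkn : k < n)
    {B : Submodule K (Fin n → K)} (hB : B ∈ 𝓑) : lam t B = t := by
  rw [lam, if_neg (by rw [h𝓑.2.2.2.1 B hB]; omega), if_neg (block_ne_top h𝓑 hkn hB)]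

lemma lam_top (htk : t < k) (hkn : k < n) : lam t (⊤ : Submodule K (Fin n → K)) = t + 1 := by
  rw [lam, if_neg (by rw [finrank_top, finrank_V]; omega), if_pos rfl]

/-- covers increase lam by exactly 1 -/
lemma lam_cover (h𝓑 : IsSteinerSystem t k 𝓑) (htk : t < k) (hkn : k < n)
    {F F' : Submodule K (Fin n → K)}
    (hF : F ∈ {F : Submodule K (Fin n → K) | ∃ S ⊆ 𝓑, F = sInf S})
    (hF' : F' ∈ {F : Submodule K (Fin n → K) | ∃ S ⊆ 𝓑, F = sInf S})
    (hcov : FlatCovers {F : Submodule K (Fin n → K) | ∃ S ⊆ 𝓑, F = sInf S} F F') :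
    lam t F' = lam t F + 1 := by
  obtain ⟨hlt, hmax⟩ := hcov
  rcases flat_classify h𝓑 hF with hFlow | hFblk | rfl
  · -- F has dim < t
    obtain ⟨x, hxF', hxF⟩ := SetLike.exists_of_lt hlt
    set G := F ⊔ Submodule.span K {x} with hG
    have hGrk : finrank K ↥G = finrank K F + 1 := _root_.finrank_sup_span_singleton hxF
    have hGF' : G ≤ F' := sup_le hlt.le (Submodule.span_le.mpr (by simpa using hxF'))
    have hFG : F < G := lt_of_le_of_ne le_sup_left
      (fun h => hxF (h ▸ Submodule.mem_sup_right (Submodule.mem_span_singleton_self x)))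
    rcases lt_or_eq_of_le (Nat.succ_le_of_lt hFlow) with hlt2 | heq
    · -- finrank F + 1 < t : G is a flat, so F' = G
      have hGflat := lowdim_flat h𝓑 htk hkn (𝓑 := 𝓑) (A := G) (by omega)
      have hnGF' : ¬ G < F' := hmax G hGflat hFG
      have hF'G : F' = G := by
        rcases lt_or_eq_of_le hGF' with h | h
        · exact absurd h hnGF'
        · exact h.symm
      rw [hF'G, lam_lowdim (by omega : finrank K ↥G < t), lam_lowdim hFlow, hGrk]
    · -- finrank F + 1 = t : G is t-dim, F' is the unique block through G
      have hGt : finrank K ↥G = t := by omega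
      obtain ⟨B, ⟨hB, hGB⟩, huniq⟩ := h𝓑.2.2.2.2 G hGt
      have hF'rk : t ≤ finrank K F' := hGt ▸ Submodule.finrank_mono hGF'
      rcases flat_classify h𝓑 hF' with h1 | h2 | rfl
      · omega
      · have : F' = B := huniq F' ⟨h2, hGF'⟩
        rw [this, lam_block h𝓑 htk hkn hB, lam_lowdim hFlow]; omega
      · exfalso
        have hBrk : finrank K B = k := h𝓑.2.2.2.1 B hB
        have hFB : F < B := lt_of_lt_of_le hFG (hGB)
        have hBtop : B < ⊤ := lt_top_iff_ne_top.mpr (block_ne_top h𝓑 hkn hB)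
        exact hmax B ⟨{B}, by simpa using hB, by simp⟩ hFB hBtop
  · -- F is a block: F' must be ⊤
    have hFrk : finrank K F = k := h𝓑.2.2.2.1 F hFblk
    rcases flat_classify h𝓑 hF' with h1 | h2 | rfl
    · have := Submodule.finrank_mono hlt.le; omega
    · exfalso
      obtain ⟨T, hT, hTrk⟩ := exists_le_finrank_eq F t (by omega)
      exact hlt.ne (blocks_eq_of_le h𝓑 hTrk hFblk h2 hT (le_trans hT hlt.le))
    · rw [lam_top htk hkn (K := K) (n := n) (k := k), lam_block h𝓑 htk hkn hFblk]
  · exact absurd hlt not_top_lt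

lemma lam_chain (h𝓑 : IsSteinerSystem t k 𝓑) (htk : t < k) (hkn : k < n)
    {m : ℕ} {a b : Submodule K (Fin n → K)} {c : Fin (m + 1) → Submodule K (Fin n → K)}
    (h : IsMaxChainTo {F : Submodule K (Fin n → K) | ∃ S ⊆ 𝓑, F = sInf S} a b m c) :
    lam t b = lam t a + m := by
  obtain ⟨hmem, hsm, h0, hlast, hcov⟩ := h
  have key : ∀ j, ∀ hj : j ≤ m, lam t (c ⟨j, Nat.lt_succ_of_le hj⟩) = lam t a + j := by
    intro j
    induction j with
    | zero =>
      intro hj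
      have e : (⟨0, Nat.lt_succ_of_le hj⟩ : Fin (m + 1)) = 0 := by ext; simp
      rw [e, h0]; omega
    | succ j ih =>
      intro hj
      have hjm : j < m := hj
      have hc := lam_cover h𝓑 htk hkn (hmem ((⟨j, hjm⟩ : Fin m).castSucc))
        (hmem ((⟨j, hjm⟩ : Fin m).succ)) (hcov ⟨j, hjm⟩)
      have e1 : ((⟨j, hjm⟩ : Fin m).castSucc) = (⟨j, Nat.lt_succ_of_le hjm.le⟩ : Fin (m + 1)) := by
        ext; simp
      have e2 : ((⟨j, hjm⟩ : Fin m).succ) = (⟨j + 1, Nat.lt_succ_of_le hj⟩ : Fin (m + 1)) := by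
        ext; simp
      rw [e1, e2] at hc
      rw [hc, ih hjm.le]; omega
  have := key m le_rfl
  have e : (⟨m, Nat.lt_succ_of_le le_rfl⟩ : Fin (m + 1)) = Fin.last m := by ext; simp
  rw [e, hlast] at this
  exact this

lemma finrank_eq_of_lam_eq (h𝓑 : IsSteinerSystem t k 𝓑) (htk : t < k) (hkn : k < n)
    {F₁ F₂ : Submodule K (Fin n → K)}
    (hF₁ : F₁ ∈ {F : Submodule K (Fin n → K) | ∃ S ⊆ 𝓑, F = sInf S})
    (hF₂ : F₂ ∈ {F : Submodule K (Fin n → K) | ∃ S ⊆ 𝓑, F = sInf S})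
    (h : lam t F₁ = lam t F₂) : finrank K F₁ = finrank K F₂ := by
  rcases flat_classify h𝓑 hF₁ with h1 | h1 | h1 <;>
    rcases flat_classify h𝓑 hF₂ with h2 | h2 | h2
  · rwa [lam_lowdim h1, lam_lowdim h2] at h
  · rw [lam_lowdim h1, lam_block h𝓑 htk hkn h2] at h; omega
  · rw [lam_lowdim h1, h2, lam_top htk hkn] at h; omega
  · rw [lam_block h𝓑 htk hkn h1, lam_lowdim h2] at h; omega
  · rw [h𝓑.2.2.2.1 F₁ h1, h𝓑.2.2.2.1 F₂ h2]
  · rw [lam_block h𝓑 htk hkn h1, h2, lam_top htk hkn] at h; omega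
  · rw [h1, lam_top htk hkn, lam_lowdim h2] at h; omega
  · rw [h1, lam_top htk hkn, lam_block h𝓑 htk hkn h2] at h; omega
  · rw [h1, h2]

end Steiner


/-- For the q-matroid whose flats 𝓕 are the intersections of the
blocks of an S(t,k,n;q) Steiner system (t < k < n), the rank function (length of
a maximal chain of flats from the minimal flat to the minimal flat containing A)
satisfies: r(A) = dim A if dim A ≤ t; r(A) = t if dim A > t and A lies in a
block; r(A) = t+1 if dim A > t and A lies in no block. Consequently the matroid
is a q-PMD: flats of equal rank have equal dimension. -/
theorem stmt11 {K : Type*} [Field K] [Fintype K] {n t k : ℕ}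
    (𝓑 : Set (Submodule K (Fin n → K))) (h𝓑 : IsSteinerSystem t k 𝓑)
    (htk : t < k) (hkn : k < n)
    (C : Submodule K (Fin n → K) → Submodule K (Fin n → K))
    (hC : ∀ A : Submodule K (Fin n → K),
      C A ∈ {F | ∃ S ⊆ 𝓑, F = sInf S} ∧ A ≤ C A ∧
      ∀ G ∈ {F : Submodule K (Fin n → K) | ∃ S ⊆ 𝓑, F = sInf S}, A ≤ G → C A ≤ G)
    (r : Submodule K (Fin n → K) → ℕ)
    (hr : ∀ A : Submodule K (Fin n → K),
      ∃ c : Fin (r A + 1) → Submodule K (Fin n → K),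
        IsMaxChainTo {F | ∃ S ⊆ 𝓑, F = sInf S} (C ⊥) (C A) (r A) c) :
    (∀ A : Submodule K (Fin n → K),
      (Module.finrank K A ≤ t → r A = Module.finrank K A) ∧
      (t < Module.finrank K A → (∃ B ∈ 𝓑, A ≤ B) → r A = t) ∧
      (t < Module.finrank K A → (¬ ∃ B ∈ 𝓑, A ≤ B) → r A = t + 1)) ∧
    (∀ F₁ ∈ {F : Submodule K (Fin n → K) | ∃ S ⊆ 𝓑, F = sInf S},
     ∀ F₂ ∈ {F : Submodule K (Fin n → K) | ∃ S ⊆ 𝓑, F = sInf S},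
      r F₁ = r F₂ → Module.finrank K F₁ = Module.finrank K F₂) := by
  have ht1 : 1 ≤ t := h𝓑.1
  -- the closure of ⊥ is ⊥
  have hbotflat : (⊥ : Submodule K (Fin n → K)) ∈
      {F : Submodule K (Fin n → K) | ∃ S ⊆ 𝓑, F = sInf S} :=
    lowdim_flat h𝓑 htk hkn (by rw [finrank_bot]; exact ht1)
  have hCbot : C ⊥ = ⊥ :=
    le_antisymm ((hC ⊥).2.2 ⊥ hbotflat le_rfl) (hC ⊥).2.1
  -- r A = lam t (C A)
  have hrlam : ∀ A : Submodule K (Fin n → K), r A = lam t (C A) := by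
    intro A
    obtain ⟨c, hc⟩ := hr A
    have := lam_chain h𝓑 htk hkn hc
    have hlambot : lam t (⊥ : Submodule K (Fin n → K)) = 0 := by
      rw [lam_lowdim (F := (⊥ : Submodule K (Fin n → K))) (by rw [finrank_bot]; exact ht1)]
      exact finrank_bot K _
    rw [hCbot, hlambot] at this
    omega
  -- closure is identity on flats
  have hCflat : ∀ F ∈ {F : Submodule K (Fin n → K) | ∃ S ⊆ 𝓑, F = sInf S}, C F = F :=
    fun F hF => le_antisymm ((hC F).2.2 F hF le_rfl) (hC F).2.1
  have hblockflat : ∀ B ∈ 𝓑, B ∈ {F : Submodule K (Fin n → K) | ∃ S ⊆ 𝓑, F = sInf S} :=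
    fun B hB => ⟨{B}, Set.singleton_subset_iff.mpr hB, sInf_singleton.symm⟩
  constructor
  · intro A
    refine ⟨?_, ?_, ?_⟩
    · -- dim A ≤ t
      intro hA
      rcases lt_or_eq_of_le hA with hlt | heq
      · have hAflat := lowdim_flat h𝓑 htk hkn hlt
        rw [hrlam A, hCflat A hAflat, lam_lowdim hlt]
      · obtain ⟨B, ⟨hB, hAB⟩, -⟩ := h𝓑.2.2.2.2 A heq
        have hCAle : C A ≤ B := (hC A).2.2 B (hblockflat B hB) hAB
        have hdimCA : t ≤ finrank K (C A) := heq ▸ Submodule.finrank_mono (hC A).2.1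
        rcases flat_classify h𝓑 (hC A).1 with h1 | h1 | h1
        · omega
        · rw [hrlam A, lam_block h𝓑 htk hkn h1]; omega
        · exfalso
          exact block_ne_top h𝓑 hkn hB (top_le_iff.mp (h1 ▸ hCAle))
    · -- dim A > t, A in a block
      intro hA ⟨B, hB, hAB⟩
      have hCAle : C A ≤ B := (hC A).2.2 B (hblockflat B hB) hAB
      have hdimCA : t < finrank K (C A) := lt_of_lt_of_le hA (Submodule.finrank_mono (hC A).2.1)
      rcases flat_classify h𝓑 (hC A).1 with h1 | h1 | h1
      · omega
      · rw [hrlam A, lam_block h𝓑 htk hkn h1]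
      · exact absurd (top_le_iff.mp (h1 ▸ hCAle)) (block_ne_top h𝓑 hkn hB)
    · -- dim A > t, A in no block
      intro hA hnoB
      have hdimCA : t < finrank K (C A) := lt_of_lt_of_le hA (Submodule.finrank_mono (hC A).2.1)
      rcases flat_classify h𝓑 (hC A).1 with h1 | h1 | h1
      · omega
      · exact absurd ⟨C A, h1, (hC A).2.1⟩ hnoB
      · rw [hrlam A, h1, lam_top htk hkn]
  · intro F₁ hF₁ F₂ hF₂ hreq
    rw [hrlam F₁, hrlam F₂, hCflat F₁ hF₁, hCflat F₂ hF₂] at hreq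
    exact finrank_eq_of_lam_eq h𝓑 htk hkn hF₁ hF₂ hreq
end

section
/- Let 𝓑 be the blocks of a q-Steiner system S(t,k,n;q) and let 𝓘 be the set of (t+1)-dimensional subspaces of E = F_q^n contained in no block. Then (E,𝓘) is a t-(n, t+1, λ; q) subspace design with λ = (q^{n−t} − q^{k−t})/(q−1), i.e. every t-dimensional subspace of E is contained in exactly (q^{n−t} − q^{k−t})/(q−1) members of 𝓘. -/
open Module Submodule

section Aux

variable {K : Type*} [Field K] [Fintype K] {M : Type*} [AddCommGroup M] [Module K M]
  [Fintype M]

instance : Finite (Submodule K M) :=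
  Finite.of_injective (fun p : Submodule K M => (p : Set M)) SetLike.coe_injective

/-- Nonzero-coset counting: card of W \ T plus card T equals card W. -/
lemma card_mem_diff {T W : Submodule K M} (h : T ≤ W) :
    Nat.card {w : M // w ∈ W ∧ w ∉ T} + Nat.card T = Nat.card W := by
  classical
  have e1 : {x : W // (x : M) ∈ T} ≃ T :=
    { toFun := fun x => ⟨(x : M), x.2⟩
      invFun := fun y => ⟨⟨(y : M), h y.2⟩, y.2⟩
      left_inv := fun x => by ext; rfl
      right_inv := fun y => by ext; rfl }
  have e2 : {x : W // ¬ (x : M) ∈ T} ≃ {w : M // w ∈ W ∧ w ∉ T} :=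
    { toFun := fun x => ⟨(x : M), (x : W).2, x.2⟩
      invFun := fun w => ⟨⟨w.1, w.2.1⟩, w.2.2⟩
      left_inv := fun x => by ext; rfl
      right_inv := fun w => by ext; rfl }
  have e3 : {x : W // (x : M) ∈ T} ⊕ {x : W // ¬ (x : M) ∈ T} ≃ W :=
    Equiv.sumCompl _
  have := Nat.card_congr e3
  rw [Nat.card_sum, Nat.card_congr e1, Nat.card_congr e2] at this
  omega

/-- card of a finite module as power of card K. -/
lemma card_submodule (p : Submodule K M) :
    Nat.card p = Fintype.card K ^ finrank K p := by
  classical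
  rw [Nat.card_eq_fintype_card]
  exact card_eq_pow_finrank

/-- Main counting lemma: the number of subspaces of dimension t+1 between T and W. -/
lemma card_intermediate [FiniteDimensional K M] {T W : Submodule K M} (hTW : T ≤ W) :
    Nat.card {I : Submodule K M // finrank K I = finrank K T + 1 ∧ T ≤ I ∧ I ≤ W}
      * (Fintype.card K - 1) + 1
      = Fintype.card K ^ (finrank K W - finrank K T) := by
  classical
  set q := Fintype.card K with hq
  set t := finrank K T with ht
  set d := finrank K W with hd
  have htd : t ≤ d := Submodule.finrank_mono hTW
  have hq2 : 2 ≤ q := Fintype.one_lt_card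
  -- the set of intermediate subspaces
  set S := {I : Submodule K M // finrank K I = t + 1 ∧ T ≤ I ∧ I ≤ W}
  -- key: for w ∈ W \ T, T ⊔ span{w} is in S
  have key : ∀ w : M, w ∈ W → w ∉ T →
      finrank K (T ⊔ (K ∙ w) : Submodule K M) = t + 1 ∧ T ≤ T ⊔ (K ∙ w) ∧
        (T ⊔ (K ∙ w) : Submodule K M) ≤ W := by
    intro w hwW hwT
    have hw0 : w ≠ 0 := fun h => hwT (h ▸ T.zero_mem)
    have hle : (T ⊔ (K ∙ w) : Submodule K M) ≤ W :=
      sup_le hTW ((Submodule.span_singleton_le_iff_mem w W).mpr hwW)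
    have h1 : finrank K (T ⊔ (K ∙ w) : Submodule K M) ≤ t + 1 := by
      calc finrank K (T ⊔ (K ∙ w) : Submodule K M)
          ≤ finrank K T + finrank K (K ∙ w) :=
            Submodule.finrank_add_le_finrank_add_finrank _ _
        _ = t + 1 := by rw [finrank_span_singleton hw0, ht]
    have h2 : t < finrank K (T ⊔ (K ∙ w) : Submodule K M) := by
      have hlt : T < T ⊔ (K ∙ w) := by
        refine lt_of_le_of_ne le_sup_left ?_
        intro hEq
        exact hwT (hEq ▸ Submodule.mem_sup_right (Submodule.mem_span_singleton_self w))
      exact ht ▸ Submodule.finrank_lt_finrank_of_lt hlt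
    exact ⟨le_antisymm h1 h2, le_sup_left, hle⟩
  -- key2: if I ∈ S and w ∈ I \ T, then T ⊔ span{w} = I
  have key2 : ∀ I : S, ∀ w : M, w ∈ I.1 → w ∉ T → T ⊔ (K ∙ w) = I.1 := by
    intro I w hwI hwT
    have hle : T ⊔ (K ∙ w) ≤ I.1 :=
      sup_le I.2.2.1 ((Submodule.span_singleton_le_iff_mem w I.1).mpr hwI)
    exact Submodule.eq_of_le_of_finrank_eq hle
      (by rw [(key w (I.2.2.2 hwI) hwT).1, I.2.1])
  -- fiber map
  let f : {w : M // w ∈ W ∧ w ∉ T} → S := fun w =>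
    ⟨T ⊔ (K ∙ w.1), (key w.1 w.2.1 w.2.2).1, (key w.1 w.2.1 w.2.2).2⟩
  have fiber_equiv : ∀ I : S, {w : {w : M // w ∈ W ∧ w ∉ T} // f w = I} ≃
      {w : M // w ∈ I.1 ∧ w ∉ T} := by
    intro I
    refine
      { toFun := fun w => ⟨w.1.1, ?_, w.1.2.2⟩
        invFun := fun w => ⟨⟨w.1, I.2.2.2 w.2.1, w.2.2⟩, ?_⟩
        left_inv := fun w => by ext; rfl
        right_inv := fun w => by ext; rfl }
    · have := w.2
      have hmem : w.1.1 ∈ (f w.1).1 :=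
        Submodule.mem_sup_right (Submodule.mem_span_singleton_self w.1.1)
      rw [this] at hmem
      exact hmem
    · exact Subtype.ext (key2 I w.1 w.2.1 w.2.2)
  -- count
  letI : Fintype S := Fintype.ofFinite S
  have hsigma : Nat.card {w : M // w ∈ W ∧ w ∉ T}
      = Nat.card S * (q ^ (t + 1) - q ^ t) := by
    have e : (Σ I : S, {w : {w : M // w ∈ W ∧ w ∉ T} // f w = I})
        ≃ {w : M // w ∈ W ∧ w ∉ T} := Equiv.sigmaFiberEquiv f
    rw [← Nat.card_congr e]
    have hfc : ∀ I : S, Nat.card {w : {w : M // w ∈ W ∧ w ∉ T} // f w = I}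
        = q ^ (t + 1) - q ^ t := by
      intro I
      rw [Nat.card_congr (fiber_equiv I)]
      have := card_mem_diff (M := M) I.2.2.1
      rw [card_submodule, card_submodule, I.2.1, ← ht, ← hq] at this
      omega
    classical
    letI : ∀ I : S, Fintype {w : {w : M // w ∈ W ∧ w ∉ T} // f w = I} :=
      fun I => Fintype.ofFinite _
    letI : Fintype {w : M // w ∈ W ∧ w ∉ T} := Fintype.ofFinite _
    rw [Nat.card_eq_fintype_card, Fintype.card_sigma]
    simp only [← Nat.card_eq_fintype_card, hfc]
    rw [Finset.sum_const, Finset.card_univ, smul_eq_mul, Nat.card_eq_fintype_card]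
  have hWT : Nat.card {w : M // w ∈ W ∧ w ∉ T} + q ^ t = q ^ d := by
    have := card_mem_diff (M := M) hTW
    rw [card_submodule, card_submodule, ← ht, ← hd, ← hq] at this
    omega
  -- arithmetic
  set a := Nat.card S with ha
  have h1 : a * (q ^ (t + 1) - q ^ t) + q ^ t = q ^ d := by rw [← hsigma]; exact hWT
  have hqt : q ^ (t + 1) - q ^ t = q ^ t * (q - 1) := by
    rw [pow_succ, Nat.mul_sub, Nat.mul_one]
  have hd' : q ^ d = q ^ (d - t) * q ^ t := by
    rw [← pow_add, Nat.sub_add_cancel htd]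
  rw [hqt, hd'] at h1
  have h2 : (a * (q - 1) + 1) * q ^ t = q ^ (d - t) * q ^ t := by
    rw [← h1]; ring
  have hqt0 : 0 < q ^ t := pow_pos (by omega) t
  exact Nat.eq_of_mul_eq_mul_right hqt0 h2

end Aux


/-- The (t+1)-dimensional subspaces contained in no block of a
q-Steiner system S(t,k,n;q) form a t-(n, t+1, λ; q) subspace design with
λ = (q^{n−t} − q^{k−t})/(q−1): every t-dimensional subspace is contained in
exactly λ of them.  (Stated multiplicatively: λ·(q−1) = q^{n−t} − q^{k−t}.) -/
theorem stmt13 {K : Type*} [Field K] [Fintype K] {q n t k : ℕ}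
    (hq : Fintype.card K = q)
    (𝓑 : Set (Submodule K (Fin n → K))) (h𝓑 : IsSteinerSystem t k 𝓑)
    (htk : t < k) (hkn : k < n) :
    let 𝓘 : Set (Submodule K (Fin n → K)) :=
      {I | Module.finrank K I = t + 1 ∧ ¬ ∃ B ∈ 𝓑, I ≤ B}
    ∀ T : Submodule K (Fin n → K), Module.finrank K T = t →
      (Nat.card {I : Submodule K (Fin n → K) // I ∈ 𝓘 ∧ T ≤ I} : ℤ) * (q - 1) =
        (q : ℤ) ^ (n - t) - (q : ℤ) ^ (k - t) := by
  classical
  intro 𝓘 T hT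
  obtain ⟨-, -, -, hdim, hcover⟩ := h𝓑
  obtain ⟨B, ⟨hB𝓑, hTB⟩, hBuniq⟩ := hcover T hT
  have hBk : Module.finrank K B = k := hdim B hB𝓑
  have hq2 : 2 ≤ q := hq ▸ Fintype.one_lt_card
  -- the three counts
  have hAll := card_intermediate (M := Fin n → K) (T := T) (W := ⊤) le_top
  have hB' := card_intermediate (M := Fin n → K) (T := T) (W := B) hTB
  rw [hT, hq, finrank_top, Module.finrank_fin_fun] at hAll
  rw [hT, hq, hBk] at hB'
  -- split the "all" count into target + in-block
  set A := {I : Submodule K (Fin n → K) //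
    finrank K I = t + 1 ∧ T ≤ I ∧ I ≤ (⊤ : Submodule K (Fin n → K))} with hA
  set SB := {I : Submodule K (Fin n → K) // finrank K I = t + 1 ∧ T ≤ I ∧ I ≤ B} with hSB
  set Tgt := {I : Submodule K (Fin n → K) // I ∈ 𝓘 ∧ T ≤ I} with hTgt
  have hsplit : Nat.card A = Nat.card Tgt + Nat.card SB := by
    have e0 : {x : A // x.1 ≤ B} ⊕ {x : A // ¬ x.1 ≤ B} ≃ A := Equiv.sumCompl _
    have e1 : {x : A // x.1 ≤ B} ≃ SB :=
      { toFun := fun x => ⟨x.1.1, x.1.2.1, x.1.2.2.1, x.2⟩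
        invFun := fun y => ⟨⟨y.1, y.2.1, y.2.2.1, le_top⟩, y.2.2.2⟩
        left_inv := fun x => by ext; rfl
        right_inv := fun y => by ext; rfl }
    have e2 : {x : A // ¬ x.1 ≤ B} ≃ Tgt := by
      refine
        { toFun := fun x => ⟨x.1.1, ⟨x.1.2.1, ?_⟩, x.1.2.2.1⟩
          invFun := fun y => ⟨⟨y.1, y.2.1.1, y.2.2, le_top⟩, ?_⟩
          left_inv := fun x => by ext; rfl
          right_inv := fun y => by ext; rfl }
      · rintro ⟨B', hB', hIB'⟩
        have hTB' : T ≤ B' := le_trans x.1.2.2.1 hIB'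
        have : B' = B := hBuniq B' ⟨hB', hTB'⟩
        exact x.2 (this ▸ hIB')
      · intro h
        exact y.2.1.2 ⟨B, hB𝓑, h⟩
    have := Nat.card_congr e0
    rw [Nat.card_sum, Nat.card_congr e1, Nat.card_congr e2] at this
    omega
  -- arithmetic over ℤ
  have h1 : ((Nat.card A : ℤ)) * ((q : ℤ) - 1) + 1 = (q : ℤ) ^ (n - t) := by
    have := congrArg (Nat.cast : ℕ → ℤ) hAll
    push_cast [Nat.cast_sub (by omega : 1 ≤ q)] at this
    linarith
  have h2 : ((Nat.card SB : ℤ)) * ((q : ℤ) - 1) + 1 = (q : ℤ) ^ (k - t) := by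
    have := congrArg (Nat.cast : ℕ → ℤ) hB'
    push_cast [Nat.cast_sub (by omega : 1 ≤ q)] at this
    linarith
  have h3 : (Nat.card Tgt : ℤ) + Nat.card SB = Nat.card A := by
    exact_mod_cast congrArg (Nat.cast : ℕ → ℤ) hsplit.symm
  linear_combination h1 - h2 + ((q : ℤ) - 1) * h3
end

section
/- Let 𝓑 be the blocks of a q-Steiner system S(t,k,n;q) and let 𝓒_{t+1} be the set of (t+1)-dimensional subspaces of E = F_q^n contained in some block of 𝓑. Then (E, 𝓒_{t+1}) is a t-(n, t+1, λ; q) subspace design with λ = [k−t choose 1]_q = (q^{k−t} − 1)/(q−1). -/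
open Module

/-- Counting points of projective space over a finite field:
`|ℙ K V| * (|K| - 1) = |V| - 1`. -/
lemma projCard {K V : Type*} [Field K] [Fintype K] [AddCommGroup V] [Module K V]
    [Fintype V] :
    Nat.card (Projectivization K V) * (Fintype.card K - 1) = Fintype.card V - 1 := by
  classical
  have e : Projectivization K V × Kˣ ≃ {v : V // v ≠ 0} := by
    refine Equiv.ofBijective
      (fun p => ⟨(p.2 : K) • p.1.rep, smul_ne_zero (Units.ne_zero _) p.1.rep_nonzero⟩) ⟨?_, ?_⟩
    · rintro ⟨p, a⟩ ⟨r, b⟩ hab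
      have h : (a : K) • p.rep = (b : K) • r.rep := congrArg Subtype.val hab
      have hpr : p = r := by
        have hmk : Projectivization.mk K p.rep p.rep_nonzero =
            Projectivization.mk K r.rep r.rep_nonzero := by
          rw [Projectivization.mk_eq_mk_iff]
          refine ⟨a⁻¹ * b, ?_⟩
          rw [Units.smul_def, Units.val_mul, mul_smul]
          rw [← h, ← mul_smul, Units.inv_mul, one_smul]
        rwa [Projectivization.mk_rep, Projectivization.mk_rep] at hmk
      subst hpr
      have hab' : ((a : K) - (b : K)) • p.rep = 0 := by
        rw [sub_smul, h, sub_self]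
      have : (a : K) = (b : K) := by
        rcases smul_eq_zero.mp hab' with h' | h'
        · exact sub_eq_zero.mp h'
        · exact absurd h' p.rep_nonzero
      exact Prod.ext rfl (Units.ext this)
    · rintro ⟨v, hv⟩
      obtain ⟨a, ha⟩ := Projectivization.exists_smul_eq_mk_rep K v hv
      refine ⟨⟨Projectivization.mk K v hv, a⁻¹⟩, ?_⟩
      ext
      simp only
      rw [← ha]
      simp [Units.smul_def, smul_smul]
  have h1 : Nat.card {v : V // v ≠ 0} = Fintype.card V - 1 := by
    rw [Nat.card_eq_fintype_card]
    have : Fintype.card {v : V // v = 0} = 1 := Fintype.card_subtype_eq (0 : V)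
    have hc := Fintype.card_subtype_compl (fun v : V => v = 0)
    rw [this] at hc
    convert hc using 2
  have h2 : Nat.card (Projectivization K V × Kˣ) = Nat.card {v : V // v ≠ 0} :=
    Nat.card_congr e
  rw [Nat.card_prod, Nat.card_eq_fintype_card (α := Kˣ), Fintype.card_units] at h2
  exact h2.trans h1

/-- Rank–nullity for the image of a submodule `X ⊇ T` in the quotient by `T`. -/
lemma rankMapMkQ {K V : Type*} [Field K] [AddCommGroup V] [Module K V]
    [FiniteDimensional K V] (T X : Submodule K V) (h : T ≤ X) :
    finrank K (X.map T.mkQ) + finrank K T = finrank K X := by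
  have hr : LinearMap.range (T.mkQ.comp X.subtype) = X.map T.mkQ := by
    rw [LinearMap.range_comp, Submodule.range_subtype]
  have hk : LinearMap.ker (T.mkQ.comp X.subtype) = T.comap X.subtype := by
    rw [LinearMap.ker_comp, Submodule.ker_mkQ]
  have hrn := LinearMap.finrank_range_add_finrank_ker (T.mkQ.comp X.subtype)
  rw [hr, hk, (Submodule.comapSubtypeEquivOfLe h).finrank_eq] at hrn
  exact hrn

/-- The (t+1)-dimensional subspaces contained in some block of a
q-Steiner system S(t,k,n;q) form a t-(n, t+1, λ; q) subspace design with
λ = [k−t choose 1]_q = (q^{k−t} − 1)/(q−1).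
(Stated multiplicatively: λ·(q−1) = q^{k−t} − 1.) -/
theorem stmt14 {K : Type*} [Field K] [Fintype K] {q n t k : ℕ}
    (hq : Fintype.card K = q)
    (𝓑 : Set (Submodule K (Fin n → K))) (h𝓑 : IsSteinerSystem t k 𝓑)
    (htk : t < k) (hkn : k < n) :
    let 𝓒 : Set (Submodule K (Fin n → K)) :=
      {C | Module.finrank K C = t + 1 ∧ ∃ B ∈ 𝓑, C ≤ B}
    ∀ T : Submodule K (Fin n → K), Module.finrank K T = t →
      (Nat.card {C : Submodule K (Fin n → K) // C ∈ 𝓒 ∧ T ≤ C} : ℤ) * (q - 1) =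
        (q : ℤ) ^ (k - t) - 1 := by
  classical
  intro 𝓒 T hT
  obtain ⟨B, ⟨hB𝓑, hTB⟩, hBuniq⟩ := h𝓑.2.2.2.2 T hT
  have hBk : finrank K B = k := h𝓑.2.2.2.1 B hB𝓑
  set W : Submodule K ((Fin n → K) ⧸ T) := B.map T.mkQ with hWdef
  have hWrank : finrank K W = k - t := by
    have h := rankMapMkQ T B hTB
    rw [hT, hBk] at h
    rw [hWdef]
    omega
  -- characterize the relevant C's
  have key : ∀ C : Submodule K (Fin n → K),
      (C ∈ 𝓒 ∧ T ≤ C) ↔ (finrank K C = t + 1 ∧ T ≤ C ∧ C ≤ B) := by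
    intro C
    constructor
    · rintro ⟨⟨hC, B', hB', hCB'⟩, hTC⟩
      have : B' = B := hBuniq B' ⟨hB', hTC.trans hCB'⟩
      exact ⟨hC, hTC, this ▸ hCB'⟩
    · rintro ⟨h1, h2, h3⟩
      exact ⟨⟨h1, B, hB𝓑, h3⟩, h2⟩
  -- first equivalence: to 1-dim subspaces of the quotient contained in W
  let e1 : {C : Submodule K (Fin n → K) // C ∈ 𝓒 ∧ T ≤ C} ≃
      {D : Submodule K ((Fin n → K) ⧸ T) // finrank K D = 1 ∧ D ≤ W} :=
    { toFun := fun C => ⟨C.1.map T.mkQ, by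
        obtain ⟨h1, h2, h3⟩ := (key C.1).mp C.2
        refine ⟨?_, Submodule.map_mono h3⟩
        have := rankMapMkQ T C.1 h2
        omega⟩
      invFun := fun D => ⟨D.1.comap T.mkQ, by
        obtain ⟨h1, h2⟩ := D.2
        have hTle : T ≤ D.1.comap T.mkQ := by
          intro x hx
          simp only [Submodule.mem_comap]
          rw [show T.mkQ x = 0 from (Submodule.Quotient.mk_eq_zero T).mpr hx]
          exact D.1.zero_mem
        have hCB : D.1.comap T.mkQ ≤ B := by
          calc D.1.comap T.mkQ ≤ W.comap T.mkQ := Submodule.comap_mono h2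
            _ = B := by
                rw [hWdef, Submodule.comap_map_eq, Submodule.ker_mkQ,
                  sup_eq_left.mpr hTB]
        refine (key _).mpr ⟨?_, hTle, hCB⟩
        have h4 := rankMapMkQ T (D.1.comap T.mkQ) hTle
        rw [Submodule.map_comap_eq_of_surjective (Submodule.mkQ_surjective T)] at h4
        omega⟩
      left_inv := fun C => by
        ext1
        simp only
        rw [Submodule.comap_map_eq, Submodule.ker_mkQ,
          sup_eq_left.mpr ((key C.1).mp C.2).2.1]
      right_inv := fun D => by
        ext1
        simp only
        exact Submodule.map_comap_eq_of_surjective (Submodule.mkQ_surjective T) _ }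
  -- second equivalence: to 1-dim subspaces of W
  let e2 : {D : Submodule K ((Fin n → K) ⧸ T) // finrank K D = 1 ∧ D ≤ W} ≃
      {D' : Submodule K W // finrank K D' = 1} :=
    { toFun := fun D => ⟨D.1.comap W.subtype, by
        rw [(Submodule.comapSubtypeEquivOfLe D.2.2).finrank_eq]; exact D.2.1⟩
      invFun := fun D' => ⟨D'.1.map W.subtype,
        ⟨by rw [Submodule.finrank_map_subtype_eq]; exact D'.2,
         Submodule.map_subtype_le _ _⟩⟩
      left_inv := fun D => by
        ext1
        simp only
        rw [Submodule.map_comap_subtype, inf_eq_right.mpr D.2.2]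
      right_inv := fun D' => by
        ext1
        simp only
        rw [Submodule.comap_map_eq, Submodule.ker_subtype, sup_bot_eq] }
  -- third: to the projectivization of W
  have hcard : Nat.card {C : Submodule K (Fin n → K) // C ∈ 𝓒 ∧ T ≤ C} =
      Nat.card (Projectivization K W) :=
    Nat.card_congr ((e1.trans e2).trans (Projectivization.equivSubmodule K W).symm)
  letI : Fintype W := Fintype.ofFinite W
  have hproj := projCard (K := K) (V := W)
  rw [card_eq_pow_finrank (K := K) (V := W), hWrank, hq] at hproj
  have hq2 : 2 ≤ q := hq ▸ Fintype.one_lt_card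
  have hpow : 1 ≤ q ^ (k - t) := Nat.one_le_pow _ _ (by omega)
  have hNat : Nat.card {C : Submodule K (Fin n → K) // C ∈ 𝓒 ∧ T ≤ C} * (q - 1) =
      q ^ (k - t) - 1 := by rw [hcard, hproj]
  have := congrArg (fun m : ℕ => (m : ℤ)) hNat
  push_cast [Nat.cast_sub (by omega : 1 ≤ q), Nat.cast_sub hpow] at this
  linarith [this]
end

section
/- Let 𝓑 be a q-Steiner system S(t,k,n;q) on E = F_q^n, let I be a (t+1)-dimensional subspace contained in no block, and let B be a block with dim(B ∩ I) = t. Then the maps D ↦ D ∩ B and X ↦ X + I are mutually inverse bijections between S(B,I) = {D ⊆ E : dim D = t+2, I ⊆ D, dim(B ∩ D) = t+1} and T(B,I) = {X ⊆ B : dim X = t+1, I ∩ B ⊆ X}; in particular |S(B,I)| = (q^{k−t} − 1)/(q − 1). -/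
open Submodule Module


lemma line_count (K V : Type*) [Field K] [Fintype K] [AddCommGroup V] [Module K V]
    [FiniteDimensional K V] :
    Nat.card {L : Submodule K V // finrank K L = 1} * (Fintype.card K - 1)
      = Fintype.card K ^ finrank K V - 1 := by
  classical
  haveI : Finite V := Module.finite_of_finite K
  haveI : Fintype V := Fintype.ofFinite V
  set Lines := {L : Submodule K V // finrank K L = 1} with hLines
  let f : {v : V // v ≠ 0} → Lines := fun v => ⟨K ∙ v.1, finrank_span_singleton v.2⟩
  have key : ∀ L : Lines, Nat.card {w : {v : V // v ≠ 0} // f w = L} = Fintype.card K - 1 := by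
    intro L
    have e : {w : {v : V // v ≠ 0} // f w = L} ≃ {x : ↥L.1 // x ≠ 0} :=
      { toFun := fun w => ⟨⟨w.1.1, by
          have : (K ∙ w.1.1) = L.1 := congrArg Subtype.val w.2
          rw [← this]; exact mem_span_singleton_self _⟩,
          fun h => w.1.2 (congrArg Subtype.val h)⟩
        invFun := fun x => ⟨⟨x.1.1, fun h => x.2 (Subtype.ext h)⟩, by
          apply Subtype.ext
          apply Submodule.eq_of_le_of_finrank_eq
          · rw [Submodule.span_singleton_le_iff_mem]; exact x.1.2
          · rw [finrank_span_singleton (fun h => x.2 (Subtype.ext h)), L.2]⟩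
        left_inv := fun w => rfl
        right_inv := fun x => rfl }
    haveI : Fintype ↥L.1 := Fintype.ofFinite _
    rw [Nat.card_congr e, Nat.card_eq_fintype_card]
    have h0 : Fintype.card {x : ↥L.1 // x = 0} = 1 := Fintype.card_subtype_eq 0
    have := Fintype.card_subtype_compl (fun x : ↥L.1 => x = 0)
    rw [this, h0, card_eq_pow_finrank (K := K), L.2, pow_one]
  have hcard : Fintype.card {v : V // v ≠ 0} = Fintype.card K ^ finrank K V - 1 := by
    have h0 : Fintype.card {x : V // x = 0} = 1 := Fintype.card_subtype_eq 0
    rw [Fintype.card_subtype_compl (fun x : V => x = 0), h0, card_eq_pow_finrank (K := K)]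
  have hsum : ∑ L : Lines, Nat.card {w : {v : V // v ≠ 0} // f w = L}
      = Nat.card Lines * (Fintype.card K - 1) := by
    rw [Finset.sum_congr rfl (fun L _ => key L), Finset.sum_const, Finset.card_univ,
      smul_eq_mul, Nat.card_eq_fintype_card, mul_comm]
  calc Nat.card Lines * (Fintype.card K - 1)
      = ∑ L : Lines, Nat.card {w : {v : V // v ≠ 0} // f w = L} := hsum.symm
    _ = Fintype.card (Σ L : Lines, {w : {v : V // v ≠ 0} // f w = L}) := by
        rw [Fintype.card_sigma]; simp [Nat.card_eq_fintype_card]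
    _ = Fintype.card {v : V // v ≠ 0} := Fintype.card_congr (Equiv.sigmaFiberEquiv f)
    _ = Fintype.card K ^ finrank K V - 1 := hcard


lemma finrank_map_mkQ' {K V : Type*} [Field K] [AddCommGroup V] [Module K V]
    [FiniteDimensional K V] (p X : Submodule K V) (h : p ≤ X) :
    finrank K (map p.mkQ X) + finrank K p = finrank K X := by
  have hr : LinearMap.range (p.mkQ ∘ₗ X.subtype) = map p.mkQ X := by
    rw [LinearMap.range_comp, Submodule.range_subtype]
  have hk : LinearMap.ker (p.mkQ ∘ₗ X.subtype) = comap X.subtype p := by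
    rw [LinearMap.ker_comp, Submodule.ker_mkQ]
  have H := LinearMap.finrank_range_add_finrank_ker (p.mkQ ∘ₗ X.subtype)
  rw [hr, hk, (Submodule.comapSubtypeEquivOfLe h).finrank_eq] at H
  exact H

lemma interval_equiv_lines {K V : Type*} [Field K] [AddCommGroup V] [Module K V]
    [FiniteDimensional K V] (B p : Submodule K V) (hpB : p ≤ B) (t : ℕ)
    (hpt : finrank K p = t) :
    Nonempty ({X : Submodule K V // p ≤ X ∧ X ≤ B ∧ finrank K X = t + 1}
      ≃ {L : Submodule K ↥(map p.mkQ B) // finrank K L = 1}) := by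
  set W := map p.mkQ B with hWdef
  have hker_le : ∀ M : Submodule K (V ⧸ p), p ≤ comap p.mkQ M := by
    intro M x hx
    have h0 : p.mkQ x = 0 := (Submodule.Quotient.mk_eq_zero p).mpr hx
    simp [Submodule.mem_comap, h0]
  have hmapcomap : ∀ M : Submodule K (V ⧸ p), map p.mkQ (comap p.mkQ M) = M :=
    fun M => Submodule.map_comap_eq_self (by rw [Submodule.range_mkQ]; exact le_top)
  -- forward
  have hF : ∀ X : Submodule K V, p ≤ X → X ≤ B → finrank K X = t + 1 →
      finrank K (comap W.subtype (map p.mkQ X)) = 1 := by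
    intro X hpX hXB hXr
    have hle : map p.mkQ X ≤ W := Submodule.map_mono hXB
    have hfr := finrank_map_mkQ' p X hpX
    rw [hpt, hXr] at hfr
    rw [(Submodule.comapSubtypeEquivOfLe hle).finrank_eq]
    omega
  have hG : ∀ L : Submodule K ↥W, finrank K L = 1 →
      p ≤ comap p.mkQ (map W.subtype L) ∧ comap p.mkQ (map W.subtype L) ≤ B ∧
        finrank K (comap p.mkQ (map W.subtype L)) = t + 1 := by
    intro L hL
    have hMW : map W.subtype L ≤ W := Submodule.map_subtype_le W L
    refine ⟨hker_le _, ?_, ?_⟩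
    · have h1 : comap p.mkQ (map W.subtype L) ≤ comap p.mkQ W := Submodule.comap_mono hMW
      have h2 : comap p.mkQ W = B := by
        show comap p.mkQ (map p.mkQ B) = B
        rw [Submodule.comap_map_mkQ, sup_eq_right.mpr hpB]
      exact h1.trans (le_of_eq h2)
    · have hfr := finrank_map_mkQ' p _ (hker_le (map W.subtype L))
      rw [hmapcomap, hpt, Submodule.finrank_map_subtype_eq, hL] at hfr
      omega
  refine ⟨{
    toFun := fun X => ⟨comap W.subtype (map p.mkQ X.1), hF X.1 X.2.1 X.2.2.1 X.2.2.2⟩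
    invFun := fun L => ⟨comap p.mkQ (map W.subtype L.1),
      (hG L.1 L.2).1, (hG L.1 L.2).2.1, (hG L.1 L.2).2.2⟩
    left_inv := ?_
    right_inv := ?_ }⟩
  · rintro ⟨X, hpX, hXB, hXr⟩
    apply Subtype.ext
    have hle : map p.mkQ X ≤ W := Submodule.map_mono hXB
    simp only
    rw [Submodule.map_comap_subtype, inf_eq_right.mpr hle,
      Submodule.comap_map_mkQ, sup_eq_right.mpr hpX]
  · rintro ⟨L, hL⟩
    apply Subtype.ext
    simp only
    rw [hmapcomap, Submodule.comap_map_eq_of_injective (Submodule.injective_subtype W)]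

/-- Let 𝓑 be a q-Steiner system S(t,k,n;q), I a (t+1)-dimensional
subspace contained in no block, B a block with dim(B ∩ I) = t.  Then
D ↦ D ∩ B and X ↦ X + I are mutually inverse bijections between
S(B,I) = {D : dim D = t+2, I ≤ D, dim(B ∩ D) = t+1} and
T(B,I) = {X ≤ B : dim X = t+1, I ∩ B ≤ X}; in particular
|S(B,I)| = (q^{k−t} − 1)/(q − 1). -/
theorem stmt15 {K : Type*} [Field K] [Fintype K] {q n t k : ℕ}
    (hq : Fintype.card K = q)
    (𝓑 : Set (Submodule K (Fin n → K))) (h𝓑 : IsSteinerSystem t k 𝓑)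
    (I : Submodule K (Fin n → K)) (hI : Module.finrank K I = t + 1)
    (hInoblock : ¬ ∃ B' ∈ 𝓑, I ≤ B')
    (B : Submodule K (Fin n → K)) (hB : B ∈ 𝓑)
    (hBI : Module.finrank K ↥(B ⊓ I) = t) :
    let S : Set (Submodule K (Fin n → K)) :=
      {D | Module.finrank K D = t + 2 ∧ I ≤ D ∧ Module.finrank K ↥(B ⊓ D) = t + 1}
    let T : Set (Submodule K (Fin n → K)) :=
      {X | X ≤ B ∧ Module.finrank K X = t + 1 ∧ I ⊓ B ≤ X}
    (∀ D ∈ S, D ⊓ B ∈ T) ∧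
    (∀ X ∈ T, X ⊔ I ∈ S) ∧
    (∀ D ∈ S, (D ⊓ B) ⊔ I = D) ∧
    (∀ X ∈ T, (X ⊔ I) ⊓ B = X) ∧
    (Nat.card S : ℤ) * (q - 1) = (q : ℤ) ^ (k - t) - 1 := by
  intro S T
  obtain ⟨ht1, htk, hkn, hdim, hex⟩ := h𝓑
  have hBk : finrank K B = k := hdim B hB
  have hIB : ¬ I ≤ B := by
    intro h
    have h2 : B ⊓ I = I := inf_eq_right.mpr h
    rw [h2, hI] at hBI; omega
  have part1 : ∀ D ∈ S, D ⊓ B ∈ T := by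
    rintro D ⟨hD2, hID, hBD⟩
    refine ⟨inf_le_right, ?_, inf_le_inf hID le_rfl⟩
    rw [inf_comm D B]; exact hBD
  have key2 : ∀ X ∈ T, finrank K ↥(X ⊔ I) = t + 2 ∧ finrank K ↥(B ⊓ (X ⊔ I)) = t + 1 := by
    rintro X ⟨hXB, hX, hIBX⟩
    have hBIX : B ⊓ I ≤ X := by rw [inf_comm]; exact hIBX
    have hXI : X ⊓ I = B ⊓ I := le_antisymm (inf_le_inf hXB le_rfl)
      (le_inf hBIX inf_le_right)
    have hsum := Submodule.finrank_sup_add_finrank_inf_eq X I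
    rw [hX, hI, hXI, hBI] at hsum
    have hsup : finrank K ↥(X ⊔ I) = t + 2 := by omega
    refine ⟨hsup, ?_⟩
    have hXle : X ≤ B ⊓ (X ⊔ I) := le_inf hXB le_sup_left
    have hlt : B ⊓ (X ⊔ I) < X ⊔ I := by
      refine lt_of_le_of_ne inf_le_right (fun h => hIB ?_)
      have hIle : I ≤ B ⊓ (X ⊔ I) := by rw [h]; exact le_sup_right
      exact hIle.trans inf_le_left
    have h1 : finrank K ↥X ≤ finrank K ↥(B ⊓ (X ⊔ I)) := Submodule.finrank_mono hXle
    have h2 : finrank K ↥(B ⊓ (X ⊔ I)) < finrank K ↥(X ⊔ I) :=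
      Submodule.finrank_lt_finrank_of_lt hlt
    omega
  have part2 : ∀ X ∈ T, X ⊔ I ∈ S := by
    intro X hX
    obtain ⟨h1, h2⟩ := key2 X hX
    exact ⟨h1, le_sup_right, h2⟩
  have part3 : ∀ D ∈ S, (D ⊓ B) ⊔ I = D := by
    rintro D ⟨hD2, hID, hBD⟩
    apply Submodule.eq_of_le_of_finrank_eq (sup_le inf_le_left hID)
    have hDBI : (D ⊓ B) ⊓ I = B ⊓ I := by
      apply le_antisymm (inf_le_inf inf_le_right le_rfl)
      exact le_inf (le_inf (inf_le_right.trans hID) inf_le_left) inf_le_right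
    have hsum := Submodule.finrank_sup_add_finrank_inf_eq (D ⊓ B) I
    have hDB : finrank K ↥(D ⊓ B) = t + 1 := by rw [inf_comm D B]; exact hBD
    rw [hDB, hI, hDBI, hBI] at hsum
    omega
  have part4 : ∀ X ∈ T, (X ⊔ I) ⊓ B = X := by
    intro X hX
    obtain ⟨h1, h2⟩ := key2 X hX
    symm
    apply Submodule.eq_of_le_of_finrank_eq (le_inf le_sup_left hX.1)
    rw [hX.2.1, inf_comm (X ⊔ I) B, h2]
  refine ⟨part1, part2, part3, part4, ?_⟩
  have hcardST : Nat.card S = Nat.card T := Nat.card_congr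
    { toFun := fun D => ⟨D.1 ⊓ B, part1 _ D.2⟩
      invFun := fun X => ⟨X.1 ⊔ I, part2 _ X.2⟩
      left_inv := fun D => Subtype.ext (part3 _ D.2)
      right_inv := fun X => Subtype.ext (part4 _ X.2) }
  have hpB : B ⊓ I ≤ B := inf_le_left
  have e1 : T ≃ {X : Submodule K (Fin n → K) //
      B ⊓ I ≤ X ∧ X ≤ B ∧ finrank K X = t + 1} :=
    Equiv.subtypeEquivRight (fun X => by
      constructor
      · rintro ⟨a, b, c⟩
        exact ⟨by rw [inf_comm]; exact c, a, b⟩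
      · rintro ⟨a, b, c⟩
        exact ⟨b, c, by rw [inf_comm]; exact a⟩)
  obtain ⟨e2⟩ := interval_equiv_lines B (B ⊓ I) hpB t hBI
  have hWB := finrank_map_mkQ' (B ⊓ I) B hpB
  rw [hBI, hBk] at hWB
  have hWrank : finrank K ↥(map (B ⊓ I).mkQ B) = k - t := by omega
  have hline := line_count K ↥(map (B ⊓ I).mkQ B)
  rw [hWrank, hq] at hline
  have hnat : Nat.card S * (q - 1) = q ^ (k - t) - 1 := by
    rw [hcardST, Nat.card_congr (e1.trans e2), hline]
  have hq1 : 1 ≤ q := hq ▸ Fintype.card_pos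
  have hqp : 1 ≤ q ^ (k - t) := Nat.one_le_pow _ _ hq1
  zify [hq1, hqp] at hnat
  exact hnat
end

section
/- Let 𝓑 be the blocks of a q-Steiner system S(t,k,n;q) and let 𝓒_{t+2} be the set of (t+2)-dimensional subspaces C of E = F_q^n such that no (t+1)-dimensional subspace of C is contained in a block of 𝓑. Then (E, 𝓒_{t+2}) is a t-(n, t+2, λ; q) subspace design with λ = q^{k−t} · [n−k choose 1]_q · ([n−t−1 choose 1]_q − [t+1 choose 1]_q · [k−t choose 1]_q) / (q+1). -/
set_option linter.unusedSectionVars false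

open Module Submodule

section Generic

/-- Fiber counting: if every fiber of `f` has cardinality `c` (in multiplied form),
then `|α| * m = |β| * c`. -/
lemma card_fiber_mul {α β : Type*} [Finite α] [Finite β] (f : α → β) (m c : ℕ)
    (h : ∀ b : β, Nat.card {a : α // f a = b} * m = c) :
    Nat.card α * m = Nat.card β * c := by
  classical
  cases nonempty_fintype α
  cases nonempty_fintype β
  rw [← Nat.card_congr (Equiv.sigmaFiberEquiv f)]
  have h' : ∀ b : β, Fintype.card {a : α // f a = b} * m = c := by
    intro b; rw [← Nat.card_eq_fintype_card]; exact h b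
  rw [Nat.card_eq_fintype_card, Fintype.card_sigma, Finset.sum_mul]
  simp_rw [h']
  rw [Finset.sum_const, Finset.card_univ, smul_eq_mul, Nat.card_eq_fintype_card]

lemma card_partition {α : Type*} [Finite α] (p : α → Prop) :
    Nat.card α = Nat.card {a : α // p a} + Nat.card {a : α // ¬ p a} := by
  classical
  rw [← Nat.card_sum]
  exact (Nat.card_congr (Equiv.sumCompl p)).symm

lemma card_subtype_and {α : Type*} (p q : α → Prop) :
    Nat.card {x : {a : α // p a} // q x.1} = Nat.card {a : α // p a ∧ q a} :=
  Nat.card_congr (Equiv.subtypeSubtypeEquivSubtypeInter p q)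

/-- Double counting over pairs, fibered over the first coordinate. -/
lemma card_rel_fst {α β : Type*} [Finite α] [Finite β]
    (p : α → Prop) (s : β → Prop) (r : α → β → Prop) (m c : ℕ)
    (h : ∀ a : {a : α // p a}, Nat.card {b : β // s b ∧ r a.1 b} * m = c) :
    Nat.card {x : α × β // p x.1 ∧ s x.2 ∧ r x.1 x.2} * m
      = Nat.card {a : α // p a} * c := by
  apply card_fiber_mul (f := fun x : {x : α × β // p x.1 ∧ s x.2 ∧ r x.1 x.2} =>
    (⟨x.1.1, x.2.1⟩ : {a : α // p a}))
  intro a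
  rw [← h a]
  congr 1
  apply Nat.card_congr
  refine ⟨fun x => ⟨x.1.1.2, x.1.2.2.1, ?_⟩, fun b => ⟨⟨⟨a.1, b.1⟩, a.2, b.2.1, b.2.2⟩, rfl⟩, ?_, ?_⟩
  · have : x.1.1.1 = a.1 := congrArg Subtype.val x.2
    rw [← this]; exact x.1.2.2.2
  · rintro ⟨⟨⟨a', b⟩, hp, hs, hr⟩, hfib⟩
    have ha : a' = a.1 := congrArg Subtype.val hfib
    subst ha
    rfl
  · rintro ⟨b, hb⟩
    rfl

/-- Double counting over pairs, fibered over the second coordinate. -/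
lemma card_rel_snd {α β : Type*} [Finite α] [Finite β]
    (p : α → Prop) (s : β → Prop) (r : α → β → Prop) (m c : ℕ)
    (h : ∀ b : {b : β // s b}, Nat.card {a : α // p a ∧ r a b.1} * m = c) :
    Nat.card {x : α × β // p x.1 ∧ s x.2 ∧ r x.1 x.2} * m
      = Nat.card {b : β // s b} * c := by
  have e : {x : α × β // p x.1 ∧ s x.2 ∧ r x.1 x.2}
      ≃ {x : β × α // s x.1 ∧ p x.2 ∧ r x.2 x.1} :=
    ⟨fun x => ⟨⟨x.1.2, x.1.1⟩, x.2.2.1, x.2.1, x.2.2.2⟩,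
     fun x => ⟨⟨x.1.2, x.1.1⟩, x.2.2.1, x.2.1, x.2.2.2⟩,
     fun x => rfl, fun x => rfl⟩
  rw [Nat.card_congr e]
  exact card_rel_fst s p (fun b a => r a b) m c h

lemma card_eq_one_of_unique {α : Type*} (h1 : Nonempty α) (h2 : ∀ a b : α, a = b) :
    Nat.card α = 1 :=
  Nat.card_eq_one_iff_unique.2 ⟨⟨h2⟩, h1⟩

lemma card_eq_zero_of_empty {α : Type*} [Finite α] (h : α → False) : Nat.card α = 0 := by
  have : IsEmpty α := ⟨h⟩
  exact Nat.card_of_isEmpty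

end Generic
open Module Submodule

section ModCount

variable {K : Type*} [Field K] [Fintype K]
variable {M : Type*} [AddCommGroup M] [Module K M] [Finite M]

lemma my_card_module : Nat.card M = Fintype.card K ^ finrank K M := by
  classical
  cases nonempty_fintype M
  rw [Nat.card_eq_fintype_card, card_eq_pow_finrank (K := K)]

lemma my_card_ne_zero : Nat.card {v : M // v ≠ 0} = Nat.card M - 1 := by
  classical
  cases nonempty_fintype M
  rw [Nat.card_eq_fintype_card, Nat.card_eq_fintype_card, Fintype.card_subtype_compl,
    Fintype.card_subtype_eq (0 : M)]

/-- The number of 1-dimensional subspaces, multiplied by `q - 1`, is `q ^ dim - 1`. -/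
lemma card_lines_mul :
    Nat.card {L : Submodule K M // finrank K L = 1} * (Fintype.card K - 1)
      = Fintype.card K ^ finrank K M - 1 := by
  classical
  haveI : Module.Finite K M := Module.Finite.of_finite
  have key : Nat.card {v : M // v ≠ 0} * 1
      = Nat.card {L : Submodule K M // finrank K L = 1} * (Fintype.card K - 1) := by
    apply card_fiber_mul
      (f := fun v : {v : M // v ≠ 0} =>
        (⟨span K {v.1}, finrank_span_singleton v.2⟩ : {L : Submodule K M // finrank K L = 1}))
    intro L
    rw [mul_one]
    have e : {a : {v : M // v ≠ 0} //
        (⟨span K {a.1}, finrank_span_singleton a.2⟩ : {L : Submodule K M // finrank K L = 1}) = L}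
        ≃ {x : L.1 // x ≠ 0} := by
      refine ⟨fun a => ⟨⟨a.1.1, ?_⟩, ?_⟩, fun x => ⟨⟨x.1.1, ?_⟩, ?_⟩, ?_, ?_⟩
      · have h : span K {a.1.1} = L.1 := congrArg Subtype.val a.2
        rw [← h]; exact subset_span rfl
      · simp only [ne_eq, Submodule.mk_eq_zero]
        exact a.1.2
      · simp only [ne_eq, Submodule.coe_eq_zero] at *
        exact fun h => x.2 (by ext; simp [h])
      · apply Subtype.ext
        show span K {(x.1 : M)} = L.1
        have hx : (x.1 : M) ≠ 0 := fun h => x.2 (by ext; simp [h])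
        refine Submodule.eq_of_le_of_finrank_le ?_ ?_
        · rw [span_le, Set.singleton_subset_iff]; exact x.1.2
        · rw [L.2, finrank_span_singleton hx]
      · intro a; apply Subtype.ext; apply Subtype.ext; rfl
      · intro x; apply Subtype.ext; apply Subtype.ext; rfl
    rw [Nat.card_congr e]
    have : Finite L.1 := inferInstance
    rw [my_card_ne_zero, my_card_module (K := K) (M := L.1), L.2, pow_one]
  rw [mul_one] at key
  rw [← key, my_card_ne_zero, my_card_module (K := K) (M := M)]

end ModCount

section ModCount2

variable {K : Type*} [Field K] [Fintype K]
variable {M : Type*} [AddCommGroup M] [Module K M] [Finite M]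

lemma range_eq_top_of_ne_zero {N : Type*} [AddCommGroup N] [Module K N]
    (φ : N →ₗ[K] K) (h : φ ≠ 0) : LinearMap.range φ = ⊤ := by
  obtain ⟨x, hx⟩ : ∃ x, φ x ≠ 0 := by
    by_contra hc; push_neg at hc
    exact h (LinearMap.ext fun x => by simp [hc x])
  rw [eq_top_iff]
  rintro a -
  refine ⟨(a * (φ x)⁻¹) • x, ?_⟩
  rw [map_smul, smul_eq_mul, mul_assoc, inv_mul_cancel₀ hx, mul_one]

lemma finrank_ker_add_one {N : Type*} [AddCommGroup N] [Module K N] [Module.Finite K N]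
    (φ : N →ₗ[K] K) (h : φ ≠ 0) :
    finrank K (LinearMap.ker φ) + 1 = finrank K N := by
  have h1 := LinearMap.finrank_range_add_finrank_ker φ
  rw [range_eq_top_of_ne_zero φ h, finrank_top, finrank_self] at h1
  omega

lemma my_finite_quot (W : Submodule K M) : Finite (M ⧸ W) :=
  Finite.of_surjective _ (Submodule.mkQ_surjective W)

lemma my_finite_dual (N : Type*) [AddCommGroup N] [Module K N] [Finite N] :
    Finite (Module.Dual K N) :=
  Finite.of_injective (fun f => (f : N → K)) DFunLike.coe_injective

/-- The number of hyperplanes, multiplied by `q - 1`, is `q ^ dim - 1`. -/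
lemma card_hyperplanes_mul :
    Nat.card {H : Submodule K M // finrank K H + 1 = finrank K M} * (Fintype.card K - 1)
      = Fintype.card K ^ finrank K M - 1 := by
  classical
  haveI : Module.Finite K M := Module.Finite.of_finite
  haveI : Finite (Module.Dual K M) := my_finite_dual M
  have key : Nat.card {φ : Module.Dual K M // φ ≠ 0} * 1
      = Nat.card {H : Submodule K M // finrank K H + 1 = finrank K M} * (Fintype.card K - 1) := by
    apply card_fiber_mul (f := fun φ : {φ : Module.Dual K M // φ ≠ 0} =>
      (⟨LinearMap.ker φ.1, finrank_ker_add_one φ.1 φ.2⟩ :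
        {H : Submodule K M // finrank K H + 1 = finrank K M}))
    intro H
    rw [mul_one]
    haveI : Finite (M ⧸ H.1) := my_finite_quot H.1
    haveI : Finite (Module.Dual K (M ⧸ H.1)) := my_finite_dual _
    have hq1 : finrank K (M ⧸ H.1) = 1 := by
      have := Submodule.finrank_quotient_add_finrank H.1
      omega
    have e : {φ' : {φ : Module.Dual K M // φ ≠ 0} //
        (⟨LinearMap.ker φ'.1, finrank_ker_add_one φ'.1 φ'.2⟩ :
          {H : Submodule K M // finrank K H + 1 = finrank K M}) = H}
        ≃ {g : Module.Dual K (M ⧸ H.1) // g ≠ 0} := by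
      refine ⟨fun φ' => ⟨H.1.liftQ φ'.1.1 (le_of_eq (congrArg Subtype.val φ'.2).symm), ?_⟩,
        fun g => ⟨⟨g.1.comp H.1.mkQ, ?_⟩, ?_⟩, ?_, ?_⟩
      · intro hg
        apply φ'.1.2
        have := Submodule.liftQ_mkQ H.1 φ'.1.1 (le_of_eq (congrArg Subtype.val φ'.2).symm)
        rw [← this, hg, LinearMap.zero_comp]
      · intro hc
        apply g.2
        exact (LinearMap.cancel_right (Submodule.mkQ_surjective H.1)).1
          (by rw [hc, LinearMap.zero_comp])
      · apply Subtype.ext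
        show LinearMap.ker (g.1.comp H.1.mkQ) = H.1
        rw [LinearMap.ker_comp]
        have hkg : LinearMap.ker g.1 = ⊥ := by
          haveI : Module.Finite K (M ⧸ H.1) := Module.Finite.of_finite
          have h2 := finrank_ker_add_one g.1 g.2
          rw [hq1] at h2
          have h3 : finrank K (LinearMap.ker g.1) = 0 := by omega
          exact Submodule.finrank_eq_zero.1 h3
        rw [hkg, Submodule.comap_bot, Submodule.ker_mkQ]
      · intro φ'
        apply Subtype.ext; apply Subtype.ext
        show (H.1.liftQ φ'.1.1 _).comp H.1.mkQ = φ'.1.1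
        exact Submodule.liftQ_mkQ _ _ _
      · intro g
        apply Subtype.ext
        apply (LinearMap.cancel_right (Submodule.mkQ_surjective H.1)).1
        exact Submodule.liftQ_mkQ _ _ _
    rw [Nat.card_congr e, my_card_ne_zero,
      my_card_module (K := K) (M := Module.Dual K (M ⧸ H.1)),
      Subspace.dual_finrank_eq, hq1, pow_one]
  rw [mul_one] at key
  rw [← key, my_card_ne_zero, my_card_module (K := K) (M := Module.Dual K M),
    Subspace.dual_finrank_eq]

end ModCount2

section Transport

variable {K : Type*} [Field K] [Fintype K]
variable {M : Type*} [AddCommGroup M] [Module K M] [Finite M]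

lemma finrank_map_mkQ (W U : Submodule K M) (h : W ≤ U) :
    finrank K (U.map W.mkQ) + finrank K W = finrank K U := by
  haveI : Module.Finite K M := Module.Finite.of_finite
  have h1 := LinearMap.finrank_range_add_finrank_ker (W.mkQ.domRestrict U)
  rw [LinearMap.range_domRestrict, LinearMap.ker_domRestrict, Submodule.ker_mkQ] at h1
  rw [← h1]
  congr 1
  exact (Submodule.comapSubtypeEquivOfLe h).finrank_eq.symm

lemma my_le_comap_mkQ (W : Submodule K M) (U' : Submodule K (M ⧸ W)) :
    W ≤ U'.comap W.mkQ := by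
  intro x hx
  have h0 : W.mkQ x = 0 := by
    rw [Submodule.mkQ_apply]
    exact (Submodule.Quotient.mk_eq_zero W).2 hx
  show W.mkQ x ∈ U'
  rw [h0]
  exact U'.zero_mem

lemma card_above (W : Submodule K M) (P : Submodule K M → Prop) :
    Nat.card {U : Submodule K M // W ≤ U ∧ P U}
      = Nat.card {U' : Submodule K (M ⧸ W) // P (U'.comap W.mkQ)} := by
  apply Nat.card_congr
  have hmc : ∀ U : Submodule K M, W ≤ U → (U.map W.mkQ).comap W.mkQ = U := by
    intro U hU
    rw [Submodule.comap_map_eq, Submodule.ker_mkQ, sup_eq_left.2 hU]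
  refine ⟨fun U => ⟨U.1.map W.mkQ, ?_⟩, fun U' => ⟨U'.1.comap W.mkQ, ?_, U'.2⟩, ?_, ?_⟩
  · rw [hmc U.1 U.2.1]; exact U.2.2
  · exact my_le_comap_mkQ W U'.1
  · intro U; apply Subtype.ext; exact hmc U.1 U.2.1
  · intro U'; apply Subtype.ext
    show (U'.1.comap W.mkQ).map W.mkQ = U'.1
    exact map_comap_eq_self (by rw [Submodule.range_mkQ]; exact le_top)

lemma card_below (W : Submodule K M) (P : Submodule K M → Prop) :
    Nat.card {U : Submodule K M // U ≤ W ∧ P U}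
      = Nat.card {U' : Submodule K W // P (U'.map W.subtype)} := by
  apply Nat.card_congr
  have hmc : ∀ U : Submodule K M, U ≤ W → (U.comap W.subtype).map W.subtype = U := by
    intro U hU
    rw [Submodule.map_comap_subtype, inf_eq_right.2 hU]
  refine ⟨fun U => ⟨U.1.comap W.subtype, ?_⟩, fun U' => ⟨U'.1.map W.subtype, ?_, U'.2⟩, ?_, ?_⟩
  · rw [hmc U.1 U.2.1]; exact U.2.2
  · exact Submodule.map_subtype_le W U'.1
  · intro U; apply Subtype.ext; exact hmc U.1 U.2.1
  · intro U'; apply Subtype.ext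
    show (U'.1.map W.subtype).comap W.subtype = U'.1
    rw [Submodule.comap_map_eq, Submodule.ker_subtype, sup_bot_eq]

lemma card_above_dim (W : Submodule K M) (r : ℕ) :
    Nat.card {U : Submodule K M // W ≤ U ∧ finrank K U = finrank K W + r}
      = Nat.card {U' : Submodule K (M ⧸ W) // finrank K U' = r} := by
  rw [card_above]
  apply Nat.card_congr
  apply Equiv.subtypeEquivRight
  intro U'
  have h1 : (U'.comap W.mkQ).map W.mkQ = U' :=
    map_comap_eq_self (by rw [Submodule.range_mkQ]; exact le_top)
  have h2 := finrank_map_mkQ W (U'.comap W.mkQ) (my_le_comap_mkQ W U')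
  rw [h1] at h2
  omega

lemma card_below_pred (W : Submodule K M) (P : ℕ → Prop) :
    Nat.card {U : Submodule K M // U ≤ W ∧ P (finrank K U)}
      = Nat.card {U' : Submodule K W // P (finrank K U')} := by
  rw [card_below]
  apply Nat.card_congr
  apply Equiv.subtypeEquivRight
  intro U'
  rw [Submodule.finrank_map_subtype_eq]

lemma card_between_dim (W W₂ : Submodule K M) (h : W ≤ W₂) (r : ℕ) :
    Nat.card {U : Submodule K M // W ≤ U ∧ U ≤ W₂ ∧ finrank K U = finrank K W + r}
      = Nat.card {U' : Submodule K (W₂.map W.mkQ) // finrank K U' = r} := by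
  haveI : Finite (M ⧸ W) := my_finite_quot W
  have step1 : Nat.card {U : Submodule K M // W ≤ U ∧ U ≤ W₂ ∧ finrank K U = finrank K W + r}
      = Nat.card {U' : Submodule K (M ⧸ W) //
          U' ≤ W₂.map W.mkQ ∧ finrank K U' = r} := by
    rw [card_above W (fun U => U ≤ W₂ ∧ finrank K U = finrank K W + r)]
    apply Nat.card_congr
    apply Equiv.subtypeEquivRight
    intro U'
    have h1 : (U'.comap W.mkQ).map W.mkQ = U' :=
      map_comap_eq_self (by rw [Submodule.range_mkQ]; exact le_top)
    have h2 := finrank_map_mkQ W (U'.comap W.mkQ) (my_le_comap_mkQ W U')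
    rw [h1] at h2
    constructor
    · rintro ⟨ha, hb⟩
      exact ⟨by rw [← h1]; exact Submodule.map_mono ha, by omega⟩
    · rintro ⟨ha, hb⟩
      refine ⟨?_, by omega⟩
      have := Submodule.comap_mono (f := W.mkQ) ha
      rw [Submodule.comap_map_eq, Submodule.ker_mkQ, sup_eq_left.2 h] at this
      exact this
  rw [step1]
  exact card_below_pred (W₂.map W.mkQ) (fun d => d = r)

lemma nat_sq_sub_one {q : ℕ} (hq : 1 ≤ q) : (q + 1) * (q - 1) = q ^ 2 - 1 := by
  obtain ⟨m, rfl⟩ : ∃ m, q = m + 1 := ⟨q - 1, by omega⟩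
  have h : (m + 1) ^ 2 = m * m + 2 * m + 1 := by ring
  have h2 : (m + 1 + 1) * (m + 1 - 1) = m * m + 2 * m := by
    simp only [Nat.add_sub_cancel]
    ring
  omega

/-- The number of 2-dimensional subspaces, multiplied by `(q+1)(q-1)²`. -/
lemma card_planes_mul :
    Nat.card {P : Submodule K M // finrank K P = 2}
        * ((Fintype.card K + 1) * (Fintype.card K - 1) ^ 2)
      = (Fintype.card K ^ finrank K M - 1)
        * (Fintype.card K ^ (finrank K M - 1) - 1) := by
  classical
  haveI : Module.Finite K M := Module.Finite.of_finite
  set q := Fintype.card K with hq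
  have hq2 : 2 ≤ q := Fintype.one_lt_card
  rcases le_or_gt 2 (finrank K M) with hd | hd
  · have e1 : Nat.card {x : Submodule K M × Submodule K M //
          finrank K x.1 = 1 ∧ finrank K x.2 = 2 ∧ x.1 ≤ x.2} * (q - 1)
        = Nat.card {L : Submodule K M // finrank K L = 1}
            * (q ^ (finrank K M - 1) - 1) := by
      apply card_rel_fst (p := fun L : Submodule K M => finrank K L = 1)
        (s := fun P : Submodule K M => finrank K P = 2) (r := fun L P => L ≤ P)
      intro L
      haveI : Finite (M ⧸ L.1) := my_finite_quot L.1
      have he : Nat.card {P : Submodule K M // finrank K P = 2 ∧ L.1 ≤ P}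
          = Nat.card {P : Submodule K M // L.1 ≤ P ∧ finrank K P = finrank K L.1 + 1} := by
        apply Nat.card_congr
        apply Equiv.subtypeEquivRight
        intro P
        rw [L.2]
        constructor
        · rintro ⟨h1, h2⟩; exact ⟨h2, by omega⟩
        · rintro ⟨h1, h2⟩; exact ⟨by omega, h1⟩
      rw [he, card_above_dim, card_lines_mul]
      congr 2
      have := Submodule.finrank_quotient_add_finrank L.1
      rw [L.2] at this
      omega
    have e2 : Nat.card {x : Submodule K M × Submodule K M //
          finrank K x.1 = 1 ∧ finrank K x.2 = 2 ∧ x.1 ≤ x.2} * (q - 1)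
        = Nat.card {P : Submodule K M // finrank K P = 2} * (q ^ 2 - 1) := by
      apply card_rel_snd (p := fun L : Submodule K M => finrank K L = 1)
        (s := fun P : Submodule K M => finrank K P = 2) (r := fun L P => L ≤ P)
      intro P
      have he : Nat.card {L : Submodule K M // finrank K L = 1 ∧ L ≤ P.1}
          = Nat.card {L : Submodule K M // L ≤ P.1 ∧ finrank K L = 1} := by
        apply Nat.card_congr
        apply Equiv.subtypeEquivRight
        intro L
        tauto
      rw [he, card_below_pred P.1 (fun d => d = 1), card_lines_mul, P.2]
    have key : Nat.card {P : Submodule K M // finrank K P = 2} * (q ^ 2 - 1) * (q - 1)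
        = (q ^ finrank K M - 1) * (q ^ (finrank K M - 1) - 1) := by
      rw [← e2, e1, mul_assoc, ← card_lines_mul (K := K) (M := M)]
      ring
    rw [← key]
    have : (q + 1) * (q - 1) ^ 2 = (q ^ 2 - 1) * (q - 1) := by
      rw [← nat_sq_sub_one (by omega), pow_two]
      ring
    rw [this]
    ring
  · have h0 : Nat.card {P : Submodule K M // finrank K P = 2} = 0 := by
      apply card_eq_zero_of_empty
      intro P
      have := Submodule.finrank_le P.1
      omega
    rw [h0, zero_mul]
    have : finrank K M = 0 ∨ finrank K M = 1 := by omega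
    rcases this with h | h <;> rw [h] <;> simp

end Transport

lemma card_partition' {α : Type*} [Finite α] (p q : α → Prop) :
    Nat.card {a : α // p a} = Nat.card {a : α // p a ∧ q a}
      + Nat.card {a : α // p a ∧ ¬ q a} := by
  rw [card_partition (fun a : {a : α // p a} => q a.1),
    card_subtype_and p q, card_subtype_and p (fun a => ¬ q a)]

section Steiner
open Module Submodule

variable {K : Type*} [Field K] [Fintype K] {n t k : ℕ}
  {𝓑 : Set (Submodule K (Fin n → K))}

lemma sb_block_eq (h𝓑 : IsSteinerSystem t k 𝓑) {T' B₁ B₂ : Submodule K (Fin n → K)}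
    (hT' : finrank K T' = t) (h1 : B₁ ∈ 𝓑) (h2 : B₂ ∈ 𝓑)
    (hl1 : T' ≤ B₁) (hl2 : T' ≤ B₂) : B₁ = B₂ := by
  obtain ⟨B, -, hBu⟩ := h𝓑.2.2.2.2 T' hT'
  rw [hBu B₁ ⟨h1, hl1⟩, hBu B₂ ⟨h2, hl2⟩]

lemma sb_bad_count (h𝓑 : IsSteinerSystem t k 𝓑) {T' : Submodule K (Fin n → K)}
    (hT' : finrank K T' = t) :
    Nat.card {I : Submodule K (Fin n → K) //
        (finrank K I = t + 1 ∧ ∃ B ∈ 𝓑, I ≤ B) ∧ T' ≤ I} * (Fintype.card K - 1)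
      = Fintype.card K ^ (k - t) - 1 := by
  obtain ⟨B', ⟨hB'mem, hT'B'⟩, -⟩ := h𝓑.2.2.2.2 T' hT'
  have e : {I : Submodule K (Fin n → K) //
        (finrank K I = t + 1 ∧ ∃ B ∈ 𝓑, I ≤ B) ∧ T' ≤ I}
      ≃ {I : Submodule K (Fin n → K) //
        T' ≤ I ∧ I ≤ B' ∧ finrank K I = finrank K T' + 1} := by
    apply Equiv.subtypeEquivRight
    intro I
    constructor
    · rintro ⟨⟨hfr, B, hB, hIB⟩, hTI⟩
      have hBB' : B = B' := sb_block_eq h𝓑 hT' hB hB'mem (hTI.trans hIB) hT'B'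
      exact ⟨hTI, hBB' ▸ hIB, by omega⟩
    · rintro ⟨hTI, hIB, hfr⟩
      exact ⟨⟨by omega, B', hB'mem, hIB⟩, hTI⟩
  rw [Nat.card_congr e, card_between_dim T' B' hT'B' 1, card_lines_mul]
  have hfrmap : finrank K (B'.map T'.mkQ) = k - t := by
    have h1 := finrank_map_mkQ T' B' hT'B'
    have h2 := h𝓑.2.2.2.1 B' hB'mem
    have h3 : t ≤ k := h𝓑.2.1
    omega
  rw [hfrmap]

lemma sb_unique_bad (h𝓑 : IsSteinerSystem t k 𝓑) {T B₀ C : Submodule K (Fin n → K)}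
    (hT : finrank K T = t) (hB₀mem : B₀ ∈ 𝓑) (hTB₀ : T ≤ B₀)
    (hC : finrank K C = t + 2) (hTC : T ≤ C) (hCB0 : ¬ C ≤ B₀)
    (I₁ I₂ : Submodule K (Fin n → K))
    (h1 : (finrank K I₁ = t + 1 ∧ ∃ B ∈ 𝓑, I₁ ≤ B) ∧ I₁ ≤ C)
    (h2 : (finrank K I₂ = t + 1 ∧ ∃ B ∈ 𝓑, I₂ ≤ B) ∧ I₂ ≤ C) : I₁ = I₂ := by
  obtain ⟨⟨h1f, B₁, hB₁, hI₁B₁⟩, hI₁C⟩ := h1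
  obtain ⟨⟨h2f, B₂, hB₂, hI₂B₂⟩, hI₂C⟩ := h2
  by_contra hne
  have hsupC : I₁ ⊔ I₂ ≤ C := sup_le hI₁C hI₂C
  have hfrsup_le : finrank K ↥(I₁ ⊔ I₂) ≤ t + 2 := hC ▸ Submodule.finrank_mono hsupC
  have hlt : I₁ < I₁ ⊔ I₂ := by
    rcases lt_or_eq_of_le (le_sup_left : I₁ ≤ I₁ ⊔ I₂) with h | h
    · exact h
    · exfalso
      apply hne
      have hle : I₂ ≤ I₁ := by rw [h]; exact le_sup_right
      exact (Submodule.eq_of_le_of_finrank_le hle (by omega)).symm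
  have hfrsup_gt : t + 1 < finrank K ↥(I₁ ⊔ I₂) := h1f ▸ finrank_lt_finrank_of_lt hlt
  have hsupeq : I₁ ⊔ I₂ = C := Submodule.eq_of_le_of_finrank_le hsupC (by omega)
  have hinf := Submodule.finrank_sup_add_finrank_inf_eq I₁ I₂
  have hinffr : finrank K ↥(I₁ ⊓ I₂) = t := by omega
  have hBeq : B₁ = B₂ := sb_block_eq h𝓑 hinffr hB₁ hB₂
    (le_trans inf_le_left hI₁B₁) (le_trans inf_le_right hI₂B₂)
  have hCB₁ : C ≤ B₁ := by
    rw [← hsupeq]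
    exact sup_le hI₁B₁ (hBeq ▸ hI₂B₂)
  have hB₁B₀ : B₁ = B₀ := sb_block_eq h𝓑 hT hB₁ hB₀mem (hTC.trans hCB₁) hTB₀
  exact hCB0 (hB₁B₀ ▸ hCB₁)

end Steiner

open Module Submodule in
set_option maxHeartbeats 2000000 in
theorem stmt16 {K : Type*} [Field K] [Fintype K] {q n t k : ℕ}
    (hq : Fintype.card K = q)
    (𝓑 : Set (Submodule K (Fin n → K))) (h𝓑 : IsSteinerSystem t k 𝓑)
    (htk : t < k) (hkn : k < n) :
    let 𝓒 : Set (Submodule K (Fin n → K)) :=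
      {C | Module.finrank K C = t + 2 ∧
        ∀ I : Submodule K (Fin n → K), I ≤ C → Module.finrank K I = t + 1 →
          ¬ ∃ B ∈ 𝓑, I ≤ B}
    ∀ T : Submodule K (Fin n → K), Module.finrank K T = t →
      (Nat.card {C : Submodule K (Fin n → K) // C ∈ 𝓒 ∧ T ≤ C} : ℤ) *
          ((q + 1) * (q - 1) ^ 3) =
        (q : ℤ) ^ (k - t) * ((q : ℤ) ^ (n - k) - 1) *
          (((q : ℤ) ^ (n - t - 1) - 1) * (q - 1) -
            ((q : ℤ) ^ (t + 1) - 1) * ((q : ℤ) ^ (k - t) - 1)) := by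
  subst hq
  intro 𝓒 T hT
  classical
  have ht1 : 1 ≤ t := h𝓑.1
  have hBdim := h𝓑.2.2.2.1
  have hcover := h𝓑.2.2.2.2
  have hq2 : 2 ≤ Fintype.card K := Fintype.one_lt_card
  have hfrV : finrank K (Fin n → K) = n := Module.finrank_fin_fun K
  obtain ⟨B₀, ⟨hB₀mem, hTB₀⟩, hB₀uniq⟩ := hcover T hT
  have hB0k : finrank K B₀ = k := hBdim B₀ hB₀mem
  -- every (t+2)-dim subspace of B₀ has a "bad" hyperplane
  have hnotgood : ∀ C : Submodule K (Fin n → K), finrank K C = t + 2 → C ≤ B₀ →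
      ∃ I, I ≤ C ∧ finrank K I = t + 1 ∧ ∃ B ∈ 𝓑, I ≤ B := by
    intro C hC hCB0
    have hcard := card_hyperplanes_mul (K := K) (M := ↥C)
    rw [hC] at hcard
    have hpow : 1 < Fintype.card K ^ (t + 2) := Nat.one_lt_pow (by omega) hq2
    have hne : Nat.card {H : Submodule K ↥C // finrank K ↥H + 1 = t + 2} ≠ 0 := by
      intro h0
      rw [h0, zero_mul] at hcard
      omega
    obtain ⟨H⟩ := (Nat.card_ne_zero.1 hne).1
    refine ⟨H.1.map C.subtype, Submodule.map_subtype_le C H.1, ?_,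
      B₀, hB₀mem, le_trans (Submodule.map_subtype_le C H.1) hCB0⟩
    rw [Submodule.finrank_map_subtype_eq]
    have := H.2
    omega
  -- quotient dimension facts
  have hfrq : ∀ W : Submodule K (Fin n → K),
      finrank K ((Fin n → K) ⧸ W) + finrank K W = n := by
    intro W
    have := Submodule.finrank_quotient_add_finrank W
    omega
  -- ==================== the counts ====================
  -- N : good count; A1, AB0, Abad
  set N := Nat.card {C : Submodule K (Fin n → K) //
    ((finrank K C = t + 2 ∧ T ≤ C) ∧
      ∀ I, I ≤ C → finrank K I = t + 1 → ¬ ∃ B ∈ 𝓑, I ≤ B)} with hN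
  set A1 := Nat.card {C : Submodule K (Fin n → K) //
    (finrank K C = t + 2 ∧ T ≤ C)} with hA1
  set AB0 := Nat.card {C : Submodule K (Fin n → K) //
    ((finrank K C = t + 2 ∧ T ≤ C) ∧ C ≤ B₀)} with hAB0
  set Abad := Nat.card {C : Submodule K (Fin n → K) //
    (((finrank K C = t + 2 ∧ T ≤ C) ∧
      ¬ ∀ I, I ≤ C → finrank K I = t + 1 → ¬ ∃ B ∈ 𝓑, I ≤ B) ∧ ¬ C ≤ B₀)} with hAbad
  set PP := Nat.card {x : Submodule K (Fin n → K) × Submodule K (Fin n → K) //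
    (finrank K x.1 = t + 2 ∧ T ≤ x.1) ∧
      (finrank K x.2 = t + 1 ∧ ∃ B ∈ 𝓑, x.2 ≤ B) ∧ x.2 ≤ x.1} with hPP
  set bT := Nat.card {I : Submodule K (Fin n → K) //
    (finrank K I = t + 1 ∧ ∃ B ∈ 𝓑, I ≤ B) ∧ T ≤ I} with hbT
  set X := Nat.card {I : Submodule K (Fin n → K) //
    (((finrank K I = t + 1 ∧ ∃ B ∈ 𝓑, I ≤ B) ∧ ¬ T ≤ I) ∧
      finrank K ↥(T ⊓ I) + 1 = t)} with hX
  set htS := Nat.card {S : Submodule K (Fin n → K) //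
    S ≤ T ∧ finrank K S + 1 = t} with hhtS
  -- ==================== E1 ====================
  have e1 : A1 = N + (AB0 + Abad) := by
    rw [hA1, card_partition' (fun C : Submodule K (Fin n → K) =>
        finrank K C = t + 2 ∧ T ≤ C)
      (fun C => ∀ I, I ≤ C → finrank K I = t + 1 → ¬ ∃ B ∈ 𝓑, I ≤ B)]
    congr 1
    rw [card_partition' (fun C : Submodule K (Fin n → K) =>
        (finrank K C = t + 2 ∧ T ≤ C) ∧
          ¬ ∀ I, I ≤ C → finrank K I = t + 1 → ¬ ∃ B ∈ 𝓑, I ≤ B)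
      (fun C => C ≤ B₀)]
    congr 1
    rw [hAB0]
    apply Nat.card_congr
    apply Equiv.subtypeEquivRight
    intro C
    constructor
    · rintro ⟨⟨h1, -⟩, h2⟩
      exact ⟨h1, h2⟩
    · rintro ⟨h1, h2⟩
      refine ⟨⟨h1, ?_⟩, h2⟩
      intro hgood
      obtain ⟨I, hIC, hIfr, hIbad⟩ := hnotgood C h1.1 h2
      exact hgood I hIC hIfr hIbad
  -- ==================== values of A1, AB0 ====================
  have e5a : A1 * ((Fintype.card K + 1) * (Fintype.card K - 1) ^ 2)
      = (Fintype.card K ^ (n - t) - 1) * (Fintype.card K ^ (n - t - 1) - 1) := by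
    haveI : Finite ((Fin n → K) ⧸ T) := my_finite_quot T
    have e : {C : Submodule K (Fin n → K) // (finrank K C = t + 2 ∧ T ≤ C)}
        ≃ {C : Submodule K (Fin n → K) // T ≤ C ∧ finrank K C = finrank K T + 2} :=
      Equiv.subtypeEquivRight (fun C => by rw [hT]; tauto)
    rw [hA1, Nat.card_congr e, card_above_dim T 2, card_planes_mul]
    have hd : finrank K ((Fin n → K) ⧸ T) = n - t := by
      have := hfrq T
      omega
    rw [hd]
  have e5b : AB0 * ((Fintype.card K + 1) * (Fintype.card K - 1) ^ 2)
      = (Fintype.card K ^ (k - t) - 1) * (Fintype.card K ^ (k - t - 1) - 1) := by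
    haveI : Finite ((Fin n → K) ⧸ T) := my_finite_quot T
    have e : {C : Submodule K (Fin n → K) // ((finrank K C = t + 2 ∧ T ≤ C) ∧ C ≤ B₀)}
        ≃ {C : Submodule K (Fin n → K) //
            T ≤ C ∧ C ≤ B₀ ∧ finrank K C = finrank K T + 2} :=
      Equiv.subtypeEquivRight (fun C => by rw [hT]; tauto)
    rw [hAB0, Nat.card_congr e, card_between_dim T B₀ hTB₀ 2, card_planes_mul]
    have hd : finrank K ↥(B₀.map T.mkQ) = k - t := by
      have := finrank_map_mkQ T B₀ hTB₀
      omega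
    rw [hd]
  -- ==================== E2 ====================
  have e5d : bT * (Fintype.card K - 1) = Fintype.card K ^ (k - t) - 1 :=
    sb_bad_count h𝓑 hT
  have e2 : PP * (Fintype.card K - 1)
      = AB0 * (Fintype.card K ^ (t + 2) - 1) + Abad * (Fintype.card K - 1) := by
    rw [hPP, card_partition' (fun x : Submodule K (Fin n → K) × Submodule K (Fin n → K) =>
        (finrank K x.1 = t + 2 ∧ T ≤ x.1) ∧
          (finrank K x.2 = t + 1 ∧ ∃ B ∈ 𝓑, x.2 ≤ B) ∧ x.2 ≤ x.1)
      (fun x => ∀ I, I ≤ x.1 → finrank K I = t + 1 → ¬ ∃ B ∈ 𝓑, I ≤ B)]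
    have hzero : Nat.card {x : Submodule K (Fin n → K) × Submodule K (Fin n → K) //
        ((finrank K x.1 = t + 2 ∧ T ≤ x.1) ∧
          ((finrank K x.2 = t + 1 ∧ ∃ B ∈ 𝓑, x.2 ≤ B) ∧ x.2 ≤ x.1)) ∧
          (∀ I, I ≤ x.1 → finrank K I = t + 1 → ¬ ∃ B ∈ 𝓑, I ≤ B)} = 0 := by
      apply card_eq_zero_of_empty
      rintro ⟨⟨C, I⟩, ⟨-, ⟨hfr, hbad⟩, hle⟩, hgood⟩
      exact hgood I hle hfr hbad
    rw [hzero, zero_add, card_partition' _ (fun x => x.1 ≤ B₀), add_mul]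
    congr 1
    · -- piece over C ≤ B₀
      have hre : Nat.card {x : Submodule K (Fin n → K) × Submodule K (Fin n → K) //
          (((finrank K x.1 = t + 2 ∧ T ≤ x.1) ∧
            ((finrank K x.2 = t + 1 ∧ ∃ B ∈ 𝓑, x.2 ≤ B) ∧ x.2 ≤ x.1)) ∧
            ¬ (∀ I, I ≤ x.1 → finrank K I = t + 1 → ¬ ∃ B ∈ 𝓑, I ≤ B)) ∧ x.1 ≤ B₀}
          = Nat.card {x : Submodule K (Fin n → K) × Submodule K (Fin n → K) //
            ((finrank K x.1 = t + 2 ∧ T ≤ x.1) ∧ x.1 ≤ B₀) ∧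
              (finrank K x.2 = t + 1 ∧ ∃ B ∈ 𝓑, x.2 ≤ B) ∧ x.2 ≤ x.1} := by
        apply Nat.card_congr
        apply Equiv.subtypeEquivRight
        rintro ⟨C, I⟩
        constructor
        · rintro ⟨⟨⟨h1, h2⟩, h3⟩, h4⟩
          exact ⟨⟨h1, h4⟩, h2⟩
        · rintro ⟨⟨h1, h4⟩, h2⟩
          refine ⟨⟨⟨h1, h2⟩, ?_⟩, h4⟩
          intro hgood
          obtain ⟨I', hI'C, hI'fr, hI'bad⟩ := hnotgood C h1.1 h4
          exact hgood I' hI'C hI'fr hI'bad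
      rw [hre]
      rw [card_rel_fst
        (p := fun C : Submodule K (Fin n → K) => (finrank K C = t + 2 ∧ T ≤ C) ∧ C ≤ B₀)
        (s := fun I : Submodule K (Fin n → K) => finrank K I = t + 1 ∧ ∃ B ∈ 𝓑, I ≤ B)
        (r := fun C I => I ≤ C) (m := Fintype.card K - 1)
        (c := Fintype.card K ^ (t + 2) - 1)]
      intro C
      have e : {I : Submodule K (Fin n → K) //
            (finrank K I = t + 1 ∧ ∃ B ∈ 𝓑, I ≤ B) ∧ I ≤ C.1}
          ≃ {I : Submodule K (Fin n → K) // I ≤ C.1 ∧ finrank K I = t + 1} := by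
        apply Equiv.subtypeEquivRight
        intro I
        constructor
        · rintro ⟨⟨h1, -⟩, h2⟩
          exact ⟨h2, h1⟩
        · rintro ⟨h2, h1⟩
          exact ⟨⟨h1, B₀, hB₀mem, h2.trans C.2.2⟩, h2⟩
      rw [Nat.card_congr e, card_below_pred C.1 (fun d => d = t + 1)]
      have e2' : {I' : Submodule K ↥(C.1) // finrank K I' = t + 1}
          ≃ {I' : Submodule K ↥(C.1) // finrank K I' + 1 = finrank K ↥(C.1)} := by
        apply Equiv.subtypeEquivRight
        intro I'
        have := C.2.1.1
        omega
      rw [Nat.card_congr e2', card_hyperplanes_mul, C.2.1.1]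
    · -- piece over C not ≤ B₀
      have hone : Nat.card {x : Submodule K (Fin n → K) × Submodule K (Fin n → K) //
          (((finrank K x.1 = t + 2 ∧ T ≤ x.1) ∧
            ((finrank K x.2 = t + 1 ∧ ∃ B ∈ 𝓑, x.2 ≤ B) ∧ x.2 ≤ x.1)) ∧
            ¬ (∀ I, I ≤ x.1 → finrank K I = t + 1 → ¬ ∃ B ∈ 𝓑, I ≤ B)) ∧ ¬ x.1 ≤ B₀}
          * 1 = Abad * 1 := by
        have hre : Nat.card {x : Submodule K (Fin n → K) × Submodule K (Fin n → K) //
            (((finrank K x.1 = t + 2 ∧ T ≤ x.1) ∧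
              ((finrank K x.2 = t + 1 ∧ ∃ B ∈ 𝓑, x.2 ≤ B) ∧ x.2 ≤ x.1)) ∧
              ¬ (∀ I, I ≤ x.1 → finrank K I = t + 1 → ¬ ∃ B ∈ 𝓑, I ≤ B)) ∧ ¬ x.1 ≤ B₀}
            = Nat.card {x : Submodule K (Fin n → K) × Submodule K (Fin n → K) //
              (((finrank K x.1 = t + 2 ∧ T ≤ x.1) ∧
                ¬ (∀ I, I ≤ x.1 → finrank K I = t + 1 → ¬ ∃ B ∈ 𝓑, I ≤ B)) ∧
                  ¬ x.1 ≤ B₀) ∧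
                (finrank K x.2 = t + 1 ∧ ∃ B ∈ 𝓑, x.2 ≤ B) ∧ x.2 ≤ x.1} := by
          apply Nat.card_congr
          apply Equiv.subtypeEquivRight
          rintro ⟨C, I⟩
          tauto
        rw [hre]
        rw [card_rel_fst
          (p := fun C : Submodule K (Fin n → K) => ((finrank K C = t + 2 ∧ T ≤ C) ∧
              ¬ (∀ I, I ≤ C → finrank K I = t + 1 → ¬ ∃ B ∈ 𝓑, I ≤ B)) ∧ ¬ C ≤ B₀)
          (s := fun I : Submodule K (Fin n → K) => finrank K I = t + 1 ∧ ∃ B ∈ 𝓑, I ≤ B)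
          (r := fun C I => I ≤ C) (m := 1) (c := 1)]
        intro C
        rw [mul_one]
        apply card_eq_one_of_unique
        · have hngood := C.2.1.2
          push_neg at hngood
          obtain ⟨I, hIC, hIfr, hIbad⟩ := hngood
          exact ⟨⟨I, ⟨hIfr, hIbad⟩, hIC⟩⟩
        · rintro ⟨I₁, h1⟩ ⟨I₂, h2⟩
          apply Subtype.ext
          exact sb_unique_bad h𝓑 hT hB₀mem hTB₀ C.2.1.1.1 C.2.1.1.2 C.2.2 I₁ I₂ h1 h2
      rw [mul_one, mul_one] at hone
      rw [hone]
  -- ==================== E3 ====================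
  have e3 : PP * (Fintype.card K - 1)
      = bT * (Fintype.card K ^ (n - t - 1) - 1) + X * (Fintype.card K - 1) := by
    rw [hPP, card_partition' (fun x : Submodule K (Fin n → K) × Submodule K (Fin n → K) =>
        (finrank K x.1 = t + 2 ∧ T ≤ x.1) ∧
          (finrank K x.2 = t + 1 ∧ ∃ B ∈ 𝓑, x.2 ≤ B) ∧ x.2 ≤ x.1)
      (fun x => T ≤ x.2), add_mul]
    congr 1
    · -- piece with T ≤ I
      have hre : Nat.card {x : Submodule K (Fin n → K) × Submodule K (Fin n → K) //
          ((finrank K x.1 = t + 2 ∧ T ≤ x.1) ∧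
            ((finrank K x.2 = t + 1 ∧ ∃ B ∈ 𝓑, x.2 ≤ B) ∧ x.2 ≤ x.1)) ∧ T ≤ x.2}
          = Nat.card {x : Submodule K (Fin n → K) × Submodule K (Fin n → K) //
            (finrank K x.1 = t + 2 ∧ T ≤ x.1) ∧
              ((finrank K x.2 = t + 1 ∧ ∃ B ∈ 𝓑, x.2 ≤ B) ∧ T ≤ x.2) ∧ x.2 ≤ x.1} := by
        apply Nat.card_congr
        apply Equiv.subtypeEquivRight
        rintro ⟨C, I⟩
        tauto
      rw [hre]
      rw [card_rel_snd
        (p := fun C : Submodule K (Fin n → K) => finrank K C = t + 2 ∧ T ≤ C)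
        (s := fun I : Submodule K (Fin n → K) =>
          (finrank K I = t + 1 ∧ ∃ B ∈ 𝓑, I ≤ B) ∧ T ≤ I)
        (r := fun C I => I ≤ C) (m := Fintype.card K - 1)
        (c := Fintype.card K ^ (n - t - 1) - 1)]
      intro I
      haveI : Finite ((Fin n → K) ⧸ I.1) := my_finite_quot I.1
      have e : {C : Submodule K (Fin n → K) //
            (finrank K C = t + 2 ∧ T ≤ C) ∧ I.1 ≤ C}
          ≃ {C : Submodule K (Fin n → K) // I.1 ≤ C ∧ finrank K C = finrank K I.1 + 1} := by
        apply Equiv.subtypeEquivRight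
        intro C
        have hIfr := I.2.1.1
        constructor
        · rintro ⟨⟨h1, -⟩, h2⟩
          exact ⟨h2, by omega⟩
        · rintro ⟨h2, h1⟩
          exact ⟨⟨by omega, I.2.2.trans h2⟩, h2⟩
      rw [Nat.card_congr e, card_above_dim I.1 1, card_lines_mul]
      have hd : finrank K ((Fin n → K) ⧸ I.1) = n - t - 1 := by
        have h1 := hfrq I.1
        have h2 := I.2.1.1
        omega
      rw [hd]
    · -- piece with ¬ T ≤ I, split by dim (T ⊓ I)
      rw [card_partition' (fun x : Submodule K (Fin n → K) × Submodule K (Fin n → K) =>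
        (((finrank K x.1 = t + 2 ∧ T ≤ x.1) ∧
          ((finrank K x.2 = t + 1 ∧ ∃ B ∈ 𝓑, x.2 ≤ B) ∧ x.2 ≤ x.1)) ∧ ¬ T ≤ x.2))
        (fun x => finrank K ↥(T ⊓ x.2) + 1 = t)]
      have hzero : Nat.card {x : Submodule K (Fin n → K) × Submodule K (Fin n → K) //
          ((((finrank K x.1 = t + 2 ∧ T ≤ x.1) ∧
            ((finrank K x.2 = t + 1 ∧ ∃ B ∈ 𝓑, x.2 ≤ B) ∧ x.2 ≤ x.1)) ∧ ¬ T ≤ x.2) ∧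
            ¬ (finrank K ↥(T ⊓ x.2) + 1 = t))} = 0 := by
        apply card_eq_zero_of_empty
        rintro ⟨⟨C, I⟩, ⟨⟨⟨hfrC, hTC⟩, ⟨hfrI, hbad⟩, hle⟩, hnTI⟩, hne⟩
        dsimp only at hfrC hTC hfrI hle hnTI hne
        have h1 : finrank K ↥(T ⊓ I) ≤ t := hT ▸ Submodule.finrank_mono inf_le_left
        have h2 : finrank K ↥(T ⊓ I) ≠ t := by
          intro h
          exact hnTI (inf_eq_left.1
            (Submodule.eq_of_le_of_finrank_le inf_le_left (le_of_eq (hT.trans h.symm))))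
        have h3 := Submodule.finrank_sup_add_finrank_inf_eq T I
        have h4 : finrank K ↥(T ⊔ I) ≤ t + 2 :=
          hfrC ▸ Submodule.finrank_mono (sup_le hTC hle)
        omega
      rw [hzero, add_zero]
      have hone : Nat.card {x : Submodule K (Fin n → K) × Submodule K (Fin n → K) //
          ((((finrank K x.1 = t + 2 ∧ T ≤ x.1) ∧
            ((finrank K x.2 = t + 1 ∧ ∃ B ∈ 𝓑, x.2 ≤ B) ∧ x.2 ≤ x.1)) ∧ ¬ T ≤ x.2) ∧
            finrank K ↥(T ⊓ x.2) + 1 = t)} * 1 = X * 1 := by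
        have hre : Nat.card {x : Submodule K (Fin n → K) × Submodule K (Fin n → K) //
            ((((finrank K x.1 = t + 2 ∧ T ≤ x.1) ∧
              ((finrank K x.2 = t + 1 ∧ ∃ B ∈ 𝓑, x.2 ≤ B) ∧ x.2 ≤ x.1)) ∧ ¬ T ≤ x.2) ∧
              finrank K ↥(T ⊓ x.2) + 1 = t)}
            = Nat.card {x : Submodule K (Fin n → K) × Submodule K (Fin n → K) //
              (finrank K x.1 = t + 2 ∧ T ≤ x.1) ∧
                ((((finrank K x.2 = t + 1 ∧ ∃ B ∈ 𝓑, x.2 ≤ B) ∧ ¬ T ≤ x.2) ∧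
                  finrank K ↥(T ⊓ x.2) + 1 = t)) ∧ x.2 ≤ x.1} := by
          apply Nat.card_congr
          apply Equiv.subtypeEquivRight
          rintro ⟨C, I⟩
          tauto
        rw [hre]
        rw [card_rel_snd
          (p := fun C : Submodule K (Fin n → K) => finrank K C = t + 2 ∧ T ≤ C)
          (s := fun I : Submodule K (Fin n → K) =>
            ((finrank K I = t + 1 ∧ ∃ B ∈ 𝓑, I ≤ B) ∧ ¬ T ≤ I) ∧
              finrank K ↥(T ⊓ I) + 1 = t)
          (r := fun C I => I ≤ C) (m := 1) (c := 1)]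
        intro I
        rw [mul_one]
        have hsup : finrank K ↥(T ⊔ I.1) = t + 2 := by
          have h1 := Submodule.finrank_sup_add_finrank_inf_eq T I.1
          have h2 := I.2.1.1.1
          have h3 := I.2.2
          omega
        apply card_eq_one_of_unique
        · exact ⟨⟨T ⊔ I.1, ⟨hsup, le_sup_left⟩, le_sup_right⟩⟩
        · rintro ⟨C₁, ⟨hfr1, hT1⟩, hle1⟩ ⟨C₂, ⟨hfr2, hT2⟩, hle2⟩
          apply Subtype.ext
          have k1 : T ⊔ I.1 = C₁ := Submodule.eq_of_le_of_finrank_le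
            (sup_le hT1 hle1) (by omega)
          have k2 : T ⊔ I.1 = C₂ := Submodule.eq_of_le_of_finrank_le
            (sup_le hT2 hle2) (by omega)
          show C₁ = C₂
          rw [← k1, ← k2]
      rw [mul_one, mul_one] at hone
      rw [hone]
  -- ==================== e5e ====================
  have e5e : htS * (Fintype.card K - 1) = Fintype.card K ^ t - 1 := by
    rw [hhtS, card_below_pred T (fun d => d + 1 = t)]
    have e : {S' : Submodule K ↥T // finrank K S' + 1 = t}
        ≃ {S' : Submodule K ↥T // finrank K S' + 1 = finrank K ↥T} :=
      Equiv.subtypeEquivRight (fun S' => by rw [hT])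
    rw [Nat.card_congr e, card_hyperplanes_mul, hT]
  -- ==================== E4 ====================
  set m2 := (Fintype.card K ^ 2 - 1) * (Fintype.card K - 1) with hm2
  set tot := (Fintype.card K ^ (n - t + 1) - 1) * (Fintype.card K ^ (k - t) - 1) with htot
  have perS : ∀ S : {S : Submodule K (Fin n → K) // S ≤ T ∧ finrank K S + 1 = t},
      Nat.card {I : Submodule K (Fin n → K) //
        (finrank K I = t + 1 ∧ ∃ B ∈ 𝓑, I ≤ B) ∧ T ⊓ I = S.1} * m2 + bT * m2 = tot := by
    rintro ⟨S, hST, hSfr⟩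
    dsimp only
    have hgS : Nat.card {T' : Submodule K (Fin n → K) //
        finrank K T' = t ∧ S ≤ T'} * (Fintype.card K - 1)
        = Fintype.card K ^ (n - t + 1) - 1 := by
      haveI : Finite ((Fin n → K) ⧸ S) := my_finite_quot S
      have e : {T' : Submodule K (Fin n → K) // finrank K T' = t ∧ S ≤ T'}
          ≃ {T' : Submodule K (Fin n → K) //
              S ≤ T' ∧ finrank K T' = finrank K S + 1} :=
        Equiv.subtypeEquivRight (fun T' => by
          constructor
          · rintro ⟨h1, h2⟩; exact ⟨h2, by omega⟩
          · rintro ⟨h2, h1⟩; exact ⟨by omega, h2⟩)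
      rw [Nat.card_congr e, card_above_dim S 1, card_lines_mul]
      have hd : finrank K ((Fin n → K) ⧸ S) = n - t + 1 := by
        have h1 := hfrq S
        have h2 : t ≤ n := by omega
        omega
      rw [hd]
    have hP2fst : Nat.card {x : Submodule K (Fin n → K) × Submodule K (Fin n → K) //
          (finrank K x.1 = t ∧ S ≤ x.1) ∧
            ((finrank K x.2 = t + 1 ∧ ∃ B ∈ 𝓑, x.2 ≤ B) ∧ S ≤ x.2) ∧ x.1 ≤ x.2}
          * (Fintype.card K - 1)
        = Nat.card {T' : Submodule K (Fin n → K) // finrank K T' = t ∧ S ≤ T'}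
          * (Fintype.card K ^ (k - t) - 1) := by
      apply card_rel_fst
        (p := fun T' : Submodule K (Fin n → K) => finrank K T' = t ∧ S ≤ T')
        (s := fun I : Submodule K (Fin n → K) =>
          (finrank K I = t + 1 ∧ ∃ B ∈ 𝓑, I ≤ B) ∧ S ≤ I)
        (r := fun T' I => T' ≤ I)
      intro T'
      have e : {I : Submodule K (Fin n → K) //
            ((finrank K I = t + 1 ∧ ∃ B ∈ 𝓑, I ≤ B) ∧ S ≤ I) ∧ T'.1 ≤ I}
          ≃ {I : Submodule K (Fin n → K) //
            (finrank K I = t + 1 ∧ ∃ B ∈ 𝓑, I ≤ B) ∧ T'.1 ≤ I} := by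
        apply Equiv.subtypeEquivRight
        intro I
        constructor
        · rintro ⟨⟨h1, -⟩, h2⟩; exact ⟨h1, h2⟩
        · rintro ⟨h1, h2⟩; exact ⟨⟨h1, T'.2.2.trans h2⟩, h2⟩
      rw [Nat.card_congr e]
      exact sb_bad_count h𝓑 T'.2.1
    have hP2snd : Nat.card {x : Submodule K (Fin n → K) × Submodule K (Fin n → K) //
          (finrank K x.1 = t ∧ S ≤ x.1) ∧
            ((finrank K x.2 = t + 1 ∧ ∃ B ∈ 𝓑, x.2 ≤ B) ∧ S ≤ x.2) ∧ x.1 ≤ x.2}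
          * (Fintype.card K - 1)
        = Nat.card {I : Submodule K (Fin n → K) //
            (finrank K I = t + 1 ∧ ∃ B ∈ 𝓑, I ≤ B) ∧ S ≤ I}
          * (Fintype.card K ^ 2 - 1) := by
      apply card_rel_snd
        (p := fun T' : Submodule K (Fin n → K) => finrank K T' = t ∧ S ≤ T')
        (s := fun I : Submodule K (Fin n → K) =>
          (finrank K I = t + 1 ∧ ∃ B ∈ 𝓑, I ≤ B) ∧ S ≤ I)
        (r := fun T' I => T' ≤ I)
      intro I
      have e : {T' : Submodule K (Fin n → K) //
            (finrank K T' = t ∧ S ≤ T') ∧ T' ≤ I.1}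
          ≃ {T' : Submodule K (Fin n → K) //
            S ≤ T' ∧ T' ≤ I.1 ∧ finrank K T' = finrank K S + 1} := by
        apply Equiv.subtypeEquivRight
        intro T'
        constructor
        · rintro ⟨⟨h1, h2⟩, h3⟩; exact ⟨h2, h3, by omega⟩
        · rintro ⟨h2, h3, h1⟩; exact ⟨⟨by omega, h2⟩, h3⟩
      rw [Nat.card_congr e, card_between_dim S I.1 I.2.2 1, card_lines_mul]
      have hd : finrank K ↥(I.1.map S.mkQ) = 2 := by
        have h1 := finrank_map_mkQ S I.1 I.2.2
        have h2 := I.2.1.1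
        omega
      rw [hd]
    have hD : Nat.card {I : Submodule K (Fin n → K) //
          (finrank K I = t + 1 ∧ ∃ B ∈ 𝓑, I ≤ B) ∧ S ≤ I}
        = bT + Nat.card {I : Submodule K (Fin n → K) //
            (finrank K I = t + 1 ∧ ∃ B ∈ 𝓑, I ≤ B) ∧ T ⊓ I = S} := by
      rw [card_partition' (fun I : Submodule K (Fin n → K) =>
          (finrank K I = t + 1 ∧ ∃ B ∈ 𝓑, I ≤ B) ∧ S ≤ I) (fun I => T ≤ I)]
      congr 1
      · rw [hbT]
        apply Nat.card_congr
        apply Equiv.subtypeEquivRight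
        intro I
        constructor
        · rintro ⟨⟨h1, -⟩, h2⟩; exact ⟨h1, h2⟩
        · rintro ⟨h1, h2⟩; exact ⟨⟨h1, hST.trans h2⟩, h2⟩
      · apply Nat.card_congr
        apply Equiv.subtypeEquivRight
        intro I
        constructor
        · rintro ⟨⟨hP, hSI⟩, hnTI⟩
          refine ⟨hP, ?_⟩
          have hle : S ≤ T ⊓ I := le_inf hST hSI
          have h1 : finrank K ↥(T ⊓ I) ≤ t := hT ▸ Submodule.finrank_mono inf_le_left
          have h2 : finrank K ↥(T ⊓ I) ≠ t := by
            intro heq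
            exact hnTI (inf_eq_left.1 (Submodule.eq_of_le_of_finrank_le inf_le_left
              (le_of_eq (hT.trans heq.symm))))
          exact (Submodule.eq_of_le_of_finrank_le hle (by omega)).symm
        · rintro ⟨hP, hTIS⟩
          refine ⟨⟨hP, hTIS ▸ inf_le_right⟩, ?_⟩
          intro hTI
          have h3 : S = T := by rw [← hTIS, inf_eq_left.2 hTI]
          have h4 : finrank K S = finrank K ↥T := by rw [h3]
          omega
    have hDval : Nat.card {I : Submodule K (Fin n → K) //
          (finrank K I = t + 1 ∧ ∃ B ∈ 𝓑, I ≤ B) ∧ S ≤ I} * m2 = tot := by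
      rw [hm2, htot]
      calc Nat.card {I : Submodule K (Fin n → K) //
            (finrank K I = t + 1 ∧ ∃ B ∈ 𝓑, I ≤ B) ∧ S ≤ I}
            * ((Fintype.card K ^ 2 - 1) * (Fintype.card K - 1))
          = Nat.card {I : Submodule K (Fin n → K) //
              (finrank K I = t + 1 ∧ ∃ B ∈ 𝓑, I ≤ B) ∧ S ≤ I}
            * (Fintype.card K ^ 2 - 1) * (Fintype.card K - 1) := by ring
        _ = Nat.card {x : Submodule K (Fin n → K) × Submodule K (Fin n → K) //
              (finrank K x.1 = t ∧ S ≤ x.1) ∧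
                ((finrank K x.2 = t + 1 ∧ ∃ B ∈ 𝓑, x.2 ≤ B) ∧ S ≤ x.2) ∧ x.1 ≤ x.2}
            * (Fintype.card K - 1) * (Fintype.card K - 1) := by rw [← hP2snd]
        _ = Nat.card {T' : Submodule K (Fin n → K) // finrank K T' = t ∧ S ≤ T'}
            * (Fintype.card K ^ (k - t) - 1) * (Fintype.card K - 1) := by rw [hP2fst]
        _ = Nat.card {T' : Submodule K (Fin n → K) // finrank K T' = t ∧ S ≤ T'}
            * (Fintype.card K - 1) * (Fintype.card K ^ (k - t) - 1) := by ring
        _ = (Fintype.card K ^ (n - t + 1) - 1) * (Fintype.card K ^ (k - t) - 1) := by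
            rw [hgS]
    calc Nat.card {I : Submodule K (Fin n → K) //
          (finrank K I = t + 1 ∧ ∃ B ∈ 𝓑, I ≤ B) ∧ T ⊓ I = S} * m2 + bT * m2
        = (bT + Nat.card {I : Submodule K (Fin n → K) //
            (finrank K I = t + 1 ∧ ∃ B ∈ 𝓑, I ≤ B) ∧ T ⊓ I = S}) * m2 := by ring
      _ = Nat.card {I : Submodule K (Fin n → K) //
            (finrank K I = t + 1 ∧ ∃ B ∈ 𝓑, I ≤ B) ∧ S ≤ I} * m2 := by rw [← hD]
      _ = tot := hDval
  -- nonemptiness of the (t-1)-subspace family and the bound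
  have hSSne : Nonempty {S : Submodule K (Fin n → K) // S ≤ T ∧ finrank K S + 1 = t} := by
    have hpow : 1 < Fintype.card K ^ t := Nat.one_lt_pow (by omega) hq2
    have hne0 : Nat.card {S : Submodule K (Fin n → K) //
        S ≤ T ∧ finrank K S + 1 = t} ≠ 0 := by
      intro h0
      rw [hhtS, h0, zero_mul] at e5e
      omega
    exact (Nat.card_ne_zero.1 hne0).1
  obtain ⟨S₀⟩ := hSSne
  have hble : bT * m2 ≤ tot := by
    have h := perS S₀
    exact Nat.le.intro ((Nat.add_comm _ _).trans h)
  have e4 : X * m2 + htS * (bT * m2) = htS * tot := by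
    have hfib : ∀ S : {S : Submodule K (Fin n → K) // S ≤ T ∧ finrank K S + 1 = t},
        Nat.card {I : {I : Submodule K (Fin n → K) //
            (((finrank K I = t + 1 ∧ ∃ B ∈ 𝓑, I ≤ B) ∧ ¬ T ≤ I) ∧
              finrank K ↥(T ⊓ I) + 1 = t)} //
          (⟨T ⊓ I.1, inf_le_left, I.2.2⟩ :
            {S : Submodule K (Fin n → K) // S ≤ T ∧ finrank K S + 1 = t}) = S} * m2
        = tot - bT * m2 := by
      intro S
      have e : {I : {I : Submodule K (Fin n → K) //
            (((finrank K I = t + 1 ∧ ∃ B ∈ 𝓑, I ≤ B) ∧ ¬ T ≤ I) ∧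
              finrank K ↥(T ⊓ I) + 1 = t)} //
          (⟨T ⊓ I.1, inf_le_left, I.2.2⟩ :
            {S : Submodule K (Fin n → K) // S ≤ T ∧ finrank K S + 1 = t}) = S}
          ≃ {J : Submodule K (Fin n → K) //
            (finrank K J = t + 1 ∧ ∃ B ∈ 𝓑, J ≤ B) ∧ T ⊓ J = S.1} := by
        refine ⟨fun I => ⟨I.1.1, I.1.2.1.1, congrArg Subtype.val I.2⟩,
          fun J => ⟨⟨J.1, ⟨⟨J.2.1, ?_⟩, ?_⟩⟩, Subtype.ext J.2.2⟩, ?_, ?_⟩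
        · intro h
          have h3 : S.1 = T := by rw [← J.2.2, inf_eq_left.2 h]
          have h4 : finrank K S.1 = finrank K ↥T := by rw [h3]
          have h5 := S.2.2
          omega
        · rw [J.2.2]
          exact S.2.2
        · intro I
          apply Subtype.ext
          apply Subtype.ext
          rfl
        · intro J
          apply Subtype.ext
          rfl
      rw [Nat.card_congr e]
      exact Nat.eq_sub_of_add_eq (perS S)
    have hXf := card_fiber_mul
      (f := fun I : {I : Submodule K (Fin n → K) //
          (((finrank K I = t + 1 ∧ ∃ B ∈ 𝓑, I ≤ B) ∧ ¬ T ≤ I) ∧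
            finrank K ↥(T ⊓ I) + 1 = t)} =>
        (⟨T ⊓ I.1, inf_le_left, I.2.2⟩ :
          {S : Submodule K (Fin n → K) // S ≤ T ∧ finrank K S + 1 = t}))
      m2 (tot - bT * m2) hfib
    rw [← hX, ← hhtS] at hXf
    calc X * m2 + htS * (bT * m2)
        = htS * (tot - bT * m2) + htS * (bT * m2) := by rw [hXf]
      _ = htS * ((tot - bT * m2) + bT * m2) := by rw [Nat.mul_add]
      _ = htS * tot := by rw [Nat.sub_add_cancel hble]
  -- ==================== final assembly over ℤ ====================
  have hNgoal : Nat.card {C : Submodule K (Fin n → K) // C ∈ 𝓒 ∧ T ≤ C} = N := by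
    rw [hN]
    apply Nat.card_congr
    apply Equiv.subtypeEquivRight
    intro C
    have hmem : C ∈ 𝓒 ↔ (finrank K C = t + 2 ∧
        ∀ I, I ≤ C → finrank K I = t + 1 → ¬ ∃ B ∈ 𝓑, I ≤ B) := Iff.rfl
    rw [hmem]
    tauto
  rw [hNgoal]
  rw [hm2, htot] at e4
  have h1q : 1 ≤ Fintype.card K := by omega
  have hpow1 : ∀ m : ℕ, 1 ≤ Fintype.card K ^ m := fun m => Nat.one_le_pow _ _ (by omega)
  have hble' : bT * ((Fintype.card K ^ 2 - 1) * (Fintype.card K - 1))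
      ≤ (Fintype.card K ^ (n - t + 1) - 1) * (Fintype.card K ^ (k - t) - 1) := by
    rw [hm2, htot] at hble
    exact hble
  zify [h1q, hpow1 (n - t), hpow1 (n - t - 1), hpow1 (k - t), hpow1 (k - t - 1),
    hpow1 (t + 2), hpow1 t, hpow1 2, hpow1 (n - t + 1)] at e1 e2 e3 e4 e5a e5b e5d e5e
  have hex1 : (Fintype.card K : ℤ) ^ (n - t)
      = (Fintype.card K : ℤ) ^ (n - t - 1) * (Fintype.card K : ℤ) := by
    rw [← pow_succ]
    congr 1
    omega
  have hex2 : (Fintype.card K : ℤ) ^ (n - t + 1)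
      = (Fintype.card K : ℤ) ^ (n - t - 1) * (Fintype.card K : ℤ) ^ 2 := by
    rw [← pow_add]
    congr 1
    omega
  have hex3 : (Fintype.card K : ℤ) ^ (k - t)
      = (Fintype.card K : ℤ) ^ (k - t - 1) * (Fintype.card K : ℤ) := by
    rw [← pow_succ]
    congr 1
    omega
  have htarg : (Fintype.card K : ℤ) ^ (k - t) * ((Fintype.card K : ℤ) ^ (n - k) - 1)
      = (Fintype.card K : ℤ) ^ (n - t - 1) * (Fintype.card K : ℤ)
        - (Fintype.card K : ℤ) ^ (k - t - 1) * (Fintype.card K : ℤ) := by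
    rw [mul_sub, mul_one, ← pow_add, hex3]
    have hee : k - t + (n - k) = (n - t - 1) + 1 := by omega
    rw [hee, pow_succ]
  rw [hex1] at e5a
  rw [hex3] at e5b
  rw [hex3] at e5d
  rw [hex2, hex3] at e4
  rw [htarg, hex3]
  linear_combination
    (-(((Fintype.card K : ℤ) + 1) * ((Fintype.card K : ℤ) - 1) ^ 3)) * e1
    + ((Fintype.card K : ℤ) - 1) * e5a
    - ((Fintype.card K : ℤ) - 1) * e5b
    + (((Fintype.card K : ℤ) + 1) * ((Fintype.card K : ℤ) - 1) ^ 2) * e2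
    - (((Fintype.card K : ℤ) + 1) * ((Fintype.card K : ℤ) - 1) ^ 2) * e3
    - (((Fintype.card K : ℤ) ^ (n - t - 1) - 1) * ((Fintype.card K : ℤ) + 1)
        * ((Fintype.card K : ℤ) - 1)) * e5d
    - ((Fintype.card K : ℤ) - 1) * e4
    - (((Fintype.card K : ℤ) ^ (n - t - 1) * (Fintype.card K : ℤ) ^ 2 - 1)
        * ((Fintype.card K : ℤ) ^ (k - t - 1) * (Fintype.card K : ℤ) - 1)
        - (bT : ℤ) * ((Fintype.card K : ℤ) - 1) * ((Fintype.card K : ℤ) ^ 2 - 1)) * e5e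
    + (((Fintype.card K : ℤ) ^ t - 1) * ((Fintype.card K : ℤ) ^ 2 - 1)) * e5d
    + ((Fintype.card K : ℤ) ^ 2 * (Fintype.card K : ℤ) ^ t - 1) * e5b
end
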